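/- arXiv:2504.03950 — 8 statements merged into one kernel-verified Lean document; each statement's English description precedes it below -/
import Mathlib

section
/- Let s ≥ 2 be an integer and suppose there are positive constants c, C such that c·m^{2−1/s} ≤ z(m; s) ≤ C·m^{2−1/s} for all sufficiently large m. Then for all sufficiently large N there exists a bipartite graph H with parts of size N that contains no K_{s,s} and has minimum degree δ(H) ≥ (c/8)·(c/(2C))^{1/(s−1)}·N^{1−1/s}. -/
/-- A bipartite graph, given by its adjacency relation between parts `Fin n` and `Fin n`,
contains no `K_{s,s}`. -/
def KssFree {n : ℕ} (s : ℕ) (R : Fin n → Fin n → Prop) : Prop :=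
  ¬ ∃ (S T : Finset (Fin n)), S.card = s ∧ T.card = s ∧ ∀ a ∈ S, ∀ b ∈ T, R a b

/-- The Zarankiewicz number `z(n; s)`: the maximum number of edges in a bipartite graph
with parts of size `n` containing no `K_{s,s}`. -/
noncomputable def zar (n s : ℕ) : ℕ :=
  sSup {e | ∃ R : Fin n → Fin n → Prop, KssFree s R ∧
    e = ({p : Fin n × Fin n | R p.1 p.2}).ncard}

namespace ZarAux

open Finset

variable {N : ℕ}

abbrev Edges (N : ℕ) := Finset (Fin N × Fin N)

def KssFreeF (s : ℕ) (H : Edges N) : Prop := KssFree s (fun a b => (a, b) ∈ H)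

def degL (H : Edges N) (a : Fin N) : ℕ := (H.filter (fun p => p.1 = a)).card
def degR (H : Edges N) (b : Fin N) : ℕ := (H.filter (fun p => p.2 = b)).card

def suppL (H : Edges N) : Finset (Fin N) := Finset.univ.filter (fun a => 0 < degL H a)
def suppR (H : Edges N) : Finset (Fin N) := Finset.univ.filter (fun b => 0 < degR H b)

lemma mem_suppL {H : Edges N} {a : Fin N} : a ∈ suppL H ↔ 0 < degL H a := by
  simp [suppL]

lemma mem_suppR {H : Edges N} {b : Fin N} : b ∈ suppR H ↔ 0 < degR H b := by
  simp [suppR]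

lemma card_eq_sum_degL (H : Edges N) : H.card = ∑ a, degL H a :=
  card_eq_sum_card_fiberwise (fun x _ => mem_univ x.1)

lemma degL_mono {H G : Edges N} (h : H ⊆ G) (a : Fin N) : degL H a ≤ degL G a :=
  card_le_card (filter_subset_filter _ h)

lemma degR_mono {H G : Edges N} (h : H ⊆ G) (b : Fin N) : degR H b ≤ degR G b :=
  card_le_card (filter_subset_filter _ h)

lemma suppL_card_le (H : Edges N) : (suppL H).card ≤ N := by
  simpa [suppL] using card_filter_le (Finset.univ : Finset (Fin N)) _

lemma suppR_card_le (H : Edges N) : (suppR H).card ≤ N := by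
  simpa [suppR] using card_filter_le (Finset.univ : Finset (Fin N)) _

lemma not_mem_of_degL_eq_zero {H : Edges N} {x : Fin N} (hx : degL H x = 0)
    {p : Fin N × Fin N} (hp : p ∈ H) : p.1 ≠ x := by
  intro h
  have : p ∈ H.filter (fun p => p.1 = x) := mem_filter.2 ⟨hp, h⟩
  have h2 := card_pos.2 ⟨p, this⟩
  unfold degL at hx
  omega

def nbrL (H : Edges N) (a : Fin N) : Finset (Fin N) :=
  (H.filter (fun p => p.1 = a)).image Prod.snd

lemma mem_nbrL {H : Edges N} {a b : Fin N} : b ∈ nbrL H a ↔ (a, b) ∈ H := by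
  simp only [nbrL, mem_image, mem_filter]
  constructor
  · rintro ⟨⟨u, v⟩, ⟨hu, rfl⟩, rfl⟩; exact hu
  · intro h; exact ⟨(a, b), ⟨h, rfl⟩, rfl⟩

lemma card_nbrL (H : Edges N) (a : Fin N) : (nbrL H a).card = degL H a := by
  apply card_image_of_injOn
  rintro ⟨u₁, v₁⟩ h₁ ⟨u₂, v₂⟩ h₂ h
  simp only [mem_coe, mem_filter] at h₁ h₂
  simp only [Prod.mk.injEq]
  exact ⟨h₁.2.trans h₂.2.symm, h⟩

lemma KssFreeF_subset {s : ℕ} {H G : Edges N} (hG : KssFreeF s G) (h : H ⊆ G) :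
    KssFreeF s H := by
  rintro ⟨S, T, hS, hT, hall⟩
  exact hG ⟨S, T, hS, hT, fun a ha b hb => h (hall a ha b hb)⟩

lemma ncard_setOf_L (H : Edges N) (a : Fin N) :
    ({b | (a, b) ∈ H} : Set (Fin N)).ncard = degL H a := by
  have : ({b | (a, b) ∈ H} : Set (Fin N)) = ↑(nbrL H a) := by
    ext b; simp [mem_nbrL]
  rw [this, Set.ncard_coe_finset, card_nbrL]

lemma ncard_setOf_R (H : Edges N) (b : Fin N) :
    ({a | (a, b) ∈ H} : Set (Fin N)).ncard = degR H b := by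
  classical
  have : ({a | (a, b) ∈ H} : Set (Fin N)) =
      ↑((H.filter (fun p => p.2 = b)).image Prod.fst) := by
    ext a
    simp only [Set.mem_setOf_eq, coe_image, Set.mem_image, mem_coe, mem_filter]
    constructor
    · intro h; exact ⟨(a, b), ⟨h, rfl⟩, rfl⟩
    · rintro ⟨⟨u, v⟩, ⟨hu, rfl⟩, rfl⟩; exact hu
  rw [this, Set.ncard_coe_finset]
  apply card_image_of_injOn
  rintro ⟨u₁, v₁⟩ h₁ ⟨u₂, v₂⟩ h₂ h
  simp only [mem_coe, mem_filter] at h₁ h₂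
  simp only [Prod.mk.injEq]
  exact ⟨h, h₁.2.trans h₂.2.symm⟩


section Split

variable {s : ℕ} {H : Edges N} {h x : Fin N} {P : Finset (Fin N)}

/-- The splitting map: edges at `h` with second coordinate in `P` are moved to `x`. -/
def splitMap (h x : Fin N) (P : Finset (Fin N)) (p : Fin N × Fin N) : Fin N × Fin N :=
  if p.1 = h ∧ p.2 ∈ P then (x, p.2) else p

lemma splitMap_snd (p : Fin N × Fin N) : (splitMap h x P p).2 = p.2 := by
  unfold splitMap; split_ifs <;> rfl

lemma splitMap_injOn (hx : degL H x = 0) (hxh : x ≠ h) :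
    Set.InjOn (splitMap h x P) ↑H := by
  rintro p hp q hq hpq
  simp only [mem_coe] at hp hq
  unfold splitMap at hpq
  split_ifs at hpq with h1 h2 h2
  · exact Prod.ext (h1.1.trans h2.1.symm) (Prod.ext_iff.1 hpq).2
  · exfalso; exact not_mem_of_degL_eq_zero hx hq (by rw [← hpq])
  · exfalso; exact not_mem_of_degL_eq_zero hx hp (by rw [hpq])
  · exact hpq

/-- Membership characterization of the split graph. -/
lemma mem_split (hx : degL H x = 0) (hxh : x ≠ h) (hP : ∀ b ∈ P, (h, b) ∈ H)
    {q : Fin N × Fin N} :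
    q ∈ H.image (splitMap h x P) ↔
      (q ∈ H ∧ ¬(q.1 = h ∧ q.2 ∈ P)) ∨ (q.1 = x ∧ q.2 ∈ P) := by
  constructor
  · intro hq
    rcases mem_image.1 hq with ⟨p, hp, rfl⟩
    unfold splitMap
    split_ifs with h1
    · right; exact ⟨rfl, h1.2⟩
    · left; exact ⟨hp, h1⟩
  · rintro (⟨hq, hq2⟩ | ⟨h1, h2⟩)
    · refine mem_image.2 ⟨q, hq, ?_⟩
      unfold splitMap; rw [if_neg hq2]
    · refine mem_image.2 ⟨(h, q.2), hP _ h2, ?_⟩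
      unfold splitMap
      rw [if_pos ⟨rfl, h2⟩]
      exact Prod.ext h1.symm rfl

lemma split_card (hx : degL H x = 0) (hxh : x ≠ h) :
    (H.image (splitMap h x P)).card = H.card :=
  card_image_of_injOn (splitMap_injOn hx hxh)

lemma split_degR (hx : degL H x = 0) (hxh : x ≠ h) (b : Fin N) :
    degR (H.image (splitMap h x P)) b = degR H b := by
  unfold degR
  have : (H.image (splitMap h x P)).filter (fun p => p.2 = b) =
      (H.filter (fun p => p.2 = b)).image (splitMap h x P) := by
    ext q
    simp only [mem_filter, mem_image]
    constructor
    · rintro ⟨⟨p, hp, rfl⟩, hb⟩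
      exact ⟨p, ⟨hp, by rwa [splitMap_snd] at hb⟩, rfl⟩
    · rintro ⟨p, ⟨hp, hb⟩, rfl⟩
      exact ⟨⟨p, hp, rfl⟩, by rwa [splitMap_snd]⟩
  rw [this]
  exact card_image_of_injOn ((splitMap_injOn hx hxh).mono (Finset.coe_subset.mpr (filter_subset _ _)))

lemma split_degL_x (hx : degL H x = 0) (hxh : x ≠ h) (hP : ∀ b ∈ P, (h, b) ∈ H) :
    degL (H.image (splitMap h x P)) x = P.card := by
  unfold degL
  have : (H.image (splitMap h x P)).filter (fun p => p.1 = x) =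
      P.image (fun b => (x, b)) := by
    ext ⟨u, v⟩
    simp only [mem_filter, mem_split hx hxh hP, mem_image, Prod.mk.injEq]
    constructor
    · rintro ⟨(⟨hq, _⟩ | ⟨h1, h2⟩), h3⟩
      · exact absurd h3 (not_mem_of_degL_eq_zero hx hq)
      · exact ⟨v, h2, h3.symm, rfl⟩
    · rintro ⟨b, hb, rfl, rfl⟩
      exact ⟨Or.inr ⟨rfl, hb⟩, rfl⟩
  rw [this, card_image_of_injective]
  intro a b hab
  exact (Prod.mk.injEq _ _ _ _ ▸ hab).2

lemma split_degL_h (hx : degL H x = 0) (hxh : x ≠ h) (hP : ∀ b ∈ P, (h, b) ∈ H) :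
    degL (H.image (splitMap h x P)) h + P.card = degL H h := by
  unfold degL
  have e1 : (H.image (splitMap h x P)).filter (fun p => p.1 = h) =
      (H.filter (fun p => p.1 = h)).filter (fun p => ¬ p.2 ∈ P) := by
    ext ⟨u, v⟩
    simp only [mem_filter, mem_split hx hxh hP]
    constructor
    · rintro ⟨(⟨hq, h2⟩ | ⟨h1, h2⟩), h3⟩
      · exact ⟨⟨hq, h3⟩, fun hv => h2 ⟨h3, hv⟩⟩
      · exact absurd (h1.symm.trans h3) hxh
    · rintro ⟨⟨hq, h1⟩, h2⟩
      exact ⟨Or.inl ⟨hq, fun hc => h2 hc.2⟩, h1⟩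
  have e2 : (H.filter (fun p => p.1 = h)).filter (fun p => p.2 ∈ P) =
      P.image (fun b => (h, b)) := by
    ext ⟨u, v⟩
    simp only [mem_filter, mem_image, Prod.mk.injEq]
    constructor
    · rintro ⟨⟨hq, h1⟩, h2⟩
      exact ⟨v, h2, h1.symm, rfl⟩
    · rintro ⟨b, hb, rfl, rfl⟩
      exact ⟨⟨hP _ hb, rfl⟩, hb⟩
  have e3 : P.card = ((H.filter (fun p => p.1 = h)).filter (fun p => p.2 ∈ P)).card := by
    rw [e2, card_image_of_injective]
    intro a b hab
    exact (Prod.mk.injEq _ _ _ _ ▸ hab).2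
  rw [e1, e3, add_comm]
  exact card_filter_add_card_filter_not _

lemma split_degL_other (hx : degL H x = 0) (hxh : x ≠ h) (hP : ∀ b ∈ P, (h, b) ∈ H)
    {a : Fin N} (hax : a ≠ x) (hah : a ≠ h) :
    degL (H.image (splitMap h x P)) a = degL H a := by
  unfold degL
  congr 1
  ext ⟨u, v⟩
  simp only [mem_filter, mem_split hx hxh hP]
  constructor
  · rintro ⟨(⟨hq, _⟩ | ⟨h1, _⟩), h3⟩
    · exact ⟨hq, h3⟩
    · exact absurd (h1.symm.trans h3) hax.symm
  · rintro ⟨hq, h1⟩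
    exact ⟨Or.inl ⟨hq, fun hc => hah (h1.symm.trans hc.1)⟩, h1⟩

lemma split_free (hs : 1 ≤ s) (hfree : KssFreeF s H)
    (hx : degL H x = 0) (hxh : x ≠ h) (hP : ∀ b ∈ P, (h, b) ∈ H) :
    KssFreeF s (H.image (splitMap h x P)) := by
  rintro ⟨S, T, hS, hT, hall⟩
  have hTne : T.Nonempty := card_pos.1 (hT ▸ hs)
  -- not both x and h in S
  have hnotboth : ¬(x ∈ S ∧ h ∈ S) := by
    rintro ⟨hxS, hhS⟩
    obtain ⟨b, hb⟩ := hTne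
    have h1 := (mem_split hx hxh hP).1 (hall x hxS b hb)
    have h2 := (mem_split hx hxh hP).1 (hall h hhS b hb)
    rcases h1 with ⟨hq, _⟩ | ⟨_, hbP⟩
    · exact not_mem_of_degL_eq_zero hx hq rfl
    · rcases h2 with ⟨_, hq2⟩ | ⟨hxeq, _⟩
      · exact hq2 ⟨rfl, hbP⟩
      · exact hxh hxeq.symm
  set φ : Fin N → Fin N := fun a => if a = x then h else a with hφ
  have hinj : Set.InjOn φ ↑S := by
    rintro a ha a' ha' haa'
    simp only [mem_coe] at ha ha'
    simp only [hφ] at haa'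
    split_ifs at haa' with k1 k2 k2
    · exact k1.trans k2.symm
    · exact absurd ⟨k1 ▸ ha, haa' ▸ ha'⟩ hnotboth
    · exact absurd ⟨k2 ▸ ha', haa'.symm ▸ ha⟩ hnotboth
    · exact haa'
  apply hfree
  refine ⟨S.image φ, T, by rw [card_image_of_injOn hinj, hS], hT, ?_⟩
  rintro a' ha' b hb
  rcases mem_image.1 ha' with ⟨a, ha, rfl⟩
  have hmem := (mem_split hx hxh hP).1 (hall a ha b hb)
  simp only [hφ]
  split_ifs with k1
  · subst k1
    rcases hmem with ⟨hq, _⟩ | ⟨_, hbP⟩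
    · exact absurd rfl (not_mem_of_degL_eq_zero hx hq)
    · exact hP _ hbP
  · rcases hmem with ⟨hq, _⟩ | ⟨hxeq, _⟩
    · exact hq
    · exact absurd hxeq k1

end Split


section Clean

lemma degL_filterL (G : Edges N) (a a' : Fin N) :
    degL (G.filter (fun p => ¬ p.1 = a)) a' = if a' = a then 0 else degL G a' := by
  unfold degL
  split_ifs with h
  · subst h
    rw [card_eq_zero]
    ext p
    simp only [mem_filter, notMem_empty, iff_false]
    rintro ⟨⟨_, h1⟩, h2⟩
    exact h1 h2
  · congr 1
    ext p
    simp only [mem_filter]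
    constructor
    · rintro ⟨⟨hp, _⟩, h2⟩; exact ⟨hp, h2⟩
    · rintro ⟨hp, h2⟩; exact ⟨⟨hp, fun hc => h (h2.symm.trans hc ▸ rfl)⟩, h2⟩

lemma degR_filterR (G : Edges N) (b b' : Fin N) :
    degR (G.filter (fun p => ¬ p.2 = b)) b' = if b' = b then 0 else degR G b' := by
  unfold degR
  split_ifs with h
  · subst h
    rw [card_eq_zero]
    ext p
    simp only [mem_filter, notMem_empty, iff_false]
    rintro ⟨⟨_, h1⟩, h2⟩
    exact h1 h2
  · congr 1
    ext p
    simp only [mem_filter]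
    constructor
    · rintro ⟨⟨hp, _⟩, h2⟩; exact ⟨hp, h2⟩
    · rintro ⟨hp, h2⟩; exact ⟨⟨hp, fun hc => h (h2.symm.trans hc ▸ rfl)⟩, h2⟩

lemma clean_aux (θ : ℕ) : ∀ (μ : ℕ) (G : Edges N),
    (suppL G).card + (suppR G).card ≤ μ →
    ∃ H, H ⊆ G ∧
      (∀ a, 0 < degL H a → θ ≤ degL H a) ∧
      (∀ b, 0 < degR H b → θ ≤ degR H b) ∧
      G.card + θ * ((suppL H).card + (suppR H).card) ≤
        H.card + θ * ((suppL G).card + (suppR G).card) := by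
  intro μ
  induction μ with
  | zero =>
    intro G hμ
    refine ⟨G, Finset.Subset.refl _, ?_, ?_, le_refl _⟩
    · intro a ha
      exfalso
      have hmem : a ∈ suppL G := mem_suppL.2 ha
      have h0 : (suppL G).card = 0 := by omega
      rw [card_eq_zero] at h0
      simp [h0] at hmem
    · intro b hb
      exfalso
      have hmem : b ∈ suppR G := mem_suppR.2 hb
      have h0 : (suppR G).card = 0 := by omega
      rw [card_eq_zero] at h0
      simp [h0] at hmem
  | succ μ ih =>
    intro G hμ
    by_cases hL : ∀ a, 0 < degL G a → θ ≤ degL G a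
    · by_cases hR : ∀ b, 0 < degR G b → θ ≤ degR G b
      · exact ⟨G, Finset.Subset.refl _, hL, hR, le_refl _⟩
      · -- bad vertex on the right
        push_neg at hR
        obtain ⟨b, hb1, hb2⟩ := hR
        set G' := G.filter (fun p => ¬ p.2 = b) with hG'
        have hsub : G' ⊆ G := filter_subset _ _
        have hdeg : ∀ b', degR G' b' = if b' = b then 0 else degR G b' := degR_filterR G b
        have hsR : suppR G' = (suppR G).erase b := by
          ext b'
          rw [mem_erase, mem_suppR, mem_suppR, hdeg]
          split_ifs with h
          · simp [h]
          · simp [h]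
        have hbS : b ∈ suppR G := mem_suppR.2 hb1
        have hcard : (suppR G').card + 1 = (suppR G).card := by
          rw [hsR, card_erase_of_mem hbS]
          have := card_pos.2 ⟨b, hbS⟩
          omega
        have hsL : suppL G' ⊆ suppL G := by
          intro a ha
          rw [mem_suppL] at ha ⊢
          exact lt_of_lt_of_le ha (degL_mono hsub a)
        have hGcard : G.card = G'.card + degR G b := by
          unfold degR
          rw [hG']
          have := card_filter_add_card_filter_not (s := G) (p := fun p => p.2 = b)
          omega
        have hμ' : (suppL G').card + (suppR G').card ≤ μ := by
          have := card_le_card hsL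
          omega
        obtain ⟨H, hH1, hH2, hH3, hH4⟩ := ih G' hμ'
        refine ⟨H, hH1.trans hsub, hH2, hH3, ?_⟩
        have key : θ * ((suppL G').card + (suppR G').card) + θ ≤
            θ * ((suppL G).card + (suppR G).card) := by
          have h1 : (suppL G').card + (suppR G').card + 1 ≤
              (suppL G).card + (suppR G).card := by
            have := card_le_card hsL
            omega
          calc θ * ((suppL G').card + (suppR G').card) + θ
              = θ * ((suppL G').card + (suppR G').card + 1) := by ring
            _ ≤ θ * ((suppL G).card + (suppR G).card) := Nat.mul_le_mul_left θ h1
        have hdb : degR G b ≤ θ := le_of_lt hb2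
        omega
    · -- bad vertex on the left
      push_neg at hL
      obtain ⟨a, ha1, ha2⟩ := hL
      set G' := G.filter (fun p => ¬ p.1 = a) with hG'
      have hsub : G' ⊆ G := filter_subset _ _
      have hdeg : ∀ a', degL G' a' = if a' = a then 0 else degL G a' := degL_filterL G a
      have hsL : suppL G' = (suppL G).erase a := by
        ext a'
        rw [mem_erase, mem_suppL, mem_suppL, hdeg]
        split_ifs with h
        · simp [h]
        · simp [h]
      have haS : a ∈ suppL G := mem_suppL.2 ha1
      have hcard : (suppL G').card + 1 = (suppL G).card := by
        rw [hsL, card_erase_of_mem haS]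
        have := card_pos.2 ⟨a, haS⟩
        omega
      have hsR : suppR G' ⊆ suppR G := by
        intro b hb
        rw [mem_suppR] at hb ⊢
        exact lt_of_lt_of_le hb (degR_mono hsub b)
      have hGcard : G.card = G'.card + degL G a := by
        unfold degL
        rw [hG']
        have := card_filter_add_card_filter_not (s := G) (p := fun p => p.1 = a)
        omega
      have hμ' : (suppL G').card + (suppR G').card ≤ μ := by
        have := card_le_card hsR
        omega
      obtain ⟨H, hH1, hH2, hH3, hH4⟩ := ih G' hμ'
      refine ⟨H, hH1.trans hsub, hH2, hH3, ?_⟩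
      have key : θ * ((suppL G').card + (suppR G').card) + θ ≤
          θ * ((suppL G).card + (suppR G).card) := by
        have h1 : (suppL G').card + (suppR G').card + 1 ≤
            (suppL G).card + (suppR G).card := by
          have := card_le_card hsR
          omega
        calc θ * ((suppL G').card + (suppR G').card) + θ
            = θ * ((suppL G').card + (suppR G').card + 1) := by ring
          _ ≤ θ * ((suppL G).card + (suppR G).card) := Nat.mul_le_mul_left θ h1
      have hda : degL G a ≤ θ := le_of_lt ha2
      omega

lemma clean (θ : ℕ) (G : Edges N) :
    ∃ H, H ⊆ G ∧
      (∀ a, 0 < degL H a → θ ≤ degL H a) ∧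
      (∀ b, 0 < degR H b → θ ≤ degR H b) ∧
      G.card ≤ H.card + θ * (2 * N) := by
  obtain ⟨H, h1, h2, h3, h4⟩ := clean_aux θ ((suppL G).card + (suppR G).card) G (le_refl _)
  refine ⟨H, h1, h2, h3, ?_⟩
  have hb : (suppL G).card + (suppR G).card ≤ 2 * N := by
    have := suppL_card_le G
    have := suppR_card_le G
    omega
  have := Nat.mul_le_mul_left θ hb
  omega

end Clean


section Pass

lemma pass (s t : ℕ) (hs : 1 ≤ s) (ht : 1 ≤ t) :
    ∀ (k : ℕ) (H : Edges N), KssFreeF s H →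
      (∀ a, 0 < degL H a → t ≤ degL H a) →
      2 * t * N ≤ H.card →
      N ≤ (suppL H).card + k →
      ∃ H', KssFreeF s H' ∧ H'.card = H.card ∧
        (∀ a, t ≤ degL H' a) ∧ (∀ b, degR H' b = degR H b) := by
  intro k
  induction k with
  | zero =>
    intro H hfree hmin hcard hk
    refine ⟨H, hfree, rfl, ?_, fun b => rfl⟩
    have hnn : (suppL H).card = N := le_antisymm (suppL_card_le H) (by omega)
    have huniv : suppL H = Finset.univ := by
      apply Finset.eq_univ_of_card
      rw [hnn, Fintype.card_fin]
    intro a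
    have : a ∈ suppL H := huniv ▸ mem_univ a
    exact hmin a (mem_suppL.1 this)
  | succ k ih =>
    intro H hfree hmin hcard hk
    by_cases hfull : N ≤ (suppL H).card
    · refine ⟨H, hfree, rfl, ?_, fun b => rfl⟩
      have hc : (suppL H).card = N := le_antisymm (suppL_card_le H) hfull
      have huniv : suppL H = Finset.univ := by
        apply Finset.eq_univ_of_card
        rw [hc, Fintype.card_fin]
      intro a
      have : a ∈ suppL H := huniv ▸ mem_univ a
      exact hmin a (mem_suppL.1 this)
    · push_neg at hfull
      -- pigeonhole: some vertex has degree ≥ 2t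
      have hN1 : 1 ≤ N := by omega
      obtain ⟨a, hadeg⟩ : ∃ a, 2 * t ≤ degL H a := by
        by_contra hcon
        push_neg at hcon
        have hsum : H.card ≤ N * (2 * t - 1) := by
          rw [card_eq_sum_degL]
          calc ∑ a, degL H a ≤ ∑ _a : Fin N, (2 * t - 1) :=
                Finset.sum_le_sum (fun a _ => by have := hcon a; omega)
            _ = N * (2 * t - 1) := by
                rw [Finset.sum_const, card_univ, Fintype.card_fin, smul_eq_mul]
        have he : N * (2 * t - 1) + N = 2 * t * N := by
          have h2 : (2 * t - 1) + 1 = 2 * t := by omega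
          calc N * (2 * t - 1) + N = N * ((2 * t - 1) + 1) := by ring
            _ = N * (2 * t) := by rw [h2]
            _ = 2 * t * N := by ring
        omega
      -- fresh vertex x
      obtain ⟨x, hxdeg⟩ : ∃ x, degL H x = 0 := by
        by_contra hcon
        push_neg at hcon
        have : suppL H = Finset.univ :=
          Finset.eq_univ_of_forall (fun x => mem_suppL.2 (Nat.pos_of_ne_zero (hcon x)))
        rw [this, card_univ, Fintype.card_fin] at hfull
        omega
      have hxa : x ≠ a := by
        intro hxa
        rw [hxa] at hxdeg
        omega
      -- subset of neighbors of size t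
      have hP0 : t ≤ (nbrL H a).card := by
        rw [card_nbrL]
        omega
      obtain ⟨P, hPsub, hPcard⟩ := Finset.exists_subset_card_eq (s := nbrL H a) (n := t) hP0
      have hP : ∀ b ∈ P, (a, b) ∈ H := fun b hb => mem_nbrL.1 (hPsub hb)
      set H₂ := H.image (splitMap a x P) with hH₂
      have hfree₂ : KssFreeF s H₂ := split_free hs hfree hxdeg hxa hP
      have hcard₂ : H₂.card = H.card := split_card hxdeg hxa
      have hdegx : degL H₂ x = t := by rw [split_degL_x hxdeg hxa hP, hPcard]
      have hdega : degL H₂ a + t = degL H a := by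
        rw [← hPcard]; exact split_degL_h hxdeg hxa hP
      have hdego : ∀ a', a' ≠ x → a' ≠ a → degL H₂ a' = degL H a' :=
        fun a' h1 h2 => split_degL_other hxdeg hxa hP h1 h2
      have hdegR₂ : ∀ b, degR H₂ b = degR H b := fun b => split_degR hxdeg hxa b
      have hmin₂ : ∀ a', 0 < degL H₂ a' → t ≤ degL H₂ a' := by
        intro a' h0
        by_cases h1 : a' = x
        · rw [h1, hdegx]
        · by_cases h2 : a' = a
          · rw [h2]; omega
          · rw [hdego a' h1 h2] at h0 ⊢
            exact hmin a' h0
      have hsupp₂ : insert x (suppL H) ⊆ suppL H₂ := by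
        intro a' ha'
        rcases Finset.mem_insert.1 ha' with rfl | ha'
        · rw [mem_suppL, hdegx]; omega
        · rw [mem_suppL] at ha' ⊢
          by_cases h1 : a' = x
          · rw [h1, hdegx]; omega
          · by_cases h2 : a' = a
            · rw [h2]; omega
            · rw [hdego a' h1 h2]; exact ha'
      have hxnot : x ∉ suppL H := by rw [mem_suppL]; omega
      have hsc : (suppL H).card + 1 ≤ (suppL H₂).card := by
        have := card_le_card hsupp₂
        rw [card_insert_of_notMem hxnot] at this
        omega
      obtain ⟨H', h1, h2, h3, h4⟩ := ih H₂ hfree₂ hmin₂ (by omega) (by omega)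
      exact ⟨H', h1, by omega, h3, fun b => (h4 b).trans (hdegR₂ b)⟩

end Pass

section Swap

def eswap (H : Edges N) : Edges N := H.image Prod.swap

lemma mem_eswap {H : Edges N} {p : Fin N × Fin N} : p ∈ eswap H ↔ p.swap ∈ H := by
  unfold eswap
  constructor
  · intro hp
    rcases mem_image.1 hp with ⟨q, hq, rfl⟩
    simpa using hq
  · intro hp
    exact mem_image.2 ⟨p.swap, hp, Prod.swap_swap p⟩

lemma eswap_card (H : Edges N) : (eswap H).card = H.card :=
  card_image_of_injective _ Prod.swap_injective

lemma degL_eswap (H : Edges N) (b : Fin N) : degL (eswap H) b = degR H b := by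
  unfold degL degR
  have : (eswap H).filter (fun p => p.1 = b) =
      (H.filter (fun p => p.2 = b)).image Prod.swap := by
    ext ⟨u, v⟩
    simp only [mem_filter, mem_image, mem_eswap]
    constructor
    · rintro ⟨hp, rfl⟩
      exact ⟨(v, u), ⟨hp, rfl⟩, rfl⟩
    · rintro ⟨⟨p1, p2⟩, ⟨hp, hb⟩, hq⟩
      simp only [Prod.swap_prod_mk, Prod.mk.injEq] at hq
      obtain ⟨rfl, rfl⟩ := hq
      exact ⟨hp, hb⟩
  rw [this, card_image_of_injective _ Prod.swap_injective]

lemma degR_eswap (H : Edges N) (a : Fin N) : degR (eswap H) a = degL H a := by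
  unfold degL degR
  have : (eswap H).filter (fun p => p.2 = a) =
      (H.filter (fun p => p.1 = a)).image Prod.swap := by
    ext ⟨u, v⟩
    simp only [mem_filter, mem_image, mem_eswap]
    constructor
    · rintro ⟨hp, rfl⟩
      exact ⟨(v, u), ⟨hp, rfl⟩, rfl⟩
    · rintro ⟨⟨p1, p2⟩, ⟨hp, hb⟩, hq⟩
      simp only [Prod.swap_prod_mk, Prod.mk.injEq] at hq
      obtain ⟨rfl, rfl⟩ := hq
      exact ⟨hp, hb⟩
  rw [this, card_image_of_injective _ Prod.swap_injective]

lemma KssFreeF_eswap {s : ℕ} {H : Edges N} (h : KssFreeF s H) : KssFreeF s (eswap H) := by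
  rintro ⟨S, T, hS, hT, hall⟩
  apply h
  refine ⟨T, S, hT, hS, fun a ha b hb => ?_⟩
  have h2 : ((b, a) : Fin N × Fin N) ∈ eswap H := hall b hb a ha
  rw [mem_eswap] at h2
  exact h2

end Swap


lemma zar_attained (N s : ℕ) (hs : 1 ≤ s) :
    ∃ G : Edges N, KssFreeF s G ∧ G.card = zar N s := by
  classical
  set Z : Set ℕ := {e | ∃ R : Fin N → Fin N → Prop, KssFree s R ∧
    e = ({p : Fin N × Fin N | R p.1 p.2}).ncard} with hZ
  have hne : Z.Nonempty := by
    refine ⟨_, ⟨fun _ _ => False, ?_, rfl⟩⟩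
    rintro ⟨S, T, hS, hT, hall⟩
    obtain ⟨a, ha⟩ := card_pos.1 (hS ▸ hs)
    obtain ⟨b, hb⟩ := card_pos.1 (hT ▸ hs)
    exact hall a ha b hb
  have hbdd : BddAbove Z := by
    refine ⟨N * N, ?_⟩
    rintro e ⟨R, _, rfl⟩
    have h1 := Set.ncard_le_ncard (Set.subset_univ {p : Fin N × Fin N | R p.1 p.2})
      Set.finite_univ
    have h2 : (Set.univ : Set (Fin N × Fin N)).ncard = N * N := by
      rw [Set.ncard_univ, Nat.card_eq_fintype_card, Fintype.card_prod, Fintype.card_fin]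
    omega
  have hmem : zar N s ∈ Z := Nat.sSup_mem hne hbdd
  obtain ⟨R, hR, he⟩ := hmem
  have hfin : ({p : Fin N × Fin N | R p.1 p.2}).Finite := Set.toFinite _
  refine ⟨hfin.toFinset, ?_, ?_⟩
  · rintro ⟨S, T, hS, hT, hall⟩
    refine hR ⟨S, T, hS, hT, fun a ha b hb => ?_⟩
    have h2 : (a, b) ∈ hfin.toFinset := hall a ha b hb
    rwa [Set.Finite.mem_toFinset] at h2
  · rw [← Set.ncard_eq_toFinset_card _ hfin, he]

lemma combinatorial (s t N : ℕ) (hs : 1 ≤ s) (ht : 1 ≤ t)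
    (hbig : 6 * t * N ≤ zar N s) :
    ∃ H : Fin N → Fin N → Prop, KssFree s H ∧
      (∀ a : Fin N, t ≤ ({b | H a b} : Set (Fin N)).ncard) ∧
      (∀ b : Fin N, t ≤ ({a | H a b} : Set (Fin N)).ncard) := by
  obtain ⟨G, hGfree, hGcard⟩ := zar_attained N s hs
  obtain ⟨H₁, hsub, hminL, hminR, hloss⟩ := clean (N := N) (2 * t) G
  have hfree₁ : KssFreeF s H₁ := KssFreeF_subset hGfree hsub
  have hcard₁ : 2 * t * N ≤ H₁.card := by
    have h1 : 6 * t * N ≤ G.card := hGcard ▸ hbig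
    have h2 : G.card ≤ H₁.card + 2 * t * (2 * N) := hloss
    have e1 : 2 * t * (2 * N) = 4 * (t * N) := by ring
    have e2 : 6 * t * N = 6 * (t * N) := by ring
    have e3 : 2 * t * N = 2 * (t * N) := by ring
    rw [e1] at h2
    rw [e2] at h1
    rw [e3]
    omega
  obtain ⟨H₂, hfree₂, hcard₂, hdegL₂, hdegR₂⟩ :=
    pass s t hs ht N H₁ hfree₁
      (fun a h0 => le_trans (by omega) (hminL a h0))
      hcard₁ (by omega)
  obtain ⟨W', hfreeW, hcardW, hdegLW, hdegRW⟩ :=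
    pass s t hs ht N (eswap H₂) (KssFreeF_eswap hfree₂)
      (by
        intro b h0
        rw [degL_eswap] at h0 ⊢
        rw [hdegR₂] at h0 ⊢
        exact le_trans (by omega) (hminR b h0))
      (by rw [eswap_card]; omega)
      (by omega)
  set Hf := eswap W' with hHf
  have hfinL : ∀ a, t ≤ degL Hf a := by
    intro a
    rw [hHf, degL_eswap]
    have h5 := hdegRW a
    rw [degR_eswap] at h5
    rw [h5]
    exact hdegL₂ a
  have hfinR : ∀ b, t ≤ degR Hf b := by
    intro b
    rw [hHf, degR_eswap]
    exact hdegLW b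
  refine ⟨fun a b => (a, b) ∈ Hf, KssFreeF_eswap hfreeW, ?_, ?_⟩
  · intro a
    rw [ncard_setOf_L]
    exact hfinL a
  · intro b
    rw [ncard_setOf_R]
    exact hfinR b

end ZarAux

open ZarAux in
theorem stmt3 (s : ℕ) (hs : 2 ≤ s) (c C : ℝ) (hc : 0 < c) (hC : 0 < C)
    (hz : ∃ m₀ : ℕ, ∀ m : ℕ, m₀ ≤ m →
      c * (m : ℝ) ^ ((2 : ℝ) - 1 / (s : ℝ)) ≤ (zar m s : ℝ) ∧
      (zar m s : ℝ) ≤ C * (m : ℝ) ^ ((2 : ℝ) - 1 / (s : ℝ))) :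
    ∃ N₀ : ℕ, ∀ N : ℕ, N₀ ≤ N →
      ∃ H : Fin N → Fin N → Prop, KssFree s H ∧
        (∀ a : Fin N,
          c / 8 * (c / (2 * C)) ^ ((1 : ℝ) / ((s : ℝ) - 1)) * (N : ℝ) ^ ((1 : ℝ) - 1 / (s : ℝ))
            ≤ (({b | H a b} : Set (Fin N)).ncard : ℝ)) ∧
        (∀ b : Fin N,
          c / 8 * (c / (2 * C)) ^ ((1 : ℝ) / ((s : ℝ) - 1)) * (N : ℝ) ^ ((1 : ℝ) - 1 / (s : ℝ))
            ≤ (({a | H a b} : Set (Fin N)).ncard : ℝ)) := by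
  classical
  obtain ⟨m₀, hz⟩ := hz
  have hsR : (2:ℝ) ≤ (s:ℝ) := by exact_mod_cast hs
  set δ : ℝ := c / 8 * (c / (2 * C)) ^ ((1 : ℝ) / ((s : ℝ) - 1)) with hδdef
  -- c ≤ C
  have hcC : c ≤ C := by
    have hm := hz (max m₀ 1) (le_max_left _ _)
    have hx : (0:ℝ) < ((max m₀ 1 : ℕ):ℝ) ^ ((2:ℝ) - 1/(s:ℝ)) := by
      apply Real.rpow_pos_of_pos
      have h1 : (1:ℕ) ≤ max m₀ 1 := le_max_right _ _
      exact_mod_cast lt_of_lt_of_le zero_lt_one (by exact_mod_cast h1)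
    exact le_of_mul_le_mul_right (hm.1.trans hm.2) hx
  have hρ1 : c / (2 * C) ≤ 1 := by
    rw [div_le_one (by linarith)]
    linarith
  have hρ0 : (0:ℝ) < c / (2 * C) := by positivity
  have hexp0 : 0 ≤ (1:ℝ) / ((s:ℝ) - 1) := by
    apply div_nonneg zero_le_one
    linarith
  have hδc : δ ≤ c / 8 := by
    rw [hδdef]
    nth_rewrite 2 [← mul_one (c/8)]
    exact mul_le_mul_of_nonneg_left (Real.rpow_le_one (le_of_lt hρ0) hρ1 hexp0) (by linarith)
  have hδ0 : 0 < δ := by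
    rw [hδdef]
    positivity
  refine ⟨max (max m₀ 1) (⌈(24 / c) ^ 2⌉₊ + 1), ?_⟩
  intro N hN
  have hNm₀ : m₀ ≤ N := le_trans (le_trans (le_max_left _ _) (le_max_left _ _)) hN
  have hN1 : 1 ≤ N := le_trans (le_trans (le_max_right _ _) (le_max_left _ _)) hN
  have hN1R : (1:ℝ) ≤ (N:ℝ) := by exact_mod_cast hN1
  have hN0R : (0:ℝ) < (N:ℝ) := by linarith
  have hNc : (24 / c) ^ 2 ≤ (N:ℝ) := by
    have h1 : ⌈(24 / c) ^ 2⌉₊ ≤ N := by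
      have := le_trans (le_max_right (max m₀ 1) _) hN
      omega
    calc (24 / c) ^ 2 ≤ (⌈(24 / c) ^ 2⌉₊ : ℝ) := Nat.le_ceil _
      _ ≤ (N:ℝ) := by exact_mod_cast h1
  set Np : ℝ := (N : ℝ) ^ ((1 : ℝ) - 1 / (s : ℝ)) with hNpdef
  have hNp0 : 0 < Np := Real.rpow_pos_of_pos hN0R _
  set t : ℕ := ⌈δ * Np⌉₊ with htdef
  have ht1 : 1 ≤ t := by
    rw [htdef]
    have : (0:ℝ) < δ * Np := by positivity
    exact Nat.ceil_pos.2 this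
  -- 24 / c ≤ Np
  have hkey0 : 24 / c ≤ Np := by
    have ha0 : (0:ℝ) ≤ 24 / c := by positivity
    have h1 : ((24/c)^2 : ℝ) ^ ((1:ℝ)/2) ≤ (N:ℝ) ^ ((1:ℝ)/2) :=
      Real.rpow_le_rpow (by positivity) hNc (by norm_num)
    have h2 : ((24/c)^2 : ℝ) ^ ((1:ℝ)/2) = 24/c := by
      rw [← Real.rpow_natCast (24/c) 2, ← Real.rpow_mul ha0]
      norm_num
    have h3 : (N:ℝ) ^ ((1:ℝ)/2) ≤ Np := by
      rw [hNpdef]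
      apply Real.rpow_le_rpow_of_exponent_le hN1R
      have h4 : 1 / (s:ℝ) ≤ 1/2 := by
        apply one_div_le_one_div_of_le
        · norm_num
        · exact hsR
      linarith
    rw [h2] at h1
    linarith
  -- N^{2-1/s} = Np * N
  have hNsplit : Np * (N:ℝ) = (N:ℝ) ^ ((2:ℝ) - 1/(s:ℝ)) := by
    rw [hNpdef]
    calc (N:ℝ) ^ ((1:ℝ) - 1/(s:ℝ)) * (N:ℝ)
        = (N:ℝ) ^ ((1:ℝ) - 1/(s:ℝ)) * (N:ℝ) ^ (1:ℝ) := by rw [Real.rpow_one]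
      _ = (N:ℝ) ^ (((1:ℝ) - 1/(s:ℝ)) + 1) := (Real.rpow_add hN0R _ _).symm
      _ = (N:ℝ) ^ ((2:ℝ) - 1/(s:ℝ)) := by
          rw [show (1:ℝ) - 1/(s:ℝ) + 1 = 2 - 1/(s:ℝ) from by ring]
  -- the key cardinality bound
  have htub : (t:ℝ) ≤ δ * Np + 1 := by
    rw [htdef]
    exact le_of_lt (Nat.ceil_lt_add_one (by positivity))
  have hreal : ((6 * t * N : ℕ) : ℝ) ≤ (zar N s : ℝ) := by
    push_cast
    have hz1 := (hz N hNm₀).1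
    have hb1 : 6 * (t:ℝ) * N ≤ (6 * δ * (Np * N)) + 6 * N := by
      nlinarith [htub, hN0R]
    have hb3 : 6 * δ * (Np * (N:ℝ)) ≤ (3*c/4) * (Np * N) := by
      apply mul_le_mul_of_nonneg_right _ (by positivity)
      linarith
    have hb4 : 6 * (N:ℝ) ≤ (c/4) * (Np * N) := by
      have h5 : 24 * (N:ℝ) ≤ c * (Np * N) := by
        have h6 : (24/c) * (N:ℝ) ≤ Np * N :=
          mul_le_mul_of_nonneg_right hkey0 (le_of_lt hN0R)
        calc 24 * (N:ℝ) = c * ((24/c) * N) := by field_simp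
          _ ≤ c * (Np * N) := mul_le_mul_of_nonneg_left h6 (le_of_lt hc)
      linarith
    calc 6 * (t:ℝ) * N ≤ (6 * δ * (Np * N)) + 6 * N := hb1
      _ ≤ (3*c/4) * (Np * N) + (c/4) * (Np * N) := by linarith
      _ = c * (Np * N) := by ring
      _ = c * (N:ℝ) ^ ((2:ℝ) - 1/(s:ℝ)) := by rw [hNsplit]
      _ ≤ (zar N s : ℝ) := hz1
  have hbig : 6 * t * N ≤ zar N s := by exact_mod_cast hreal
  obtain ⟨H, hH, hL, hR⟩ := combinatorial s t N (le_trans one_le_two hs) ht1 hbig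
  refine ⟨H, hH, ?_, ?_⟩
  · intro a
    calc δ * Np ≤ (t:ℝ) := Nat.le_ceil _
      _ ≤ (({b | H a b} : Set (Fin N)).ncard : ℝ) := by exact_mod_cast hL a
  · intro b
    calc δ * Np ≤ (t:ℝ) := Nat.le_ceil _
      _ ≤ (({a | H a b} : Set (Fin N)).ncard : ℝ) := by exact_mod_cast hR b
end

section
/- Let G be a simple graph, let s ≥ 1 and r ≥ 2 be integers, and let D ≥ 0 be a real number. Let A_1, B_1, …, A_{r−1}, B_{r−1} be pairwise disjoint vertex subsets of G such that for every i ∈ [r−1], every vertex of A_i ∪ B_i has at most D neighbors in ⋃_{j≠i}(A_j ∪ B_j). Suppose A'_i ⊆ A_i and B'_i ⊆ B_i satisfy min{|A'_i|, |B'_i|} ≥ 2(i−1)sD + s for every i ∈ [r−1]. Then there exist s-element subsets A''_i ⊆ A'_i and B''_i ⊆ B'_i for i ∈ [r−1] such that for all i ≠ j in [r−1] there is no edge of G between A''_i ∪ B''_i and A''_j ∪ B''_j. -/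
theorem stmt8 {V : Type*} [DecidableEq V] (G : SimpleGraph V) (s r : ℕ)
    (hs : 1 ≤ s) (hr : 2 ≤ r) (D : ℝ) (hD : 0 ≤ D)
    (A B : Fin (r - 1) → Finset V)
    (hdisj : ∀ i, Disjoint (A i) (B i))
    (hdisj' : ∀ i j, i ≠ j → Disjoint (A i ∪ B i) (A j ∪ B j))
    -- every vertex of A_i ∪ B_i has at most D neighbors in ⋃_{j ≠ i} (A_j ∪ B_j)
    (hdeg : ∀ i, ∀ x ∈ A i ∪ B i,
      ((({y | (∃ j, j ≠ i ∧ y ∈ A j ∪ B j) ∧ G.Adj x y} : Set V).ncard : ℝ) ≤ D))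
    (A' B' : Fin (r - 1) → Finset V)
    (hA' : ∀ i, A' i ⊆ A i) (hB' : ∀ i, B' i ⊆ B i)
    -- min{|A'_i|, |B'_i|} ≥ 2(i-1)sD + s, where index i : Fin (r-1) represents i-1
    (hcard : ∀ i : Fin (r - 1),
      2 * (i : ℕ) * s * D + s ≤ min ((A' i).card : ℝ) ((B' i).card : ℝ)) :
    ∃ A'' B'' : Fin (r - 1) → Finset V,
      (∀ i, A'' i ⊆ A' i) ∧ (∀ i, B'' i ⊆ B' i) ∧
      (∀ i, (A'' i).card = s) ∧ (∀ i, (B'' i).card = s) ∧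
      ∀ i j, i ≠ j → ∀ x ∈ A'' i ∪ B'' i, ∀ y ∈ A'' j ∪ B'' j, ¬ G.Adj x y := by
  classical
  have hfin : ∀ (j : Fin (r-1)) (x : V),
      ({y | (∃ k, k ≠ j ∧ y ∈ A k ∪ B k) ∧ G.Adj x y} : Set V).Finite := by
    intro j x
    apply Set.Finite.subset
      (Set.finite_iUnion (fun k : Fin (r-1) => ((A k ∪ B k : Finset V) : Set V).toFinite))
    rintro y ⟨⟨k, _, hk⟩, _⟩
    exact Set.mem_iUnion.2 ⟨k, by exact_mod_cast hk⟩
  -- key step: pick a fresh s-subset avoiding adjacency to a chosen set C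
  have step : ∀ (i₀ : Fin (r-1)) (C : Finset V) (S' : Finset V),
      S' ⊆ A i₀ ∪ B i₀ →
      (∀ y ∈ C, ∃ j, j ≠ i₀ ∧ y ∈ A j ∪ B j) →
      (2 * ((i₀:ℕ):ℝ) * s * D + s ≤ (S'.card : ℝ)) →
      ((C.card : ℝ) ≤ 2 * ((i₀:ℕ):ℝ) * s) →
      ∃ T ⊆ S', T.card = s ∧ ∀ x ∈ T, ∀ y ∈ C, ¬ G.Adj x y := by
    intro i₀ C S' hS' hC hScard hCcard
    set Bad := S'.filter (fun x => ∃ y ∈ C, G.Adj x y) with hBad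
    have hsub : Bad ⊆ C.biUnion (fun y => S'.filter (fun x => G.Adj x y)) := by
      intro x hx
      simp only [hBad, Finset.mem_filter] at hx
      obtain ⟨hxS, y, hyC, hadj⟩ := hx
      exact Finset.mem_biUnion.2 ⟨y, hyC, Finset.mem_filter.2 ⟨hxS, hadj⟩⟩
    have hone : ∀ y ∈ C, ((S'.filter (fun x => G.Adj x y)).card : ℝ) ≤ D := by
      intro y hyC
      obtain ⟨j, hji, hyAB⟩ := hC y hyC
      have hsub2 : ((S'.filter (fun x => G.Adj x y)) : Set V) ⊆
          {z | (∃ k, k ≠ j ∧ z ∈ A k ∪ B k) ∧ G.Adj y z} := by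
        intro x hx
        simp only [Finset.coe_filter, Set.mem_setOf_eq] at hx
        exact ⟨⟨i₀, fun h => hji h.symm, hS' hx.1⟩, hx.2.symm⟩
      have := Set.ncard_le_ncard hsub2 (hfin j y)
      rw [Set.ncard_coe_finset] at this
      calc ((S'.filter (fun x => G.Adj x y)).card : ℝ)
          ≤ (({z | (∃ k, k ≠ j ∧ z ∈ A k ∪ B k) ∧ G.Adj y z} : Set V).ncard : ℝ) := by
            exact_mod_cast this
        _ ≤ D := hdeg j y hyAB
    have hBadcard : (Bad.card : ℝ) ≤ (C.card : ℝ) * D := by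
      calc (Bad.card : ℝ) ≤ ((C.biUnion (fun y => S'.filter (fun x => G.Adj x y))).card : ℝ) := by
            exact_mod_cast Finset.card_le_card hsub
        _ ≤ ((∑ y ∈ C, (S'.filter (fun x => G.Adj x y)).card : ℕ) : ℝ) := by
            exact_mod_cast Finset.card_biUnion_le
        _ = ∑ y ∈ C, ((S'.filter (fun x => G.Adj x y)).card : ℝ) := by push_cast; ring
        _ ≤ ∑ _y ∈ C, D := Finset.sum_le_sum hone
        _ = (C.card : ℝ) * D := by rw [Finset.sum_const, nsmul_eq_mul]
    have hBadS : Bad ⊆ S' := Finset.filter_subset _ _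
    have hdiff : (s : ℝ) ≤ ((S' \ Bad).card : ℝ) := by
      have h1 : ((S' \ Bad).card : ℝ) = (S'.card : ℝ) - (Bad.card : ℝ) := by
        have := Finset.card_sdiff_add_card_eq_card hBadS
        have : ((S' \ Bad).card : ℕ) + Bad.card = S'.card := this
        push_cast [← this]; ring
      rw [h1]
      have h2 : (Bad.card : ℝ) ≤ 2 * ((i₀:ℕ):ℝ) * s * D := by
        calc (Bad.card : ℝ) ≤ (C.card : ℝ) * D := hBadcard
          _ ≤ (2 * ((i₀:ℕ):ℝ) * s) * D := by
              exact mul_le_mul_of_nonneg_right hCcard hD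
          _ = 2 * ((i₀:ℕ):ℝ) * s * D := by ring
      linarith
    have hdiffn : s ≤ (S' \ Bad).card := by exact_mod_cast hdiff
    obtain ⟨T, hTsub, hTcard⟩ := Finset.exists_subset_card_eq hdiffn
    refine ⟨T, hTsub.trans (Finset.sdiff_subset), hTcard, ?_⟩
    intro x hxT y hyC hadj
    have hx := hTsub hxT
    rw [Finset.mem_sdiff] at hx
    exact hx.2 (Finset.mem_filter.2 ⟨hx.1, y, hyC, hadj⟩)
  -- main induction
  have main : ∀ n : ℕ, ∃ A'' B'' : Fin (r - 1) → Finset V,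
      (∀ i, A'' i ⊆ A' i) ∧ (∀ i, B'' i ⊆ B' i) ∧
      (∀ i : Fin (r-1), (i:ℕ) < n → (A'' i).card = s ∧ (B'' i).card = s) ∧
      (∀ i : Fin (r-1), n ≤ (i:ℕ) → A'' i = ∅ ∧ B'' i = ∅) ∧
      (∀ i j, i ≠ j → ∀ x ∈ A'' i ∪ B'' i, ∀ y ∈ A'' j ∪ B'' j, ¬ G.Adj x y) := by
    intro n
    induction n with
    | zero =>
      refine ⟨fun _ => ∅, fun _ => ∅, ?_, ?_, ?_, ?_, ?_⟩ <;> simp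
    | succ n ih =>
      obtain ⟨A'', B'', hsubA, hsubB, hcards, hempty, hedge⟩ := ih
      by_cases hn : n < r - 1
      · set i₀ : Fin (r-1) := ⟨n, hn⟩ with hi₀
        set C : Finset V := Finset.univ.biUnion (fun j => A'' j ∪ B'' j) with hCdef
        have hCmem : ∀ y ∈ C, ∃ j, j ≠ i₀ ∧ y ∈ A j ∪ B j := by
          intro y hy
          obtain ⟨j, _, hj⟩ := Finset.mem_biUnion.1 hy
          have hjne : j ≠ i₀ := by
            intro h
            obtain ⟨hA0, hB0⟩ := hempty i₀ (le_refl n)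
            rw [h, hA0, hB0] at hj
            simpa using hj
          refine ⟨j, hjne, ?_⟩
          rcases Finset.mem_union.1 hj with h | h
          · exact Finset.mem_union_left _ (hA' j (hsubA j h))
          · exact Finset.mem_union_right _ (hB' j (hsubB j h))
        have hCcard : (C.card : ℝ) ≤ 2 * ((i₀:ℕ):ℝ) * s := by
          have h1 : C.card ≤ ∑ j : Fin (r-1), (A'' j ∪ B'' j).card :=
            Finset.card_biUnion_le
          have h2 : ∑ j : Fin (r-1), (A'' j ∪ B'' j).card ≤ 2 * s * n := by
            have hsplit : ∑ j : Fin (r-1), (A'' j ∪ B'' j).card =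
                ∑ j ∈ Finset.univ.filter (fun j : Fin (r-1) => (j:ℕ) < n),
                  (A'' j ∪ B'' j).card := by
              symm
              apply Finset.sum_subset (Finset.filter_subset _ _)
              intro j _ hj
              simp only [Finset.mem_filter, Finset.mem_univ, true_and, not_lt] at hj
              obtain ⟨hA0, hB0⟩ := hempty j hj
              rw [hA0, hB0]; simp
            rw [hsplit]
            calc ∑ j ∈ Finset.univ.filter (fun j : Fin (r-1) => (j:ℕ) < n),
                  (A'' j ∪ B'' j).card
                ≤ ∑ _j ∈ Finset.univ.filter (fun j : Fin (r-1) => (j:ℕ) < n), 2 * s := by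
                  apply Finset.sum_le_sum
                  intro j hj
                  simp only [Finset.mem_filter, Finset.mem_univ, true_and] at hj
                  obtain ⟨hA1, hB1⟩ := hcards j hj
                  calc (A'' j ∪ B'' j).card ≤ (A'' j).card + (B'' j).card :=
                        Finset.card_union_le _ _
                    _ = 2 * s := by rw [hA1, hB1]; ring
              _ = (Finset.univ.filter (fun j : Fin (r-1) => (j:ℕ) < n)).card * (2 * s) := by
                  rw [Finset.sum_const, smul_eq_mul]
              _ ≤ n * (2 * s) := by
                  apply Nat.mul_le_mul_right
                  have hle : (Finset.univ.filter (fun j : Fin (r-1) => (j:ℕ) < n)).card ≤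
                      (Finset.range n).card :=
                    Finset.card_le_card_of_injOn (fun j => (j:ℕ))
                      (by intro j hj
                          simp only [Finset.mem_coe, Finset.mem_filter, Finset.mem_univ, true_and] at hj
                          exact Finset.mem_range.2 hj)
                      (fun a _ b _ hab => Fin.ext hab)
                  simpa using hle
              _ = 2 * s * n := by ring
          have : (C.card : ℝ) ≤ ((2 * s * n : ℕ) : ℝ) := by
            exact_mod_cast h1.trans h2
          calc (C.card : ℝ) ≤ ((2 * s * n : ℕ) : ℝ) := this
            _ = 2 * ((i₀:ℕ):ℝ) * s := by
                have : ((i₀:ℕ):ℝ) = (n : ℝ) := by norm_num [hi₀]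
                rw [this]; push_cast; ring
        have hcard0 := hcard i₀
        rw [le_min_iff] at hcard0
        obtain ⟨TA, hTAsub, hTAcard, hTAfree⟩ := step i₀ C (A' i₀)
          (fun x hx => Finset.mem_union_left _ (hA' i₀ hx)) hCmem hcard0.1 hCcard
        obtain ⟨TB, hTBsub, hTBcard, hTBfree⟩ := step i₀ C (B' i₀)
          (fun x hx => Finset.mem_union_right _ (hB' i₀ hx)) hCmem hcard0.2 hCcard
        refine ⟨Function.update A'' i₀ TA, Function.update B'' i₀ TB, ?_, ?_, ?_, ?_, ?_⟩
        · intro i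
          rcases eq_or_ne i i₀ with h | h
          · subst h; rw [Function.update_self]; exact hTAsub
          · rw [Function.update_of_ne h]; exact hsubA i
        · intro i
          rcases eq_or_ne i i₀ with h | h
          · subst h; rw [Function.update_self]; exact hTBsub
          · rw [Function.update_of_ne h]; exact hsubB i
        · intro i hi
          rcases eq_or_ne i i₀ with h | h
          · subst h; rw [Function.update_self, Function.update_self]
            exact ⟨hTAcard, hTBcard⟩
          · have hin : (i:ℕ) < n := by
              rcases Nat.lt_succ_iff_lt_or_eq.1 hi with h' | h'
              · exact h'
              · exact absurd (Fin.ext h' : i = i₀) h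
            rw [Function.update_of_ne h, Function.update_of_ne h]
            exact hcards i hin
        · intro i hi
          have h : i ≠ i₀ := by
            refine Fin.ne_of_val_ne ?_
            show (i:ℕ) ≠ n
            omega
          rw [Function.update_of_ne h, Function.update_of_ne h]
          exact hempty i (by omega)
        · intro i j hij x hx y hy hadj
          have hCof : ∀ k, k ≠ i₀ → A'' k ∪ B'' k ⊆ C := by
            intro k _ z hz
            exact Finset.mem_biUnion.2 ⟨k, Finset.mem_univ k, hz⟩
          rcases eq_or_ne i i₀ with hi | hi
          · have hj : j ≠ i₀ := fun h => hij (hi.trans h.symm)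
            rw [hi] at hx
            simp only [Function.update_self] at hx
            rw [Function.update_of_ne hj, Function.update_of_ne hj] at hy
            have hyC : y ∈ C := hCof j hj hy
            rcases Finset.mem_union.1 hx with h | h
            · exact hTAfree x h y hyC hadj
            · exact hTBfree x h y hyC hadj
          · rw [Function.update_of_ne hi, Function.update_of_ne hi] at hx
            rcases eq_or_ne j i₀ with hj | hj
            · rw [hj] at hy
              simp only [Function.update_self] at hy
              have hxC : x ∈ C := hCof i hi hx
              rcases Finset.mem_union.1 hy with h | h
              · exact hTAfree y h x hxC hadj.symm
              · exact hTBfree y h x hxC hadj.symm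
            · rw [Function.update_of_ne hj, Function.update_of_ne hj] at hy
              exact hedge i j hij x hx y hy hadj
      · -- n ≥ r - 1: nothing to do
        refine ⟨A'', B'', hsubA, hsubB, ?_, ?_, hedge⟩
        · intro i _
          exact hcards i (lt_of_lt_of_le i.isLt (not_lt.1 hn))
        · intro i hi
          exact absurd (lt_of_lt_of_le i.isLt (not_lt.1 hn)) (by omega)
  obtain ⟨A'', B'', h1, h2, h3, _, h5⟩ := main (r - 1)
  exact ⟨A'', B'', h1, h2, fun i => (h3 i i.isLt).1, fun i => (h3 i i.isLt).2, h5⟩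
end

section
/- For every even integer r ≥ 2 and every positive integer n divisible by r−1, there exists an r-partite graph G with parts of size n such that G is the vertex-disjoint union of r−1 complete bipartite graphs each with both sides of size rn/(2r−2) (so G is rn/(2r−2)-regular), and G contains no independent transversal. -/
/-- An `r`-partite graph on vertex set `Fin r × Fin n` (part `i` is `{i} × Fin n`):
all parts are independent sets. -/
def IsPartite {r n : ℕ} (G : SimpleGraph (Fin r × Fin n)) : Prop :=
  ∀ (i : Fin r) (x y : Fin n), ¬ G.Adj (i, x) (i, y)

/-- `G` has an independent transversal: one vertex from each part, pairwise nonadjacent. -/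
def HasIT {r n : ℕ} (G : SimpleGraph (Fin r × Fin n)) : Prop :=
  ∃ f : Fin r → Fin n, ∀ i j : Fin r, i ≠ j → ¬ G.Adj (i, f i) (j, f j)

namespace St10


def qh (k p : ℕ) : ℕ := if p < k then p else p - k

def eN (k q u : ℕ) : ℕ :=
  if u < k then (if q + 1 < k then q + 1 else k - 1)
  else if u + q + 1 < 2 * k then q else q - 1

def blkN (k p u : ℕ) : ℕ :=
  if eN k (qh k p) u = 0 then 0 else (if p < k then 0 else k - 1) + eN k (qh k p) u

def labN (k p u : ℕ) : Bool :=
  if eN k (qh k p) u = 0 then decide (p < k) else decide (u < k ∧ qh k p + 1 < k)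

lemma evalx (k p u q s e B : ℕ) (L : Bool)
    (hq : qh k p = q) (hs : (if p < k then (0:ℕ) else k - 1) = s) (he : eN k q u = e)
    (hB : (if e = 0 then 0 else s + e) = B)
    (hL : (if e = 0 then decide (p < k) else decide (u < k ∧ q + 1 < k)) = L) :
    blkN k p u = B ∧ labN k p u = L := by
  unfold blkN labN
  rw [hq, hs, he, hB, hL]
  exact ⟨rfl, rfl⟩

lemma specT (k p u : ℕ) (hk : 1 ≤ k) (hp : p < 2 * k) (hu : u + 1 < 2 * k)
    (hl : labN k p u = true) :
    (p + 1 < k ∧ u < k ∧ blkN k p u = p + 1) ∨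
    (k = 1 ∧ p = 0 ∧ u < k ∧ blkN k p u = 0) ∨
    (p = 0 ∧ k ≤ u ∧ blkN k p u = 0) ∨
    (p = 1 ∧ p < k ∧ 2 * k ≤ u + p + 1 ∧ blkN k p u = 0) ∨
    (k ≤ p ∧ p + 1 < 2 * k ∧ u < k ∧ blkN k p u = p) := by
  rcases Nat.lt_or_ge p k with hpk | hpk
  · rcases Nat.lt_or_ge u k with hseg | hseg
    · rcases Nat.lt_or_ge (p + 1) k with h2 | h2
      · obtain ⟨hb, -⟩ := evalx k p u p 0 (p + 1) (p + 1) true (if_pos hpk) (if_pos hpk)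
          (by unfold eN; rw [if_pos hseg, if_pos h2])
          (by rw [if_neg (by omega)]; omega)
          (by rw [if_neg (by omega)]; exact decide_eq_true (by omega))
        exact Or.inl ⟨h2, hseg, hb⟩
      · by_cases hk1 : k = 1
        · obtain ⟨hb, -⟩ := evalx k p u p 0 (k - 1) 0 true (if_pos hpk) (if_pos hpk)
            (by unfold eN; rw [if_pos hseg, if_neg (by omega)])
            (by rw [if_pos (by omega)])
            (by rw [if_pos (by omega)]; exact decide_eq_true (by omega))
          exact Or.inr (Or.inl ⟨hk1, by omega, hseg, hb⟩)
        · obtain ⟨-, hl2⟩ := evalx k p u p 0 (k - 1) (k - 1) false (if_pos hpk) (if_pos hpk)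
            (by unfold eN; rw [if_pos hseg, if_neg (by omega)])
            (by rw [if_neg (by omega)]; omega)
            (by rw [if_neg (by omega)]; exact decide_eq_false (by omega))
          exact absurd (hl.symm.trans hl2) (by simp)
    · rcases Nat.lt_or_ge (u + p + 1) (2 * k) with h2 | h2
      · by_cases hp0 : p = 0
        · obtain ⟨hb, -⟩ := evalx k p u p 0 p 0 true (if_pos hpk) (if_pos hpk)
            (by unfold eN; rw [if_neg (by omega), if_pos (by omega)])
            (by rw [if_pos (by omega)])
            (by rw [if_pos (by omega)]; exact decide_eq_true (by omega))
          exact Or.inr (Or.inr (Or.inl ⟨hp0, hseg, hb⟩))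
        · obtain ⟨-, hl2⟩ := evalx k p u p 0 p p false (if_pos hpk) (if_pos hpk)
            (by unfold eN; rw [if_neg (by omega), if_pos (by omega)])
            (by rw [if_neg (by omega)]; omega)
            (by rw [if_neg (by omega)]; exact decide_eq_false (by omega))
          exact absurd (hl.symm.trans hl2) (by simp)
      · by_cases hp1 : p = 1
        · obtain ⟨hb, -⟩ := evalx k p u p 0 (p - 1) 0 true (if_pos hpk) (if_pos hpk)
            (by unfold eN; rw [if_neg (by omega), if_neg (by omega)])
            (by rw [if_pos (by omega)])
            (by rw [if_pos (by omega)]; exact decide_eq_true (by omega))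
          exact Or.inr (Or.inr (Or.inr (Or.inl ⟨hp1, hpk, by omega, hb⟩)))
        · obtain ⟨-, hl2⟩ := evalx k p u p 0 (p - 1) (p - 1) false (if_pos hpk) (if_pos hpk)
            (by unfold eN; rw [if_neg (by omega), if_neg (by omega)])
            (by rw [if_neg (by omega)]; omega)
            (by rw [if_neg (by omega)]; exact decide_eq_false (by omega))
          exact absurd (hl.symm.trans hl2) (by simp)
  · rcases Nat.lt_or_ge u k with hseg | hseg
    · rcases Nat.lt_or_ge (p + 1) (2 * k) with h2 | h2
      · obtain ⟨hb, -⟩ := evalx k p u (p - k) (k - 1) (p - k + 1) p true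
          (by unfold qh; rw [if_neg (by omega)]) (if_neg (by omega))
          (by unfold eN; rw [if_pos hseg, if_pos (by omega)])
          (by rw [if_neg (by omega)]; omega)
          (by rw [if_neg (by omega)]; exact decide_eq_true (by omega))
        exact Or.inr (Or.inr (Or.inr (Or.inr ⟨hpk, h2, hseg, hb⟩)))
      · by_cases hk1 : k = 1
        · obtain ⟨-, hl2⟩ := evalx k p u (p - k) (k - 1) (k - 1) 0 false
            (by unfold qh; rw [if_neg (by omega)]) (if_neg (by omega))
            (by unfold eN; rw [if_pos hseg, if_neg (by omega)])
            (by rw [if_pos (by omega)])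
            (by rw [if_pos (by omega)]; exact decide_eq_false (by omega))
          exact absurd (hl.symm.trans hl2) (by simp)
        · obtain ⟨-, hl2⟩ := evalx k p u (p - k) (k - 1) (k - 1) (2 * k - 2) false
            (by unfold qh; rw [if_neg (by omega)]) (if_neg (by omega))
            (by unfold eN; rw [if_pos hseg, if_neg (by omega)])
            (by rw [if_neg (by omega)]; omega)
            (by rw [if_neg (by omega)]; exact decide_eq_false (by omega))
          exact absurd (hl.symm.trans hl2) (by simp)
    · rcases Nat.lt_or_ge (u + p + 1) (3 * k) with h2 | h2
      · by_cases hpk0 : p = k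
        · obtain ⟨-, hl2⟩ := evalx k p u (p - k) (k - 1) (p - k) 0 false
            (by unfold qh; rw [if_neg (by omega)]) (if_neg (by omega))
            (by unfold eN; rw [if_neg (by omega), if_pos (by omega)])
            (by rw [if_pos (by omega)])
            (by rw [if_pos (by omega)]; exact decide_eq_false (by omega))
          exact absurd (hl.symm.trans hl2) (by simp)
        · obtain ⟨-, hl2⟩ := evalx k p u (p - k) (k - 1) (p - k) (p - 1) false
            (by unfold qh; rw [if_neg (by omega)]) (if_neg (by omega))
            (by unfold eN; rw [if_neg (by omega), if_pos (by omega)])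
            (by rw [if_neg (by omega)]; omega)
            (by rw [if_neg (by omega)]; exact decide_eq_false (by omega))
          exact absurd (hl.symm.trans hl2) (by simp)
      · by_cases hpk1 : p = k + 1
        · obtain ⟨-, hl2⟩ := evalx k p u (p - k) (k - 1) (p - k - 1) 0 false
            (by unfold qh; rw [if_neg (by omega)]) (if_neg (by omega))
            (by unfold eN; rw [if_neg (by omega), if_neg (by omega)])
            (by rw [if_pos (by omega)])
            (by rw [if_pos (by omega)]; exact decide_eq_false (by omega))
          exact absurd (hl.symm.trans hl2) (by simp)
        · obtain ⟨-, hl2⟩ := evalx k p u (p - k) (k - 1) (p - k - 1) (p - 2) false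
            (by unfold qh; rw [if_neg (by omega)]) (if_neg (by omega))
            (by unfold eN; rw [if_neg (by omega), if_neg (by omega)])
            (by rw [if_neg (by omega)]; omega)
            (by rw [if_neg (by omega)]; exact decide_eq_false (by omega))
          exact absurd (hl.symm.trans hl2) (by simp)

lemma specF (k p u : ℕ) (hk : 1 ≤ k) (hp : p < 2 * k) (hu : u + 1 < 2 * k)
    (hl : labN k p u = false) :
    (2 ≤ k ∧ p + 1 = k ∧ u < k ∧ blkN k p u + 1 = k) ∨
    (1 ≤ p ∧ p < k ∧ k ≤ u ∧ u + p + 1 < 2 * k ∧ blkN k p u = p) ∨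
    (2 ≤ p ∧ p < k ∧ 2 * k ≤ u + p + 1 ∧ blkN k p u + 1 = p) ∨
    (k = 1 ∧ p = 1 ∧ u < k ∧ blkN k p u = 0) ∨
    (2 ≤ k ∧ p + 1 = 2 * k ∧ u < k ∧ blkN k p u + 2 = 2 * k) ∨
    (p = k ∧ k ≤ u ∧ blkN k p u = 0) ∨
    (p = k + 1 ∧ 2 ≤ k ∧ 3 * k ≤ u + p + 1 ∧ blkN k p u = 0) ∨
    (k + 1 ≤ p ∧ k ≤ u ∧ u + p + 1 < 3 * k ∧ blkN k p u + 1 = p) ∨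
    (k + 2 ≤ p ∧ 3 * k ≤ u + p + 1 ∧ blkN k p u + 2 = p) := by
  rcases Nat.lt_or_ge p k with hpk | hpk
  · rcases Nat.lt_or_ge u k with hseg | hseg
    · rcases Nat.lt_or_ge (p + 1) k with h2 | h2
      · obtain ⟨-, hl2⟩ := evalx k p u p 0 (p + 1) (p + 1) true (if_pos hpk) (if_pos hpk)
          (by unfold eN; rw [if_pos hseg, if_pos h2])
          (by rw [if_neg (by omega)]; omega)
          (by rw [if_neg (by omega)]; exact decide_eq_true (by omega))
        exact absurd (hl.symm.trans hl2) (by simp)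
      · by_cases hk1 : k = 1
        · obtain ⟨-, hl2⟩ := evalx k p u p 0 (k - 1) 0 true (if_pos hpk) (if_pos hpk)
            (by unfold eN; rw [if_pos hseg, if_neg (by omega)])
            (by rw [if_pos (by omega)])
            (by rw [if_pos (by omega)]; exact decide_eq_true (by omega))
          exact absurd (hl.symm.trans hl2) (by simp)
        · obtain ⟨hb, -⟩ := evalx k p u p 0 (k - 1) (k - 1) false (if_pos hpk) (if_pos hpk)
            (by unfold eN; rw [if_pos hseg, if_neg (by omega)])
            (by rw [if_neg (by omega)]; omega)
            (by rw [if_neg (by omega)]; exact decide_eq_false (by omega))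
          exact Or.inl ⟨by omega, by omega, hseg, by omega⟩
    · rcases Nat.lt_or_ge (u + p + 1) (2 * k) with h2 | h2
      · by_cases hp0 : p = 0
        · obtain ⟨-, hl2⟩ := evalx k p u p 0 p 0 true (if_pos hpk) (if_pos hpk)
            (by unfold eN; rw [if_neg (by omega), if_pos (by omega)])
            (by rw [if_pos (by omega)])
            (by rw [if_pos (by omega)]; exact decide_eq_true (by omega))
          exact absurd (hl.symm.trans hl2) (by simp)
        · obtain ⟨hb, -⟩ := evalx k p u p 0 p p false (if_pos hpk) (if_pos hpk)
            (by unfold eN; rw [if_neg (by omega), if_pos (by omega)])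
            (by rw [if_neg (by omega)]; omega)
            (by rw [if_neg (by omega)]; exact decide_eq_false (by omega))
          exact Or.inr (Or.inl ⟨by omega, hpk, hseg, h2, hb⟩)
      · by_cases hp1 : p = 1
        · obtain ⟨-, hl2⟩ := evalx k p u p 0 (p - 1) 0 true (if_pos hpk) (if_pos hpk)
            (by unfold eN; rw [if_neg (by omega), if_neg (by omega)])
            (by rw [if_pos (by omega)])
            (by rw [if_pos (by omega)]; exact decide_eq_true (by omega))
          exact absurd (hl.symm.trans hl2) (by simp)
        · obtain ⟨hb, -⟩ := evalx k p u p 0 (p - 1) (p - 1) false (if_pos hpk) (if_pos hpk)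
            (by unfold eN; rw [if_neg (by omega), if_neg (by omega)])
            (by rw [if_neg (by omega)]; omega)
            (by rw [if_neg (by omega)]; exact decide_eq_false (by omega))
          exact Or.inr (Or.inr (Or.inl ⟨by omega, hpk, h2, by omega⟩))
  · rcases Nat.lt_or_ge u k with hseg | hseg
    · rcases Nat.lt_or_ge (p + 1) (2 * k) with h2 | h2
      · obtain ⟨-, hl2⟩ := evalx k p u (p - k) (k - 1) (p - k + 1) p true
          (by unfold qh; rw [if_neg (by omega)]) (if_neg (by omega))
          (by unfold eN; rw [if_pos hseg, if_pos (by omega)])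
          (by rw [if_neg (by omega)]; omega)
          (by rw [if_neg (by omega)]; exact decide_eq_true (by omega))
        exact absurd (hl.symm.trans hl2) (by simp)
      · by_cases hk1 : k = 1
        · obtain ⟨hb, -⟩ := evalx k p u (p - k) (k - 1) (k - 1) 0 false
            (by unfold qh; rw [if_neg (by omega)]) (if_neg (by omega))
            (by unfold eN; rw [if_pos hseg, if_neg (by omega)])
            (by rw [if_pos (by omega)])
            (by rw [if_pos (by omega)]; exact decide_eq_false (by omega))
          exact Or.inr (Or.inr (Or.inr (Or.inl ⟨hk1, by omega, hseg, hb⟩)))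
        · obtain ⟨hb, -⟩ := evalx k p u (p - k) (k - 1) (k - 1) (2 * k - 2) false
            (by unfold qh; rw [if_neg (by omega)]) (if_neg (by omega))
            (by unfold eN; rw [if_pos hseg, if_neg (by omega)])
            (by rw [if_neg (by omega)]; omega)
            (by rw [if_neg (by omega)]; exact decide_eq_false (by omega))
          exact Or.inr (Or.inr (Or.inr (Or.inr (Or.inl ⟨by omega, by omega, hseg, by omega⟩))))
    · rcases Nat.lt_or_ge (u + p + 1) (3 * k) with h2 | h2
      · by_cases hpk0 : p = k
        · obtain ⟨hb, -⟩ := evalx k p u (p - k) (k - 1) (p - k) 0 false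
            (by unfold qh; rw [if_neg (by omega)]) (if_neg (by omega))
            (by unfold eN; rw [if_neg (by omega), if_pos (by omega)])
            (by rw [if_pos (by omega)])
            (by rw [if_pos (by omega)]; exact decide_eq_false (by omega))
          exact Or.inr (Or.inr (Or.inr (Or.inr (Or.inr (Or.inl ⟨hpk0, hseg, hb⟩)))))
        · obtain ⟨hb, -⟩ := evalx k p u (p - k) (k - 1) (p - k) (p - 1) false
            (by unfold qh; rw [if_neg (by omega)]) (if_neg (by omega))
            (by unfold eN; rw [if_neg (by omega), if_pos (by omega)])
            (by rw [if_neg (by omega)]; omega)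
            (by rw [if_neg (by omega)]; exact decide_eq_false (by omega))
          exact Or.inr (Or.inr (Or.inr (Or.inr (Or.inr (Or.inr (Or.inr (Or.inl
            ⟨by omega, hseg, h2, by omega⟩)))))))
      · by_cases hpk1 : p = k + 1
        · obtain ⟨hb, -⟩ := evalx k p u (p - k) (k - 1) (p - k - 1) 0 false
            (by unfold qh; rw [if_neg (by omega)]) (if_neg (by omega))
            (by unfold eN; rw [if_neg (by omega), if_neg (by omega)])
            (by rw [if_pos (by omega)])
            (by rw [if_pos (by omega)]; exact decide_eq_false (by omega))
          exact Or.inr (Or.inr (Or.inr (Or.inr (Or.inr (Or.inr (Or.inl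
            ⟨hpk1, by omega, by omega, hb⟩))))))
        · obtain ⟨hb, -⟩ := evalx k p u (p - k) (k - 1) (p - k - 1) (p - 2) false
            (by unfold qh; rw [if_neg (by omega)]) (if_neg (by omega))
            (by unfold eN; rw [if_neg (by omega), if_neg (by omega)])
            (by rw [if_neg (by omega)]; omega)
            (by rw [if_neg (by omega)]; exact decide_eq_false (by omega))
          exact Or.inr (Or.inr (Or.inr (Or.inr (Or.inr (Or.inr (Or.inr (Or.inr
            ⟨by omega, h2, by omega⟩)))))))


lemma blkN_lt (k p u : ℕ) (hk : 1 ≤ k) (hp : p < 2 * k) : blkN k p u < 2 * k - 1 := by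
  unfold blkN eN qh
  split_ifs <;> omega

lemma lab_of_blk0 (k p u : ℕ) (h : blkN k p u = 0) : labN k p u = decide (p < k) := by
  unfold blkN at h
  unfold labN
  split_ifs at h ⊢ with h1 <;> first | rfl | omega

lemma same_part (k p u u' : ℕ) (hk : 1 ≤ k) (hp : p < 2 * k)
    (hu : u + 1 < 2 * k) (hu' : u' + 1 < 2 * k)
    (hb : blkN k p u = blkN k p u') : labN k p u = labN k p u' := by
  rcases h1 : labN k p u with _ | _ <;> rcases h2 : labN k p u' with _ | _
  · rfl
  · have m1 := specF k p u hk hp hu h1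
    have m2 := specT k p u' hk hp hu' h2
    omega
  · have m1 := specT k p u hk hp hu h1
    have m2 := specF k p u' hk hp hu' h2
    omega
  · rfl

lemma noIT (k : ℕ) (hk : 1 ≤ k) (u : ℕ → ℕ) (hu : ∀ p, p < 2 * k → u p + 1 < 2 * k)
    (hcf : ∀ p p', p < 2 * k → p' < 2 * k → p ≠ p' →
      blkN k p (u p) = blkN k p' (u p') → labN k p (u p) = labN k p' (u p')) : False := by
  have half : ∀ c s : ℕ, ((c = 0 ∧ s = 0) ∨ (c = k ∧ s = k - 1)) →
      ∃ q, q < k ∧ blkN k (c + q) (u (c + q)) = 0 := by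
    intro c s hcs
    by_contra hno
    push_neg at hno
    have hcb : ∀ q, q < k → c + q < 2 * k := by
      intro q hq; rcases hcs with ⟨h1, _⟩ | ⟨h1, _⟩ <;> omega
    have main : ∀ q, q < k → u (c + q) < k := by
      intro q
      induction q using Nat.strong_induction_on with
      | _ q IH =>
        intro hqk
        by_contra hge
        push_neg at hge
        have hnoq := hno q hqk
        rcases hlq : labN k (c + q) (u (c + q)) with _ | _
        · have hD := specF k (c + q) (u (c + q)) hk (hcb q hqk) (hu _ (hcb q hqk)) hlq
          have hcase : (blkN k (c + q) (u (c + q)) = s + q ∧ 1 ≤ q) ∨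
              (blkN k (c + q) (u (c + q)) = s + (q - 1) ∧ 2 ≤ q) := by omega
          rcases hcase with ⟨hbq, hq1⟩ | ⟨hbq, hq2⟩
          · have hq'k : q - 1 < k := by omega
            have hu' := IH (q - 1) (by omega) hq'k
            have hno' := hno (q - 1) hq'k
            rcases hl' : labN k (c + (q - 1)) (u (c + (q - 1))) with _ | _
            · have hD' := specF k (c + (q - 1)) (u (c + (q - 1))) hk (hcb _ hq'k)
                (hu _ (hcb _ hq'k)) hl'
              omega
            · have hD' := specT k (c + (q - 1)) (u (c + (q - 1))) hk (hcb _ hq'k)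
                (hu _ (hcb _ hq'k)) hl'
              have hblkeq : blkN k (c + (q - 1)) (u (c + (q - 1))) =
                  blkN k (c + q) (u (c + q)) := by omega
              have := hcf _ _ (hcb _ hq'k) (hcb _ hqk) (by omega) hblkeq
              rw [hl', hlq] at this
              exact absurd this (by simp)
          · have hq'k : q - 2 < k := by omega
            have hu' := IH (q - 2) (by omega) hq'k
            have hno' := hno (q - 2) hq'k
            rcases hl' : labN k (c + (q - 2)) (u (c + (q - 2))) with _ | _
            · have hD' := specF k (c + (q - 2)) (u (c + (q - 2))) hk (hcb _ hq'k)
                (hu _ (hcb _ hq'k)) hl'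
              omega
            · have hD' := specT k (c + (q - 2)) (u (c + (q - 2))) hk (hcb _ hq'k)
                (hu _ (hcb _ hq'k)) hl'
              have hblkeq : blkN k (c + (q - 2)) (u (c + (q - 2))) =
                  blkN k (c + q) (u (c + q)) := by omega
              have := hcf _ _ (hcb _ hq'k) (hcb _ hqk) (by omega) hblkeq
              rw [hl', hlq] at this
              exact absurd this (by simp)
        · have hD := specT k (c + q) (u (c + q)) hk (hcb q hqk) (hu _ (hcb q hqk)) hlq
          omega
    by_cases hk1 : k = 1
    · have h0 := main 0 (by omega)
      have hno0 := hno 0 (by omega)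
      rcases hl : labN k (c + 0) (u (c + 0)) with _ | _
      · have hD := specF k (c + 0) (u (c + 0)) hk (hcb 0 (by omega))
          (hu _ (hcb 0 (by omega))) hl
        omega
      · have hD := specT k (c + 0) (u (c + 0)) hk (hcb 0 (by omega))
          (hu _ (hcb 0 (by omega))) hl
        omega
    · have hk2 : 2 ≤ k := by omega
      have ha := main (k - 2) (by omega)
      have hbm := main (k - 1) (by omega)
      have hnoa := hno (k - 2) (by omega)
      have hnob := hno (k - 1) (by omega)
      have hla : labN k (c + (k - 2)) (u (c + (k - 2))) = true := by
        rcases hl : labN k (c + (k - 2)) (u (c + (k - 2))) with _ | _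
        · have hD := specF k (c + (k - 2)) (u (c + (k - 2))) hk (hcb _ (by omega))
            (hu _ (hcb _ (by omega))) hl
          omega
        · rfl
      have hlb : labN k (c + (k - 1)) (u (c + (k - 1))) = false := by
        rcases hl : labN k (c + (k - 1)) (u (c + (k - 1))) with _ | _
        · rfl
        · have hD := specT k (c + (k - 1)) (u (c + (k - 1))) hk (hcb _ (by omega))
            (hu _ (hcb _ (by omega))) hl
          omega
      have hDa := specT k (c + (k - 2)) (u (c + (k - 2))) hk (hcb _ (by omega))
        (hu _ (hcb _ (by omega))) hla
      have hDb := specF k (c + (k - 1)) (u (c + (k - 1))) hk (hcb _ (by omega))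
        (hu _ (hcb _ (by omega))) hlb
      have hblkeq : blkN k (c + (k - 2)) (u (c + (k - 2))) =
          blkN k (c + (k - 1)) (u (c + (k - 1))) := by omega
      have := hcf _ _ (hcb _ (by omega)) (hcb _ (by omega)) (by omega) hblkeq
      rw [hla, hlb] at this
      exact absurd this (by simp)
  obtain ⟨q1, hq1k, hb1⟩ := half 0 0 (Or.inl ⟨rfl, rfl⟩)
  obtain ⟨q2, hq2k, hb2⟩ := half k (k - 1) (Or.inr ⟨rfl, rfl⟩)
  have l1 := lab_of_blk0 k (0 + q1) (u (0 + q1)) hb1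
  have l2 := lab_of_blk0 k (k + q2) (u (k + q2)) hb2
  have := hcf (0 + q1) (k + q2) (by omega) (by omega) (by omega) (hb1.trans hb2.symm)
  rw [l1, l2] at this
  simp only [decide_eq_decide] at this
  omega

def rectC (r n t : ℕ) (p a b : ℕ) : Finset (Fin r × Fin n) :=
  Finset.univ.filter fun v => (v.1 : ℕ) = p ∧ a ≤ (v.2 : ℕ) / t ∧ (v.2 : ℕ) / t < b

lemma card_rectC (r n t : ℕ) (ht : 0 < t) (K : ℕ) (hn : n = K * t) (p a b : ℕ)
    (hb : b ≤ K) (hpr : p < r) : (rectC r n t p a b).card = (b - a) * t := by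
  have hbt : b * t ≤ n := by rw [hn]; exact Nat.mul_le_mul_right t hb
  have hcard : ((Finset.Ico (a * t) (b * t)).card) = (b - a) * t := by
    rw [Nat.card_Ico, Nat.sub_mul]
  rw [← hcard]
  apply Finset.card_bij (i := fun v _ => ((v.2 : ℕ)))
  · intro v hv
    simp only [rectC, Finset.mem_filter, Finset.mem_univ, true_and] at hv
    simp only [Finset.mem_Ico]
    exact ⟨(Nat.le_div_iff_mul_le ht).mp hv.2.1, (Nat.div_lt_iff_lt_mul ht).mp hv.2.2⟩
  · intro v hv w hw hvw
    simp only [rectC, Finset.mem_filter, Finset.mem_univ, true_and] at hv hw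
    have h1 : v.1 = w.1 := Fin.ext (by rw [hv.1, hw.1])
    have h2 : v.2 = w.2 := Fin.ext hvw
    exact Prod.ext h1 h2
  · intro x hx
    simp only [Finset.mem_Ico] at hx
    refine ⟨(⟨p, hpr⟩, ⟨x, lt_of_lt_of_le hx.2 hbt⟩), ?_, rfl⟩
    simp only [rectC, Finset.mem_filter, Finset.mem_univ, true_and]
    exact ⟨(Nat.le_div_iff_mul_le ht).mpr hx.1, (Nat.div_lt_iff_lt_mul ht).mpr hx.2⟩

lemma rect_disj (r n t : ℕ) (p1 a1 b1 p2 a2 b2 : ℕ) (h : p1 ≠ p2 ∨ b2 ≤ a2) :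
    Disjoint (rectC r n t p1 a1 b1) (rectC r n t p2 a2 b2) := by
  rw [Finset.disjoint_left]
  intro v hv1 hv2
  simp only [rectC, Finset.mem_filter, Finset.mem_univ, true_and] at hv1 hv2
  omega

def sideF (r n k t : ℕ) (i : ℕ) (b : Bool) : Finset (Fin r × Fin n) :=
  Finset.univ.filter fun v =>
    blkN k (v.1 : ℕ) ((v.2 : ℕ) / t) = i ∧ labN k (v.1 : ℕ) ((v.2 : ℕ) / t) = b

lemma card_sideF (r n k t : ℕ) (hk : 1 ≤ k) (ht : 0 < t) (hr : r = 2 * k)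
    (hn : n = (2 * k - 1) * t) (i : ℕ) (hi : i < 2 * k - 1) (b : Bool) :
    (sideF r n k t i b).card = k * t := by
  have hcr := card_rectC r n t ht (2 * k - 1) hn
  have hPU : ∀ v : Fin r × Fin n, (v.1 : ℕ) < 2 * k ∧ (v.2 : ℕ) / t + 1 < 2 * k := by
    intro v
    have hp : (v.1 : ℕ) < 2 * k := by have := v.1.isLt; omega
    have hu2 : (v.2 : ℕ) < (2 * k - 1) * t := hn ▸ v.2.isLt
    have hu : (v.2 : ℕ) / t + 1 < 2 * k := by
      have := (Nat.div_lt_iff_lt_mul ht).mpr hu2; omega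
    exact ⟨hp, hu⟩
  cases b
  · -- label false sides
    by_cases hk1 : k = 1
    · have hset : sideF r n k t i false = rectC r n t 1 0 1 := by
        ext v
        obtain ⟨hp, hu⟩ := hPU v
        simp only [sideF, rectC, Finset.mem_filter, Finset.mem_univ, true_and]
        generalize hU : (v.2 : ℕ) / t = U at *
        constructor
        · rintro ⟨h1, h2⟩
          have hD := specF k _ _ hk hp hu h2
          omega
        · intro hr2
          rcases hl : labN k ((v.1 : ℕ)) U with _ | _
          · have hD := specF k _ _ hk hp hu hl
            exact ⟨by omega, rfl⟩
          · have hD := specT k _ _ hk hp hu hl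
            exfalso; omega
      rw [hset, hcr 1 0 1 (by omega) (by omega), hk1]
      try omega
    · rcases Nat.eq_zero_or_pos i with hi0 | hi1
      · have hset : sideF r n k t i false =
            rectC r n t k k (2 * k - 1) ∪ rectC r n t (k + 1) (2 * k - 2) (2 * k - 1) := by
          ext v
          obtain ⟨hp, hu⟩ := hPU v
          simp only [sideF, rectC, Finset.mem_filter, Finset.mem_univ, true_and,
            Finset.mem_union]
          generalize hU : (v.2 : ℕ) / t = U at *
          constructor
          · rintro ⟨h1, h2⟩
            have hD := specF k _ _ hk hp hu h2
            omega
          · intro hr2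
            rcases hl : labN k ((v.1 : ℕ)) U with _ | _
            · have hD := specF k _ _ hk hp hu hl
              exact ⟨by omega, rfl⟩
            · have hD := specT k _ _ hk hp hu hl
              exfalso; omega
        rw [hset, Finset.card_union_of_disjoint (rect_disj _ _ _ _ _ _ _ _ _ (by omega)),
          hcr k k (2 * k - 1) (by omega) (by omega),
          hcr (k + 1) (2 * k - 2) (2 * k - 1) (by omega) (by omega), ← Nat.add_mul]
        congr 1 <;> omega
      · rcases Nat.lt_or_ge i k with hik | hik
        · by_cases hiK : i = k - 1
          · have hset : sideF r n k t i false = rectC r n t (k - 1) 0 k := by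
              ext v
              obtain ⟨hp, hu⟩ := hPU v
              simp only [sideF, rectC, Finset.mem_filter, Finset.mem_univ, true_and]
              generalize hU : (v.2 : ℕ) / t = U at *
              constructor
              · rintro ⟨h1, h2⟩
                have hD := specF k _ _ hk hp hu h2
                omega
              · intro hr2
                rcases hl : labN k ((v.1 : ℕ)) U with _ | _
                · have hD := specF k _ _ hk hp hu hl
                  exact ⟨by omega, rfl⟩
                · have hD := specT k _ _ hk hp hu hl
                  exfalso; omega
            rw [hset, hcr (k - 1) 0 k (by omega) (by omega)]
            congr 1 <;> omega
          · have hset : sideF r n k t i false =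
                rectC r n t i k (2 * k - 1 - i) ∪
                  rectC r n t (i + 1) (2 * k - 2 - i) (2 * k - 1) := by
              ext v
              obtain ⟨hp, hu⟩ := hPU v
              simp only [sideF, rectC, Finset.mem_filter, Finset.mem_univ, true_and,
                Finset.mem_union]
              generalize hU : (v.2 : ℕ) / t = U at *
              constructor
              · rintro ⟨h1, h2⟩
                have hD := specF k _ _ hk hp hu h2
                omega
              · intro hr2
                rcases hl : labN k ((v.1 : ℕ)) U with _ | _
                · have hD := specF k _ _ hk hp hu hl
                  exact ⟨by omega, rfl⟩
                · have hD := specT k _ _ hk hp hu hl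
                  exfalso; omega
            rw [hset, Finset.card_union_of_disjoint (rect_disj _ _ _ _ _ _ _ _ _ (by omega)),
              hcr i k (2 * k - 1 - i) (by omega) (by omega),
              hcr (i + 1) (2 * k - 2 - i) (2 * k - 1) (by omega) (by omega), ← Nat.add_mul]
            congr 1 <;> omega
        · by_cases hiE : i = 2 * k - 2
          · have hset : sideF r n k t i false = rectC r n t (2 * k - 1) 0 k := by
              ext v
              obtain ⟨hp, hu⟩ := hPU v
              simp only [sideF, rectC, Finset.mem_filter, Finset.mem_univ, true_and]
              generalize hU : (v.2 : ℕ) / t = U at *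
              constructor
              · rintro ⟨h1, h2⟩
                have hD := specF k _ _ hk hp hu h2
                omega
              · intro hr2
                rcases hl : labN k ((v.1 : ℕ)) U with _ | _
                · have hD := specF k _ _ hk hp hu hl
                  exact ⟨by omega, rfl⟩
                · have hD := specT k _ _ hk hp hu hl
                  exfalso; omega
            rw [hset, hcr (2 * k - 1) 0 k (by omega) (by omega)]
            congr 1 <;> omega
          · have hset : sideF r n k t i false =
                rectC r n t (i + 1) k (3 * k - 2 - i) ∪
                  rectC r n t (i + 2) (3 * k - 3 - i) (2 * k - 1) := by
              ext v
              obtain ⟨hp, hu⟩ := hPU v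
              simp only [sideF, rectC, Finset.mem_filter, Finset.mem_univ, true_and,
                Finset.mem_union]
              generalize hU : (v.2 : ℕ) / t = U at *
              constructor
              · rintro ⟨h1, h2⟩
                have hD := specF k _ _ hk hp hu h2
                omega
              · intro hr2
                rcases hl : labN k ((v.1 : ℕ)) U with _ | _
                · have hD := specF k _ _ hk hp hu hl
                  exact ⟨by omega, rfl⟩
                · have hD := specT k _ _ hk hp hu hl
                  exfalso; omega
            rw [hset, Finset.card_union_of_disjoint (rect_disj _ _ _ _ _ _ _ _ _ (by omega)),
              hcr (i + 1) k (3 * k - 2 - i) (by omega) (by omega),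
              hcr (i + 2) (3 * k - 3 - i) (2 * k - 1) (by omega) (by omega), ← Nat.add_mul]
            congr 1 <;> omega
  · -- label true sides
    by_cases hk1 : k = 1
    · have hset : sideF r n k t i true = rectC r n t 0 0 1 := by
        ext v
        obtain ⟨hp, hu⟩ := hPU v
        simp only [sideF, rectC, Finset.mem_filter, Finset.mem_univ, true_and]
        generalize hU : (v.2 : ℕ) / t = U at *
        constructor
        · rintro ⟨h1, h2⟩
          have hD := specT k _ _ hk hp hu h2
          omega
        · intro hr2
          rcases hl : labN k ((v.1 : ℕ)) U with _ | _
          · have hD := specF k _ _ hk hp hu hl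
            exfalso; omega
          · have hD := specT k _ _ hk hp hu hl
            exact ⟨by omega, rfl⟩
      rw [hset, hcr 0 0 1 (by omega) (by omega), hk1]
      try omega
    · rcases Nat.eq_zero_or_pos i with hi0 | hi1
      · have hset : sideF r n k t i true =
            rectC r n t 0 k (2 * k - 1) ∪ rectC r n t 1 (2 * k - 2) (2 * k - 1) := by
          ext v
          obtain ⟨hp, hu⟩ := hPU v
          simp only [sideF, rectC, Finset.mem_filter, Finset.mem_univ, true_and,
            Finset.mem_union]
          generalize hU : (v.2 : ℕ) / t = U at *
          constructor
          · rintro ⟨h1, h2⟩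
            have hD := specT k _ _ hk hp hu h2
            omega
          · intro hr2
            rcases hl : labN k ((v.1 : ℕ)) U with _ | _
            · have hD := specF k _ _ hk hp hu hl
              exfalso; omega
            · have hD := specT k _ _ hk hp hu hl
              exact ⟨by omega, rfl⟩
        rw [hset, Finset.card_union_of_disjoint (rect_disj _ _ _ _ _ _ _ _ _ (by omega)),
          hcr 0 k (2 * k - 1) (by omega) (by omega),
          hcr 1 (2 * k - 2) (2 * k - 1) (by omega) (by omega), ← Nat.add_mul]
        congr 1 <;> omega
      · rcases Nat.lt_or_ge i k with hik | hik
        · have hset : sideF r n k t i true = rectC r n t (i - 1) 0 k := by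
            ext v
            obtain ⟨hp, hu⟩ := hPU v
            simp only [sideF, rectC, Finset.mem_filter, Finset.mem_univ, true_and]
            generalize hU : (v.2 : ℕ) / t = U at *
            constructor
            · rintro ⟨h1, h2⟩
              have hD := specT k _ _ hk hp hu h2
              omega
            · intro hr2
              rcases hl : labN k ((v.1 : ℕ)) U with _ | _
              · have hD := specF k _ _ hk hp hu hl
                exfalso; omega
              · have hD := specT k _ _ hk hp hu hl
                exact ⟨by omega, rfl⟩
          rw [hset, hcr (i - 1) 0 k (by omega) (by omega)]
          congr 1 <;> omega
        · have hset : sideF r n k t i true = rectC r n t i 0 k := by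
            ext v
            obtain ⟨hp, hu⟩ := hPU v
            simp only [sideF, rectC, Finset.mem_filter, Finset.mem_univ, true_and]
            generalize hU : (v.2 : ℕ) / t = U at *
            constructor
            · rintro ⟨h1, h2⟩
              have hD := specT k _ _ hk hp hu h2
              omega
            · intro hr2
              rcases hl : labN k ((v.1 : ℕ)) U with _ | _
              · have hD := specF k _ _ hk hp hu hl
                exfalso; omega
              · have hD := specT k _ _ hk hp hu hl
                exact ⟨by omega, rfl⟩
          rw [hset, hcr i 0 k (by omega) (by omega)]
          congr 1 <;> omega

def GG (r n k t : ℕ) : SimpleGraph (Fin r × Fin n) where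
  Adj a b := blkN k (a.1 : ℕ) ((a.2 : ℕ) / t) = blkN k (b.1 : ℕ) ((b.2 : ℕ) / t) ∧
    labN k (a.1 : ℕ) ((a.2 : ℕ) / t) ≠ labN k (b.1 : ℕ) ((b.2 : ℕ) / t)
  symm := by
    constructor
    rintro a b ⟨h1, h2⟩
    exact ⟨h1.symm, h2.symm⟩
  loopless := by
    constructor
    rintro a ⟨-, h2⟩
    exact h2 rfl

lemma GG_adj (r n k t : ℕ) (a b : Fin r × Fin n) :
    (GG r n k t).Adj a b ↔
      blkN k (a.1 : ℕ) ((a.2 : ℕ) / t) = blkN k (b.1 : ℕ) ((b.2 : ℕ) / t) ∧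
      labN k (a.1 : ℕ) ((a.2 : ℕ) / t) ≠ labN k (b.1 : ℕ) ((b.2 : ℕ) / t) := Iff.rfl

end St10

theorem stmt10 (r n : ℕ) (hreven : Even r) (hr : 2 ≤ r) (hn : 0 < n)
    (hdvd : (r - 1) ∣ n) :
    ∃ G : SimpleGraph (Fin r × Fin n), IsPartite G ∧
      -- G is the vertex-disjoint union of r-1 complete bipartite graphs with
      -- both sides of size rn/(2r-2)
      (∃ A B : Fin (r - 1) → Finset (Fin r × Fin n),
        (∀ i, Disjoint (A i) (B i)) ∧
        (∀ i j, i ≠ j → Disjoint (A i ∪ B i) (A j ∪ B j)) ∧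
        (∀ v : Fin r × Fin n, ∃ i, v ∈ A i ∨ v ∈ B i) ∧
        (∀ i, (A i).card = r * n / (2 * r - 2)) ∧
        (∀ i, (B i).card = r * n / (2 * r - 2)) ∧
        (∀ u v : Fin r × Fin n,
          G.Adj u v ↔ ∃ i, (u ∈ A i ∧ v ∈ B i) ∨ (u ∈ B i ∧ v ∈ A i))) ∧
      -- so G is rn/(2r-2)-regular
      (∀ v, (G.neighborSet v).ncard = r * n / (2 * r - 2)) ∧
      ¬ HasIT G := by
  classical
  obtain ⟨k, hkk⟩ := hreven
  have hk : 1 ≤ k := by omega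
  have hrk : r = 2 * k := by omega
  obtain ⟨t, ht2⟩ := hdvd
  have ht : 0 < t := by
    rcases Nat.eq_zero_or_pos t with h | h
    · subst h; simp at ht2; omega
    · exact h
  have hn' : n = (2 * k - 1) * t := by
    rw [ht2]
    congr 1
    omega
  have hm : r * n / (2 * r - 2) = k * t := by
    have h2 : 2 * r - 2 = 2 * (2 * k - 1) := by omega
    have h1 : r * n = (k * t) * (2 * (2 * k - 1)) := by
      rw [hrk, hn']
      generalize (2 * k - 1) = K
      ring
    rw [h2, h1, Nat.mul_div_cancel _ (by omega : 0 < 2 * (2 * k - 1))]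
  have hPU : ∀ v : Fin r × Fin n, (v.1 : ℕ) < 2 * k ∧ (v.2 : ℕ) / t + 1 < 2 * k := by
    intro v
    have hp : (v.1 : ℕ) < 2 * k := by have := v.1.isLt; omega
    have hu2 : (v.2 : ℕ) < (2 * k - 1) * t := hn' ▸ v.2.isLt
    have hu : (v.2 : ℕ) / t + 1 < 2 * k := by
      have := (Nat.div_lt_iff_lt_mul ht).mpr hu2; omega
    exact ⟨hp, hu⟩
  refine ⟨St10.GG r n k t, ?_, ⟨fun i => St10.sideF r n k t (i : ℕ) true,
    fun i => St10.sideF r n k t (i : ℕ) false, ?_, ?_, ?_, ?_, ?_, ?_⟩, ?_, ?_⟩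
  · -- IsPartite
    intro i x y h
    rw [St10.GG_adj] at h
    exact h.2 (St10.same_part k (i : ℕ) ((x : ℕ) / t) ((y : ℕ) / t) hk
      (hPU (i, x)).1 (hPU (i, x)).2 (hPU (i, y)).2 h.1)
  · -- Disjoint A B
    intro i
    rw [Finset.disjoint_left]
    intro v hv1 hv2
    simp only [St10.sideF, Finset.mem_filter] at hv1 hv2
    rw [hv1.2.2] at hv2
    exact absurd hv2.2.2 (by simp)
  · -- blocks pairwise disjoint
    intro i j hij
    rw [Finset.disjoint_left]
    intro v hv1 hv2
    simp only [Finset.mem_union, St10.sideF, Finset.mem_filter] at hv1 hv2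
    apply hij
    apply Fin.ext
    rcases hv1 with h | h <;> rcases hv2 with h' | h' <;>
      (exact h.2.1.symm.trans h'.2.1)
  · -- coverage
    intro v
    have hb := St10.blkN_lt k (v.1 : ℕ) ((v.2 : ℕ) / t) hk (hPU v).1
    refine ⟨⟨St10.blkN k (v.1 : ℕ) ((v.2 : ℕ) / t), lt_of_lt_of_le hb (by omega)⟩, ?_⟩
    rcases hl : St10.labN k (v.1 : ℕ) ((v.2 : ℕ) / t) with _ | _
    · right
      simp only [St10.sideF, Finset.mem_filter, Finset.mem_univ, true_and]
      exact hl
    · left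
      simp only [St10.sideF, Finset.mem_filter, Finset.mem_univ, true_and]
      exact hl
  · -- card A
    intro i
    rw [hm]
    exact St10.card_sideF r n k t hk ht hrk hn' (i : ℕ) (by have := i.isLt; omega) true
  · -- card B
    intro i
    rw [hm]
    exact St10.card_sideF r n k t hk ht hrk hn' (i : ℕ) (by have := i.isLt; omega) false
  · -- adjacency iff
    intro u v
    rw [St10.GG_adj]
    constructor
    · rintro ⟨h1, h2⟩
      have hb := St10.blkN_lt k (u.1 : ℕ) ((u.2 : ℕ) / t) hk (hPU u).1
      refine ⟨⟨St10.blkN k (u.1 : ℕ) ((u.2 : ℕ) / t), lt_of_lt_of_le hb (by omega)⟩, ?_⟩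
      rcases hlu : St10.labN k (u.1 : ℕ) ((u.2 : ℕ) / t) with _ | _ <;>
        rcases hlv : St10.labN k (v.1 : ℕ) ((v.2 : ℕ) / t) with _ | _
      · rw [hlu, hlv] at h2; exact absurd rfl h2
      · right
        constructor <;>
          simp only [St10.sideF, Finset.mem_filter, Finset.mem_univ, true_and]
        · exact hlu
        · exact ⟨h1.symm, hlv⟩
      · left
        constructor <;>
          simp only [St10.sideF, Finset.mem_filter, Finset.mem_univ, true_and]
        · exact hlu
        · exact ⟨h1.symm, hlv⟩
      · rw [hlu, hlv] at h2; exact absurd rfl h2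
    · rintro ⟨i, ⟨hA, hB⟩ | ⟨hB, hA⟩⟩ <;>
        simp only [St10.sideF, Finset.mem_filter, Finset.mem_univ, true_and] at hA hB
      · exact ⟨hA.1.trans hB.1.symm, by rw [hA.2, hB.2]; simp⟩
      · exact ⟨hB.1.trans hA.1.symm, by rw [hB.2, hA.2]; simp⟩
  · -- regularity
    intro v
    have hb := St10.blkN_lt k (v.1 : ℕ) ((v.2 : ℕ) / t) hk (hPU v).1
    have hnb : (St10.GG r n k t).neighborSet v =
        ↑(St10.sideF r n k t (St10.blkN k (v.1 : ℕ) ((v.2 : ℕ) / t))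
          (!St10.labN k (v.1 : ℕ) ((v.2 : ℕ) / t))) := by
      ext w
      simp only [SimpleGraph.mem_neighborSet, Finset.coe_filter, Set.mem_setOf_eq,
        Finset.mem_coe, Finset.mem_filter, Finset.mem_univ, true_and, St10.sideF,
        St10.GG_adj]
      constructor
      · rintro ⟨h1, h2⟩
        refine ⟨h1.symm, ?_⟩
        rcases hlv : St10.labN k (v.1 : ℕ) ((v.2 : ℕ) / t) with _ | _ <;>
          rcases hlw : St10.labN k (w.1 : ℕ) ((w.2 : ℕ) / t) with _ | _ <;>
          rw [hlv, hlw] at h2 <;> simp_all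
      · rintro ⟨h1, h2⟩
        refine ⟨h1.symm, ?_⟩
        rw [h2]
        rcases St10.labN k (v.1 : ℕ) ((v.2 : ℕ) / t) with _ | _ <;> simp
    rw [hnb, Set.ncard_coe_finset, hm]
    exact St10.card_sideF r n k t hk ht hrk hn' _ hb _
  · -- no IT
    rintro ⟨f, hf⟩
    apply St10.noIT k hk (fun p => if h : p < r then ((f ⟨p, h⟩ : Fin n) : ℕ) / t else 0)
    · intro p hp
      have hpr : p < r := by omega
      simp only [dif_pos hpr]
      exact (hPU (⟨p, hpr⟩, f ⟨p, hpr⟩)).2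
    · intro p p' hp hp' hne hblk
      have hpr : p < r := by omega
      have hpr' : p' < r := by omega
      simp only [dif_pos hpr, dif_pos hpr'] at hblk ⊢
      by_contra hlne
      apply hf ⟨p, hpr⟩ ⟨p', hpr'⟩ (by simp [Fin.ext_iff]; exact hne)
      rw [St10.GG_adj]
      exact ⟨hblk, hlne⟩
end

section
/- Let G be an r-partite graph with vertex partition V_1 ∪ ⋯ ∪ V_r (r ≥ 2), and let I = {v_1, w_1, …, v_{r−1}, w_{r−1}} be an induced matching configuration in G in which v_i is adjacent to w_i for each i ∈ [r−1]. Then for every index q ∈ [r] there is a V_q-avoiding partial independent transversal T = {s_1, …, s_{r−1}} in G such that s_j = v_j or s_j = w_j for every j ∈ [r−1]. -/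
open SimpleGraph

private lemma exists_path_dist {V : Type*} {G : SimpleGraph V} [DecidableEq V] (hc : G.Connected) (q a : V) :
    ∃ P : G.Walk q a, P.IsPath ∧ P.length = G.dist q a := by
  obtain ⟨P, hP⟩ := (hc q a).exists_walk_length_eq_dist
  exact ⟨P.bypass, P.bypass_isPath,
    le_antisymm (hP ▸ P.length_bypass_le) (SimpleGraph.dist_le _)⟩

private lemma adj_dist_le {V : Type*} {G : SimpleGraph V} (hc : G.Connected) {q a b : V}
    (h : G.Adj a b) : G.dist q a ≤ G.dist q b + 1 := by
  have := hc.dist_triangle (u := q) (v := b) (w := a)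
  have hba : G.dist b a = 1 := SimpleGraph.dist_eq_one_iff_adj.mpr h.symm
  omega

private lemma tree_adj_dist_ne {V : Type*} {G : SimpleGraph V} (hc : G.Connected)
    (ha : G.IsAcyclic) [DecidableEq V] (q : V) {a b : V} (h : G.Adj a b) : G.dist q a ≠ G.dist q b := by
  intro heq
  obtain ⟨P, hPp, hPl⟩ := exists_path_dist hc q a
  have hb : b ∉ P.support := by
    intro hb
    have h1 : G.dist q b ≤ (P.takeUntil b hb).length := SimpleGraph.dist_le _
    have h2 := congrArg SimpleGraph.Walk.length (P.take_spec hb)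
    rw [SimpleGraph.Walk.length_append] at h2
    have h3 : (P.dropUntil b hb).length ≠ 0 := fun h0 =>
      h.ne' (SimpleGraph.Walk.eq_of_length_eq_zero h0)
    omega
  have hW : (SimpleGraph.Walk.cons h.symm P.reverse).IsPath := by
    rw [SimpleGraph.Walk.cons_isPath_iff]
    exact ⟨hPp.reverse, by simpa using hb⟩
  obtain ⟨Q, hQp, hQl⟩ := exists_path_dist hc q b
  have := ha.path_unique ⟨_, hW⟩ ⟨Q.reverse, hQp.reverse⟩
  have hlen := congrArg (fun p : G.Path b q => p.1.length) this
  simp only [SimpleGraph.Walk.length_cons, SimpleGraph.Walk.length_reverse] at hlen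
  omega

private lemma tree_descend {V : Type*} {G : SimpleGraph V} [DecidableEq V] (hc : G.Connected) {q x : V}
    (hx : x ≠ q) : ∃ y, G.Adj x y ∧ G.dist q y + 1 = G.dist q x := by
  obtain ⟨P, hPp, hPl⟩ := exists_path_dist hc q x
  have hpos : 0 < G.dist q x := hc.pos_dist_of_ne hx.symm
  cases hP' : P.reverse with
  | nil => exact absurd rfl hx
  | cons hadj p =>
    rename_i y
    have hlen : p.length + 1 = G.dist q x := by
      have := congrArg SimpleGraph.Walk.length hP'
      simp only [SimpleGraph.Walk.length_reverse, SimpleGraph.Walk.length_cons] at this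
      omega
    have hdy : G.dist q y ≤ p.length := by
      have := SimpleGraph.dist_le p.reverse
      simpa using this
    have := adj_dist_le hc (q := q) hadj.symm  -- dist q x ≤ dist q y + 1? need Adj x y
    refine ⟨y, hadj, ?_⟩
    have h2 : G.dist q x ≤ G.dist q y + 1 := adj_dist_le hc hadj
    omega

private lemma tree_parent_unique {V : Type*} {G : SimpleGraph V} (hc : G.Connected)
    [DecidableEq V] (ha : G.IsAcyclic) {q x a b : V} (hax : G.Adj x a) (hbx : G.Adj x b)
    (hda : G.dist q a + 1 = G.dist q x) (hdb : G.dist q b + 1 = G.dist q x) : a = b := by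
  obtain ⟨P, hPp, hPl⟩ := exists_path_dist hc q a
  obtain ⟨Q, hQp, hQl⟩ := exists_path_dist hc q b
  have hxP : x ∉ P.support := by
    intro hxp
    have h1 : G.dist q x ≤ (P.takeUntil x hxp).length := SimpleGraph.dist_le _
    have h2 := P.length_takeUntil_le hxp
    omega
  have hxQ : x ∉ Q.support := by
    intro hxq
    have h1 : G.dist q x ≤ (Q.takeUntil x hxq).length := SimpleGraph.dist_le _
    have h2 := Q.length_takeUntil_le hxq
    omega
  have hW1 : (SimpleGraph.Walk.cons hax P.reverse).IsPath := by
    rw [SimpleGraph.Walk.cons_isPath_iff]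
    exact ⟨hPp.reverse, by simpa using hxP⟩
  have hW2 : (SimpleGraph.Walk.cons hbx Q.reverse).IsPath := by
    rw [SimpleGraph.Walk.cons_isPath_iff]
    exact ⟨hQp.reverse, by simpa using hxQ⟩
  have := ha.path_unique ⟨_, hW1⟩ ⟨_, hW2⟩
  have hgv := congrArg (fun p : G.Path x q => p.1.getVert 1) this
  simpa using hgv



/-- The auxiliary graph on the part indices: `a ~ b` iff some matching edge `v i w i`
joins part `a` to part `b`. -/
def auxGraph {V : Type*} {r : ℕ} (part : V → Fin r) (v w : Fin (r - 1) → V) :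
    SimpleGraph (Fin r) :=
  SimpleGraph.fromRel (fun a b => ∃ i, part (v i) = a ∧ part (w i) = b)

/-- The set `{v i, w i : i ∈ [r-1]}` is an induced matching configuration in the
`r`-partite graph `G` with parts given by `part`: it consists of `2(r-1)` distinct
vertices, induces exactly the perfect matching `{v i w i}`, meets every part, and the
multigraph on the part indices obtained from the matching edges is a tree (no loops,
no parallel edges, and the underlying simple graph is a tree). -/
def IsIMC {V : Type*} {r : ℕ} (G : SimpleGraph V) (part : V → Fin r)
    (v w : Fin (r - 1) → V) : Prop :=
  (∀ i, G.Adj (v i) (w i)) ∧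
  (∀ i, v i ≠ w i) ∧
  (∀ i j, i ≠ j → v i ≠ v j ∧ w i ≠ w j ∧ v i ≠ w j) ∧
  (∀ i j, ∀ a b, (a = v i ∨ a = w i) → (b = v j ∨ b = w j) → G.Adj a b →
    i = j ∧ ((a = v i ∧ b = w i) ∨ (a = w i ∧ b = v i))) ∧
  (∀ q : Fin r, ∃ i, part (v i) = q ∨ part (w i) = q) ∧
  (∀ i, part (v i) ≠ part (w i)) ∧
  (∀ i j, i ≠ j →
    ¬((part (v i) = part (v j) ∧ part (w i) = part (w j)) ∨
      (part (v i) = part (w j) ∧ part (w i) = part (v j)))) ∧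
  (auxGraph part v w).IsTree

theorem stmt14 {V : Type*} (r : ℕ) (hr : 2 ≤ r) (G : SimpleGraph V)
    (part : V → Fin r) (hpart : ∀ u u' : V, G.Adj u u' → part u ≠ part u')
    (v w : Fin (r - 1) → V) (himc : IsIMC G part v w) (q : Fin r) :
    ∃ s : Fin (r - 1) → V,
      (∀ j, s j = v j ∨ s j = w j) ∧
      -- T = {s j} is an independent set
      (∀ i j, i ≠ j → ¬ G.Adj (s i) (s j)) ∧
      -- T avoids part q and has exactly one vertex in every other part
      (∀ i, part (s i) ≠ q) ∧
      (∀ q' : Fin r, q' ≠ q → ∃! i, part (s i) = q') := by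
  obtain ⟨h1, h2, h3, h4, h5, h6, h7, h8⟩ := himc
  set T := auxGraph part v w with hT
  have hc : T.Connected := h8.isConnected
  have ha : T.IsAcyclic := h8.IsAcyclic
  set d : Fin r → ℕ := fun x => T.dist q x with hd
  have hTadj : ∀ i, T.Adj (part (v i)) (part (w i)) := fun i =>
    SimpleGraph.fromRel_adj _ _ _ |>.mpr ⟨h6 i, Or.inl ⟨i, rfl, rfl⟩⟩
  classical
  set s : Fin (r - 1) → V := fun i =>
    if d (part (w i)) + 1 = d (part (v i)) then v i else w i with hs
  set o : Fin (r - 1) → V := fun i =>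
    if d (part (w i)) + 1 = d (part (v i)) then w i else v i with ho
  have hso : ∀ i, (s i = v i ∧ o i = w i) ∨ (s i = w i ∧ o i = v i) := by
    intro i
    by_cases hcond : d (part (w i)) + 1 = d (part (v i))
    · exact Or.inl ⟨by simp [hs, hcond], by simp [ho, hcond]⟩
    · exact Or.inr ⟨by simp [hs, hcond], by simp [ho, hcond]⟩
  have claim1 : ∀ i, d (part (o i)) + 1 = d (part (s i)) := by
    intro i
    by_cases hcond : d (part (w i)) + 1 = d (part (v i))
    · simpa [hs, ho, hcond] using hcond
    · have h1' : d (part (v i)) ≠ d (part (w i)) := tree_adj_dist_ne hc ha q (hTadj i)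
      have h2' : d (part (v i)) ≤ d (part (w i)) + 1 := adj_dist_le hc (hTadj i)
      have h3' : d (part (w i)) ≤ d (part (v i)) + 1 := adj_dist_le hc (hTadj i).symm
      simp only [hs, ho, if_neg hcond]
      omega
  have claimadj : ∀ i, T.Adj (part (s i)) (part (o i)) := by
    intro i
    rcases hso i with ⟨h1', h2'⟩ | ⟨h1', h2'⟩ <;> rw [h1', h2']
    · exact hTadj i
    · exact (hTadj i).symm
  have havoid : ∀ i, part (s i) ≠ q := by
    intro i hq
    have := claim1 i
    rw [hq] at this
    have hdq : d q = 0 := by simp [hd]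
    omega
  -- injectivity
  have hinj : ∀ i j, part (s i) = part (s j) → i = j := by
    intro i j hij
    by_contra hne
    have hoo : part (o i) = part (o j) := by
      refine tree_parent_unique hc ha (x := part (s i)) (claimadj i)
        (hij ▸ claimadj j) (claim1 i) ?_
      rw [hij]; exact claim1 j
    refine h7 i j hne ?_
    rcases hso i with ⟨hi1, hi2⟩ | ⟨hi1, hi2⟩ <;>
      rcases hso j with ⟨hj1, hj2⟩ | ⟨hj1, hj2⟩ <;>
      rw [hi1, hj1] at hij <;> rw [hi2, hj2] at hoo
    · exact Or.inl ⟨hij, hoo⟩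
    · exact Or.inr ⟨hij, hoo⟩
    · exact Or.inr ⟨hoo, hij⟩
    · exact Or.inl ⟨hoo, hij⟩
  refine ⟨s, fun j => ?_, ?_, havoid, ?_⟩
  · rcases hso j with ⟨hj, _⟩ | ⟨hj, _⟩
    · exact Or.inl hj
    · exact Or.inr hj
  · intro i j hij hadj
    have hsi : s i = v i ∨ s i = w i := by
      rcases hso i with ⟨h', _⟩ | ⟨h', _⟩; exacts [Or.inl h', Or.inr h']
    have hsj : s j = v j ∨ s j = w j := by
      rcases hso j with ⟨h', _⟩ | ⟨h', _⟩; exacts [Or.inl h', Or.inr h']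
    exact hij (h4 i j (s i) (s j) hsi hsj hadj).1
  · intro q' hq'
    obtain ⟨y, hadj', hdy⟩ := tree_descend hc (G := T) (q := q) (x := q') hq'
    obtain ⟨hney, hcase⟩ := (SimpleGraph.fromRel_adj _ _ _).mp hadj'
    have hdy' : d y + 1 = d q' := hdy
    have : ∃ i, part (s i) = q' := by
      rcases hcase with ⟨i, hvq, hwy⟩ | ⟨i, hvy, hwq⟩
      · refine ⟨i, ?_⟩
        have hcond : d (part (w i)) + 1 = d (part (v i)) := by rw [hvq, hwy]; exact hdy'
        simp only [hs, if_pos hcond]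
        exact hvq
      · refine ⟨i, ?_⟩
        have hcond : ¬(d (part (w i)) + 1 = d (part (v i))) := by
          rw [hvy, hwq]; omega
        simp only [hs, if_neg hcond]
        exact hwq
    obtain ⟨i, hi⟩ := this
    exact ⟨i, hi, fun j hj => hinj j i (hj.trans hi.symm)⟩
end

section
/- Let G be an r-partite graph with parts of size n (r ≥ 2) containing no independent transversal, and let I = {a_1, b_1, …, a_{r−1}, b_{r−1}} be an induced matching configuration in G in which a_i is adjacent to b_i for each i ∈ [r−1]. For v ∈ I let A_v = {y ∈ V(G) : N(y) ∩ I = {v}}. Suppose v_i ∈ A_{a_i} and w_i ∈ A_{b_i} for i ∈ [r−1], and the set {v_1, w_1, …, v_{r−1}, w_{r−1}} contains no edge of G other than possibly the pairs v_i w_i (i.e., it is independent in G − E where E = {v_i w_i : i ∈ [r−1]}). Then {v_i, w_i : i ∈ [r−1]} is an induced matching configuration in G. -/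
open SimpleGraph

namespace IMCAux

variable {V : Type*} [DecidableEq V]

lemma exists_closer {H : SimpleGraph V} {q ρ : V} (hr : H.Reachable q ρ) (hq : q ≠ ρ) :
    ∃ u, H.Adj q u ∧ H.dist u ρ + 1 = H.dist q ρ := by
  obtain ⟨p, hp⟩ := hr.exists_walk_length_eq_dist
  cases p with
  | nil => exact absurd rfl hq
  | @cons _ u _ h p' =>
    refine ⟨u, h, ?_⟩
    have hru : H.Reachable u ρ := (h.symm.reachable).trans hr
    obtain ⟨p2, hp2⟩ := hru.exists_walk_length_eq_dist
    have h1 : H.dist u ρ ≤ p'.length := SimpleGraph.dist_le p'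
    have h2 : H.dist q ρ ≤ (SimpleGraph.Walk.cons h p2).length := SimpleGraph.dist_le _
    simp only [SimpleGraph.Walk.length_cons] at hp h2
    omega

lemma exists_shortest_path {H : SimpleGraph V} {u ρ : V} (hr : H.Reachable u ρ) :
    ∃ p : H.Walk u ρ, p.IsPath ∧ p.length = H.dist u ρ := by
  obtain ⟨p, hp⟩ := hr.exists_walk_length_eq_dist
  refine ⟨p.bypass, p.bypass_isPath, le_antisymm ?_ (SimpleGraph.dist_le _)⟩
  calc p.bypass.length ≤ p.length := SimpleGraph.Walk.length_bypass_le p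
    _ = _ := hp

lemma dist_lt_of_mem_support {H : SimpleGraph V} {u ρ z : V} {p : H.Walk u ρ}
    (hz : z ∈ p.support) (hzu : z ≠ u) : H.dist z ρ + 1 ≤ p.length := by
  have hs := p.take_spec hz
  have hlen : (p.takeUntil z hz).length + (p.dropUntil z hz).length = p.length := by
    rw [← SimpleGraph.Walk.length_append, hs]
  have h1 : H.dist z ρ ≤ (p.dropUntil z hz).length := SimpleGraph.dist_le _
  have h2 : 1 ≤ (p.takeUntil z hz).length := by
    rcases Nat.eq_zero_or_pos (p.takeUntil z hz).length with h | h
    · exact absurd (SimpleGraph.Walk.eq_of_length_eq_zero h).symm hzu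
    · exact h
  omega

lemma unique_closer {H : SimpleGraph V} (hT : H.IsTree) {ρ q u u' : V}
    (h1 : H.Adj q u) (h2 : H.Adj q u')
    (d1 : H.dist u ρ + 1 = H.dist q ρ) (d2 : H.dist u' ρ + 1 = H.dist q ρ) : u = u' := by
  have hC := hT.isConnected
  obtain ⟨p1, hp1, hl1⟩ := exists_shortest_path (hC u ρ)
  obtain ⟨p2, hp2, hl2⟩ := exists_shortest_path (hC u' ρ)
  have hq1 : q ∉ p1.support := by
    intro hmem
    rcases eq_or_ne q u with rfl | hne
    · exact h1.ne rfl
    · have := dist_lt_of_mem_support hmem hne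
      omega
  have hq2 : q ∉ p2.support := by
    intro hmem
    rcases eq_or_ne q u' with rfl | hne
    · exact h2.ne rfl
    · have := dist_lt_of_mem_support hmem hne
      omega
  have hw1 : (SimpleGraph.Walk.cons h1 p1).IsPath :=
    (SimpleGraph.Walk.cons_isPath_iff h1 p1).mpr ⟨hp1, hq1⟩
  have hw2 : (SimpleGraph.Walk.cons h2 p2).IsPath :=
    (SimpleGraph.Walk.cons_isPath_iff h2 p2).mpr ⟨hp2, hq2⟩
  obtain ⟨pu, -, huniq⟩ := hT.existsUnique_path q ρ
  have heq : SimpleGraph.Walk.cons h1 p1 = SimpleGraph.Walk.cons h2 p2 :=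
    (huniq _ hw1).trans (huniq _ hw2).symm
  have := congrArg SimpleGraph.Walk.support heq
  rw [SimpleGraph.Walk.support_cons, SimpleGraph.Walk.support_cons,
    p1.support_eq_cons, p2.support_eq_cons] at this
  have h2 := (List.cons_eq_cons.mp this).2
  exact (List.cons_eq_cons.mp h2).1

lemma adj_dist_ne {H : SimpleGraph V} (hT : H.IsTree) {ρ x y : V} (h : H.Adj x y) :
    H.dist x ρ ≠ H.dist y ρ := by
  intro heq
  have hC := hT.isConnected
  obtain ⟨p1, hp1, hl1⟩ := exists_shortest_path (hC x ρ)
  obtain ⟨p2, hp2, hl2⟩ := exists_shortest_path (hC y ρ)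
  have hx2 : x ∉ p2.support := by
    intro hmem
    have := dist_lt_of_mem_support hmem h.ne
    omega
  have hw2 : (SimpleGraph.Walk.cons h p2).IsPath :=
    (SimpleGraph.Walk.cons_isPath_iff h p2).mpr ⟨hp2, hx2⟩
  obtain ⟨pu, -, huniq⟩ := hT.existsUnique_path x ρ
  have heq2 : p1 = SimpleGraph.Walk.cons h p2 := (huniq _ hp1).trans (huniq _ hw2).symm
  have := congrArg SimpleGraph.Walk.length heq2
  rw [SimpleGraph.Walk.length_cons] at this
  omega

open scoped Classical in
noncomputable def treePar (H : SimpleGraph V) (ρ : V) (q : V) : V :=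
  if h : ∃ u, H.Adj q u ∧ H.dist u ρ + 1 = H.dist q ρ then h.choose else q

lemma treePar_root (H : SimpleGraph V) (ρ : V) : treePar H ρ ρ = ρ := by
  classical
  rw [treePar]
  rw [dif_neg]
  rintro ⟨u, -, hd⟩
  rw [SimpleGraph.dist_self] at hd
  omega

lemma treePar_spec {H : SimpleGraph V} (hT : H.IsTree) {ρ q : V} (hq : q ≠ ρ) :
    H.Adj q (treePar H ρ q) ∧ H.dist (treePar H ρ q) ρ + 1 = H.dist q ρ := by
  have hex : ∃ u, H.Adj q u ∧ H.dist u ρ + 1 = H.dist q ρ :=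
    exists_closer (hT.isConnected q ρ) hq
  classical
  rw [treePar]
  rw [dif_pos hex]
  exact hex.choose_spec

lemma treePar_adj {H : SimpleGraph V} (hT : H.IsTree) {ρ q : V} (hq : q ≠ ρ) :
    H.Adj q (treePar H ρ q) := (treePar_spec hT hq).1

lemma treePar_or {H : SimpleGraph V} (hT : H.IsTree) {ρ x y : V} (h : H.Adj x y) :
    treePar H ρ x = y ∨ treePar H ρ y = x := by
  have hne := adj_dist_ne hT (ρ := ρ) h
  rcases lt_or_gt_of_ne hne with hlt | hlt
  · -- dist x < dist y : y's parent is x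
    right
    have hy : y ≠ ρ := by
      intro rfl'
      subst rfl'
      simp [SimpleGraph.dist_self] at hlt
    have hspec := treePar_spec hT (ρ := ρ) hy
    have hdist : H.dist x ρ + 1 = H.dist y ρ := by
      have h2 : H.dist y ρ ≤ H.dist x ρ + 1 := by
        obtain ⟨p, hp⟩ := (hT.isConnected x ρ).exists_walk_length_eq_dist
        have := SimpleGraph.dist_le (SimpleGraph.Walk.cons h.symm p)
        simp only [SimpleGraph.Walk.length_cons] at this
        omega
      omega
    exact unique_closer hT hspec.1 h.symm hspec.2 hdist
  · left
    have hx : x ≠ ρ := by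
      intro rfl'
      subst rfl'
      simp [SimpleGraph.dist_self] at hlt
    have hspec := treePar_spec hT (ρ := ρ) hx
    have hdist : H.dist y ρ + 1 = H.dist x ρ := by
      have h2 : H.dist x ρ ≤ H.dist y ρ + 1 := by
        obtain ⟨p, hp⟩ := (hT.isConnected y ρ).exists_walk_length_eq_dist
        have := SimpleGraph.dist_le (SimpleGraph.Walk.cons h p)
        simp only [SimpleGraph.Walk.length_cons] at this
        omega
      omega
    exact unique_closer hT hspec.1 h hspec.2 hdist

lemma treePar_not_both {H : SimpleGraph V} (hT : H.IsTree) {ρ x y : V} (h : H.Adj x y) :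
    ¬(treePar H ρ x = y ∧ treePar H ρ y = x) := by
  rintro ⟨h1, h2⟩
  have hx : x ≠ ρ := by
    intro rfl'
    subst rfl'
    rw [treePar_root] at h1
    exact h.ne h1
  have hy : y ≠ ρ := by
    intro rfl'
    subst rfl'
    rw [treePar_root] at h2
    exact h.ne' h2
  have s1 := (treePar_spec hT (ρ := ρ) hx).2
  have s2 := (treePar_spec hT (ρ := ρ) hy).2
  rw [h1] at s1
  rw [h2] at s2
  omega



lemma reach_del {H : SimpleGraph V} (hT : H.IsTree) {ρ x y : V} (hadj : H.Adj x y)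
    (hpar : treePar H ρ y = x) (q : V) (hq : H.dist q ρ < H.dist y ρ) :
    (H.deleteEdges {s(x, y)}).Reachable q ρ := by
  obtain ⟨d, hd⟩ : ∃ d, H.dist q ρ = d := ⟨_, rfl⟩
  induction d using Nat.strong_induction_on generalizing q with
  | _ d ih =>
    rcases eq_or_ne q ρ with rfl | hne
    · exact SimpleGraph.Reachable.refl _
    · have hspec := treePar_spec hT (ρ := ρ) hne
      have hedge : s(q, treePar H ρ q) ≠ s(x, y) := by
        intro he
        rw [Sym2.eq_iff] at he
        rcases he with ⟨rfl, hpy⟩ | ⟨rfl, -⟩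
        · exact treePar_not_both hT hadj ⟨hpy, hpar⟩
        · omega
      have hadj' : (H.deleteEdges {s(x, y)}).Adj q (treePar H ρ q) := by
        rw [SimpleGraph.deleteEdges_adj]
        exact ⟨hspec.1, by simpa using hedge⟩
      have hrec := ih (H.dist (treePar H ρ q) ρ) (by omega) (treePar H ρ q) (by omega) rfl
      exact hadj'.reachable.trans hrec

lemma cover_disj {H : SimpleGraph V} (hT : H.IsTree) {x y x' y' : V} (hadj : H.Adj x y)
    (hparx : treePar H x' x = y)
    (hx : (H.deleteEdges {s(x, y)}).Reachable x y') (q : V) :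
    (H.deleteEdges {s(x, y)}).Reachable q x' ∨ (H.deleteEdges {s(x, y)}).Reachable q y' := by
  obtain ⟨d, hd⟩ : ∃ d, H.dist q x' = d := ⟨_, rfl⟩
  induction d using Nat.strong_induction_on generalizing q with
  | _ d ih =>
    rcases eq_or_ne q x' with rfl | hne
    · exact Or.inl (SimpleGraph.Reachable.refl _)
    · have hspec := treePar_spec hT (ρ := x') hne
      by_cases hedge : s(q, treePar H x' q) = s(x, y)
      · rw [Sym2.eq_iff] at hedge
        rcases hedge with ⟨rfl, -⟩ | ⟨rfl, hpx⟩
        · exact Or.inr hx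
        · exact absurd ⟨hpx, hparx⟩ (treePar_not_both hT hadj.symm)
      · have hadj' : (H.deleteEdges {s(x, y)}).Adj q (treePar H x' q) := by
          rw [SimpleGraph.deleteEdges_adj]
          exact ⟨hspec.1, by simpa using hedge⟩
        rcases ih (H.dist (treePar H x' q) x') (by omega) (treePar H x' q) rfl with hc | hc
        · exact Or.inl (hadj'.reachable.trans hc)
        · exact Or.inr (hadj'.reachable.trans hc)

lemma avoid {H : SimpleGraph V} (hT : H.IsTree) {ρ q : V} {e : Sym2 V} (hq : q ≠ ρ)
    (hr : (H.deleteEdges {e}).Reachable q ρ) :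
    s(q, treePar H ρ q) ≠ e ∧ (H.deleteEdges {e}).Reachable (treePar H ρ q) ρ := by
  have hspec := treePar_spec hT hq
  have hne : s(q, treePar H ρ q) ≠ e := by
    intro he
    obtain ⟨p2, hp2, hl2⟩ := exists_shortest_path (hT.isConnected (treePar H ρ q) ρ)
    have hq2 : q ∉ p2.support := by
      intro hmem
      have hmain := dist_lt_of_mem_support hmem (fun h => hspec.1.ne h)
      omega
    have hP1 : (SimpleGraph.Walk.cons hspec.1 p2).IsPath :=
      (SimpleGraph.Walk.cons_isPath_iff _ _).mpr ⟨hp2, hq2⟩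
    -- a walk avoiding e
    obtain ⟨pk⟩ := hr
    have hle : H.deleteEdges {e} ≤ H := by
      intro u v h
      exact (SimpleGraph.deleteEdges_adj.mp h).1
    let W : H.Walk q ρ := pk.mapLe hle
    have hWedges : e ∉ W.edges := by
      intro hmem
      have : W.edges = pk.edges := by
        simp only [W, SimpleGraph.Walk.mapLe, SimpleGraph.Walk.edges_map]
        have hid : ⇑(SimpleGraph.Hom.ofLE hle) = id := rfl
        rw [hid, Sym2.map_id, List.map_id]
      rw [this] at hmem
      have := pk.edges_subset_edgeSet hmem
      rw [SimpleGraph.edgeSet_deleteEdges] at this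
      exact this.2 rfl
    have hP2 : W.bypass.IsPath := W.bypass_isPath
    have hP2edges : e ∉ W.bypass.edges := fun hm => hWedges (W.edges_bypass_subset hm)
    obtain ⟨pu, -, huniq⟩ := hT.existsUnique_path q ρ
    have heq : SimpleGraph.Walk.cons hspec.1 p2 = W.bypass :=
      (huniq _ hP1).trans (huniq _ hP2).symm
    have : e ∈ W.bypass.edges := by
      rw [← heq, SimpleGraph.Walk.edges_cons, ← he]
      exact List.mem_cons_self
    exact hP2edges this
  refine ⟨hne, ?_⟩
  have hadj' : (H.deleteEdges {e}).Adj (treePar H ρ q) q := by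
    rw [SimpleGraph.deleteEdges_adj]
    exact ⟨hspec.1.symm, by rw [Sym2.eq_swap]; simpa using hne⟩
  exact hadj'.reachable.trans hr

lemma parent_acyclic (H : SimpleGraph V) (ρ : V) (g : V → V) (m : V → ℕ)
    (hroot : g ρ = ρ) (hdec : ∀ q, q ≠ ρ → m (g q) < m q)
    (hor : ∀ x y, H.Adj x y → g x = y ∨ g y = x) : H.IsAcyclic := by
  rw [SimpleGraph.isAcyclic_iff_forall_adj_isBridge]
  suffices key : ∀ x y, H.Adj x y → g y = x →
      ¬(H \ SimpleGraph.fromEdgeSet {s(x, y)}).Reachable x y by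
    intro x y hxy
    rcases hor x y hxy with hg | hg
    · rw [SimpleGraph.isBridge_iff]
      refine fun hre => key y x hxy.symm hg ?_
      rw [Sym2.eq_swap]
      exact hre.symm
    · rw [SimpleGraph.isBridge_iff]
      exact key x y hxy hg
  intro x y hxy hg hre
  classical
  have hyρ : y ≠ ρ := by
    rintro rfl
    have hxyeq : x = y := by rw [← hg, hroot]
    exact hxy.ne hxyeq
  -- chain descent
  have hchain : ∀ (k : ℕ) (q : V), g^[k] q = y → q ≠ y → m y < m q := by
    intro k
    induction k with
    | zero => intro q hq hne; exact absurd hq hne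
    | succ k ihk =>
      intro q hq hne
      have hqρ : q ≠ ρ := by
        rintro rfl
        rw [Function.iterate_succ_apply, hroot, Function.iterate_fixed hroot] at hq
        exact hyρ hq.symm
      have hdq := hdec q hqρ
      rw [Function.iterate_succ_apply] at hq
      rcases eq_or_ne (g q) y with hgy | hgy
      · rw [hgy] at hdq; omega
      · have := ihk (g q) hq hgy
        omega
  set D : V → Prop := fun q => ∃ k, g^[k] q = y with hD
  have hxD : ¬D x := by
    rintro ⟨k, hk⟩
    have h1 : m y < m x := hchain k x hk hxy.ne
    have h2 : m x < m y := by
      have := hdec y hyρ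
      rwa [hg] at this
    omega
  -- invariant along edges of the deleted graph
  have hstep : ∀ u u', (H \ SimpleGraph.fromEdgeSet {s(x, y)}).Adj u u' →
      g u = u' → (D u ↔ D u') := by
    intro u u' hadj hgu
    constructor
    · rintro ⟨k, hk⟩
      cases k with
      | zero =>
        simp only [Function.iterate_zero, id_eq] at hk
        subst hk
        exfalso
        have hux : u' = x := hgu.symm.trans hg
        subst hux
        have hna := ((SimpleGraph.sdiff_adj _ _ _ _).mp hadj).2
        apply hna
        rw [SimpleGraph.fromEdgeSet_adj]
        exact ⟨by rw [Sym2.eq_swap]; exact rfl, hadj.ne⟩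
      | succ k =>
        rw [Function.iterate_succ_apply, hgu] at hk
        exact ⟨k, hk⟩
    · rintro ⟨k, hk⟩
      exact ⟨k + 1, by rw [Function.iterate_succ_apply, hgu]; exact hk⟩
  have hinv : ∀ (u v' : V) (p : (H \ SimpleGraph.fromEdgeSet {s(x, y)}).Walk u v'),
      D v' → D u := by
    intro u v' p
    induction p with
    | nil => exact id
    | cons h' p' ih =>
      intro hd
      rcases hor _ _ ((SimpleGraph.sdiff_adj _ _ _ _).mp h').1 with hg1 | hg1
      · exact (hstep _ _ h' hg1).mpr (ih hd)
      · exact (hstep _ _ h'.symm hg1).mp (ih hd)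
  obtain ⟨p⟩ := hre
  exact hxD (hinv _ _ p ⟨0, rfl⟩)

lemma tree_exchange {H : SimpleGraph V} (hT : H.IsTree) {x y x' y' : V} (hxy : H.Adj x y)
    (hsep : ¬(H.deleteEdges {s(x, y)}).Reachable x' y')
    (hcov : ∀ q, (H.deleteEdges {s(x, y)}).Reachable q x' ∨
      (H.deleteEdges {s(x, y)}).Reachable q y') :
    ((H.deleteEdges {s(x, y)}) ⊔ SimpleGraph.edge x' y').IsTree := by
  classical
  set K := H.deleteEdges {s(x, y)} with hK
  have hxy' : x' ≠ y' := by rintro rfl; exact hsep (SimpleGraph.Reachable.refl _)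
  set g : V → V := fun q => if q = y' then x' else
    (if K.Reachable q x' then treePar H x' q else treePar H y' q) with hg
  set m : V → ℕ := fun q => if K.Reachable q x' then H.dist q x' else H.dist q y' + 1 with hm
  have hside : ∀ q, K.Reachable q x' → q ≠ y' := fun q h hq => hsep ((hq ▸ h).symm)
  have hroot : g x' = x' := by
    simp only [hg]
    rw [if_neg hxy', if_pos (SimpleGraph.Reachable.refl _), treePar_root]
  have hKle : K ≤ H := fun u v h => (SimpleGraph.deleteEdges_adj.mp h).1
  have hdec : ∀ q, q ≠ x' → m (g q) < m q := by
    intro q hq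
    by_cases hqy : q = y'
    · have h1 : g q = x' := by simp only [hg]; rw [if_pos hqy]
      have h2 : m x' = 0 := by
        simp only [hm]
        rw [if_pos (SimpleGraph.Reachable.refl _), SimpleGraph.dist_self]
      have h3 : ¬K.Reachable q x' := fun h => hsep ((hqy ▸ h).symm)
      have h4 : m q = H.dist q y' + 1 := by simp only [hm]; rw [if_neg h3]
      rw [h1, h2, h4]
      omega
    · by_cases hside1 : K.Reachable q x'
      · have hav := avoid hT (ρ := x') hq hside1
        have hsp := treePar_spec hT (ρ := x') hq
        have hreach : K.Reachable (treePar H x' q) x' := hav.2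
        simp only [hg, hm]
        rw [if_neg hqy, if_pos hside1, if_pos hreach, if_pos hside1]
        omega
      · have hcq : K.Reachable q y' := (hcov q).resolve_left hside1
        have hav := avoid hT (ρ := y') hqy hcq
        have hsp := treePar_spec hT (ρ := y') hqy
        have hnreach : ¬K.Reachable (treePar H y' q) x' := by
          intro hr2
          apply hside1
          have hadjK : K.Adj q (treePar H y' q) := by
            rw [hK, SimpleGraph.deleteEdges_adj]
            exact ⟨hsp.1, by simpa using hav.1⟩
          exact hadjK.reachable.trans hr2
        simp only [hg, hm]
        rw [if_neg hqy, if_neg hside1, if_neg hnreach, if_neg hside1]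
        omega
  have hor : ∀ u u', (K ⊔ SimpleGraph.edge x' y').Adj u u' → g u = u' ∨ g u' = u := by
    intro u u' hadj
    rcases (SimpleGraph.sup_adj _ _ _ _).mp hadj with hKadj | hEadj
    · have hH : H.Adj u u' := hKle hKadj
      have hsame : K.Reachable u x' ↔ K.Reachable u' x' :=
        ⟨fun h => hKadj.symm.reachable.trans h, fun h => hKadj.reachable.trans h⟩
      by_cases hu : K.Reachable u x'
      · have hu' := hsame.mp hu
        have huy := hside _ hu
        have huy' := hside _ hu'
        simp only [hg]
        rw [if_neg huy, if_neg huy']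
        rw [if_pos hu, if_pos hu']
        exact treePar_or hT hH
      · have hu' : ¬K.Reachable u' x' := fun h => hu (hsame.mpr h)
        by_cases h1 : u = y'
        · right
          have hne2 : u' ≠ y' := by rw [← h1]; exact hKadj.ne'
          simp only [hg]
          rw [if_neg hne2, if_neg hu']
          have hHy : H.Adj y' u' := h1 ▸ hH
          rcases treePar_or hT (ρ := y') hHy with h2 | h2
          · rw [treePar_root] at h2
            exact absurd h2.symm hne2
          · rw [h2]
            exact h1.symm
        · by_cases h2 : u' = y'
          · left
            have hne1 : u ≠ y' := by rw [← h2]; exact hKadj.ne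
            simp only [hg]
            rw [if_neg hne1, if_neg hu]
            have hHy : H.Adj u y' := h2 ▸ hH
            rcases treePar_or hT (ρ := y') hHy with h3 | h3
            · rw [h3]
              exact h2.symm
            · rw [treePar_root] at h3
              exact absurd h3.symm hne1
          · simp only [hg]
            rw [if_neg h1, if_neg hu, if_neg h2, if_neg hu']
            exact treePar_or hT hH
    · rcases ((SimpleGraph.edge_adj _ _ _ _).mp hEadj).1 with ⟨rfl, rfl⟩ | ⟨rfl, rfl⟩
      · right; simp [hg]
      · left; simp [hg]
  have hacyc := parent_acyclic (K ⊔ SimpleGraph.edge x' y') x' g m hroot hdec hor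
  have hEadj : (K ⊔ SimpleGraph.edge x' y').Adj x' y' := by
    apply (SimpleGraph.sup_adj _ _ _ _).mpr
    right
    rw [SimpleGraph.edge_adj]
    exact ⟨Or.inl ⟨rfl, rfl⟩, hxy'⟩
  have hconn : (K ⊔ SimpleGraph.edge x' y').Connected := by
    rw [SimpleGraph.connected_iff]
    refine ⟨?_, ⟨x'⟩⟩
    intro u v
    have hto : ∀ z, (K ⊔ SimpleGraph.edge x' y').Reachable z x' := by
      intro z
      rcases hcov z with h | h
      · exact h.mono le_sup_left
      · exact (h.mono le_sup_left).trans hEadj.symm.reachable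
    exact (hto u).trans (hto v).symm
  exact ⟨hconn, hacyc⟩


lemma aux_adj {V' : Type*} {r : ℕ} (part : V' → Fin r) (v w : Fin (r - 1) → V') (x y : Fin r) :
    (auxGraph part v w).Adj x y ↔ x ≠ y ∧
      ((∃ i, part (v i) = x ∧ part (w i) = y) ∨ ∃ i, part (v i) = y ∧ part (w i) = x) :=
  SimpleGraph.fromRel_adj _ x y

lemma aux_comm {V' : Type*} {r : ℕ} (part : V' → Fin r) (v w : Fin (r - 1) → V') :
    auxGraph part v w = auxGraph part w v := by
  ext x y
  rw [aux_adj, aux_adj]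
  constructor <;> rintro ⟨hne, ⟨i, h1, h2⟩ | ⟨i, h1, h2⟩⟩
  · exact ⟨hne, Or.inr ⟨i, h2, h1⟩⟩
  · exact ⟨hne, Or.inl ⟨i, h2, h1⟩⟩
  · exact ⟨hne, Or.inr ⟨i, h2, h1⟩⟩
  · exact ⟨hne, Or.inl ⟨i, h2, h1⟩⟩

lemma build_IT {r n : ℕ} {G : SimpleGraph (Fin r × Fin n)} (hnoIT : ¬HasIT G)
    (Vt Wt : Fin (r - 1) → Fin r × Fin n)
    (hT : (auxGraph Prod.fst Vt Wt).IsTree)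
    (hsafe : ∀ j j', j ≠ j' →
      ¬G.Adj (Vt j) (Vt j') ∧ ¬G.Adj (Wt j) (Wt j') ∧ ¬G.Adj (Vt j) (Wt j'))
    (t0 : Fin r × Fin n)
    (hsafe0 : ∀ j,
      (treePar (auxGraph Prod.fst Vt Wt) t0.1 (Vt j).1 = (Wt j).1 → ¬G.Adj t0 (Vt j)) ∧
      (treePar (auxGraph Prod.fst Vt Wt) t0.1 (Wt j).1 = (Vt j).1 → ¬G.Adj t0 (Wt j))) :
    False := by
  classical
  have htok : ∀ q : Fin r, q ≠ t0.1 → ∃ x : Fin r × Fin n, x.1 = q ∧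
      ∃ j, (x = Vt j ∧ (Vt j).1 = q ∧
              treePar (auxGraph Prod.fst Vt Wt) t0.1 q = (Wt j).1) ∨
           (x = Wt j ∧ (Wt j).1 = q ∧
              treePar (auxGraph Prod.fst Vt Wt) t0.1 q = (Vt j).1) := by
    intro q hq
    have hadj := treePar_adj hT (ρ := t0.1) hq
    rw [aux_adj] at hadj
    obtain ⟨hne, hrel⟩ := hadj
    rcases hrel with ⟨j, hj1, hj2⟩ | ⟨j, hj1, hj2⟩
    · exact ⟨Vt j, hj1, j, Or.inl ⟨rfl, hj1, hj2.symm⟩⟩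
    · exact ⟨Wt j, hj2, j, Or.inr ⟨rfl, hj2, hj1.symm⟩⟩
  choose F hF1 hF2 using htok
  set c : Fin r → Fin r × Fin n := fun q => if h : q = t0.1 then t0 else F q h with hc
  have hcfst : ∀ q, (c q).1 = q := by
    intro q
    by_cases h : q = t0.1
    · simp only [hc, dif_pos h]; exact h.symm
    · simp only [hc, dif_neg h]; exact hF1 q h
  have hkey : ∀ q q', q ≠ q' → ¬G.Adj (c q) (c q') := by
    have main : ∀ (q' : Fin r) (h' : q' ≠ t0.1), ¬G.Adj t0 (F q' h') := by
      intro q' h' hadj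
      obtain ⟨j, hj⟩ := hF2 q' h'
      rcases hj with ⟨hx, hq, hpar⟩ | ⟨hx, hq, hpar⟩
      · rw [hx] at hadj
        exact (hsafe0 j).1 (by rw [hq]; exact hpar) hadj
      · rw [hx] at hadj
        exact (hsafe0 j).2 (by rw [hq]; exact hpar) hadj
    intro q q' hne hadj
    by_cases h : q = t0.1 <;> by_cases h' : q' = t0.1
    · exact hne (h.trans h'.symm)
    · have hcq : c q = t0 := by simp only [hc, dif_pos h]
      have hcq' : c q' = F q' h' := by simp only [hc, dif_neg h']
      rw [hcq, hcq'] at hadj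
      exact main q' h' hadj
    · have hcq : c q = F q h := by simp only [hc, dif_neg h]
      have hcq' : c q' = t0 := by simp only [hc, dif_pos h']
      rw [hcq, hcq'] at hadj
      exact main q h hadj.symm
    · have hcq : c q = F q h := by simp only [hc, dif_neg h]
      have hcq' : c q' = F q' h' := by simp only [hc, dif_neg h']
      rw [hcq, hcq'] at hadj
      obtain ⟨j, hj⟩ := hF2 q h
      obtain ⟨j', hj'⟩ := hF2 q' h'
      by_cases hjj : j = j'
      · subst hjj
        have hH : (auxGraph Prod.fst Vt Wt).Adj q q' := by
          rw [aux_adj]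
          rcases hj with ⟨hx, hq, hpar⟩ | ⟨hx, hq, hpar⟩ <;>
            rcases hj' with ⟨hx', hq', hpar'⟩ | ⟨hx', hq', hpar'⟩
          · exact absurd (hq.symm.trans hq') hne
          · exact ⟨hne, Or.inl ⟨j, hq, hq'⟩⟩
          · exact ⟨hne, Or.inr ⟨j, hq', hq⟩⟩
          · exact absurd (hq.symm.trans hq') hne
        apply treePar_not_both hT (ρ := t0.1) hH
        rcases hj with ⟨hx, hq, hpar⟩ | ⟨hx, hq, hpar⟩ <;>
          rcases hj' with ⟨hx', hq', hpar'⟩ | ⟨hx', hq', hpar'⟩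
        · exact absurd (hq.symm.trans hq') hne
        · exact ⟨hpar.trans hq', hpar'.trans hq⟩
        · exact ⟨hpar.trans hq', hpar'.trans hq⟩
        · exact absurd (hq.symm.trans hq') hne
      · rcases hj with ⟨hx, hq, hpar⟩ | ⟨hx, hq, hpar⟩ <;>
          rcases hj' with ⟨hx', hq', hpar'⟩ | ⟨hx', hq', hpar'⟩ <;> rw [hx, hx'] at hadj
        · exact (hsafe j j' hjj).1 hadj
        · exact (hsafe j j' hjj).2.2 hadj
        · exact (hsafe j' j (Ne.symm hjj)).2.2 hadj.symm
        · exact (hsafe j j' hjj).2.1 hadj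
  apply hnoIT
  refine ⟨fun q => (c q).2, ?_⟩
  intro i j hij hadj
  have h1 : (i, (c i).2) = c i := Prod.ext (hcfst i).symm rfl
  have h2 : (j, (c j).2) = c j := Prod.ext (hcfst j).symm rfl
  rw [h1, h2] at hadj
  exact hkey i j hij hadj

lemma master {r n : ℕ} {G : SimpleGraph (Fin r × Fin n)}
    (hnoIT : ¬HasIT G) (a b : Fin (r - 1) → Fin r × Fin n)
    (h1 : ∀ i, G.Adj (a i) (b i))
    (h2 : ∀ i, a i ≠ b i)
    (h4 : ∀ i j, ∀ x y, (x = a i ∨ x = b i) → (y = a j ∨ y = b j) → G.Adj x y →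
      i = j ∧ ((x = a i ∧ y = b i) ∨ (x = b i ∧ y = a i)))
    (h6 : ∀ i, (a i).1 ≠ (b i).1)
    (h7 : ∀ i j, i ≠ j → ¬(((a i).1 = (a j).1 ∧ (b i).1 = (b j).1) ∨
      ((a i).1 = (b j).1 ∧ (b i).1 = (a j).1)))
    (h8 : (auxGraph Prod.fst a b).IsTree) :
    ∀ (k : ℕ) (v w : Fin (r - 1) → Fin r × Fin n),
      (∀ i, (∀ j, G.Adj (v i) (a j) ↔ j = i) ∧ (∀ j, ¬ G.Adj (v i) (b j))) →
      (∀ i, (∀ j, G.Adj (w i) (b j) ↔ j = i) ∧ (∀ j, ¬ G.Adj (w i) (a j))) →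
      (∀ i j, i ≠ j → ¬ G.Adj (v i) (v j) ∧ ¬ G.Adj (w i) (w j) ∧ ¬ G.Adj (v i) (w j)) →
      (Finset.univ.filter (fun i => ¬(v i = b i ∧ w i = a i))).card ≤ k →
      (∀ i, (v i).1 ≠ (w i).1) ∧
      (∀ i j, i ≠ j → ¬(((v i).1 = (v j).1 ∧ (w i).1 = (w j).1) ∨
        ((v i).1 = (w j).1 ∧ (w i).1 = (v j).1))) ∧
      (auxGraph Prod.fst v w).IsTree := by
  intro k
  induction k with
  | zero =>
    intro v w hv hw hind hcard
    have hall : ∀ i, v i = b i ∧ w i = a i := by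
      intro i
      by_contra hcon
      have hmem : i ∈ Finset.univ.filter (fun i => ¬(v i = b i ∧ w i = a i)) :=
        Finset.mem_filter.mpr ⟨Finset.mem_univ i, hcon⟩
      have := Finset.card_pos.mpr ⟨i, hmem⟩
      omega
    have hvb : v = b := funext fun i => (hall i).1
    have hwa : w = a := funext fun i => (hall i).2
    subst hvb; subst hwa
    refine ⟨fun i => (h6 i).symm, ?_, ?_⟩
    · intro i j hij
      rintro (⟨e1, e2⟩ | ⟨e1, e2⟩)
      · exact h7 i j hij (Or.inl ⟨e2, e1⟩)
      · exact h7 i j hij (Or.inr ⟨e2, e1⟩)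
    · rw [aux_comm]
      exact h8
  | succ k ih =>
    intro v w hv hw hind hcard
    by_cases h0 : (Finset.univ.filter (fun i => ¬(v i = b i ∧ w i = a i))).card = 0
    · exact ih v w hv hw hind (by omega)
    obtain ⟨i0, hi0⟩ := Finset.card_pos.mp (Nat.pos_of_ne_zero h0)
    set v' := Function.update v i0 (b i0) with hv'def
    set w' := Function.update w i0 (a i0) with hw'def
    have hvi0 : v' i0 = b i0 := Function.update_self _ _ _
    have hwi0 : w' i0 = a i0 := Function.update_self _ _ _
    have hvne : ∀ i, i ≠ i0 → v' i = v i := fun i hi => Function.update_of_ne hi _ _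
    have hwne : ∀ i, i ≠ i0 → w' i = w i := fun i hi => Function.update_of_ne hi _ _
    have hv2 : ∀ i, (∀ j, G.Adj (v' i) (a j) ↔ j = i) ∧ (∀ j, ¬ G.Adj (v' i) (b j)) := by
      intro i
      by_cases hii : i = i0
      · subst hii
        rw [hvi0]
        constructor
        · intro j
          constructor
          · intro hadj
            exact ((h4 i j _ _ (Or.inr rfl) (Or.inl rfl) hadj).1).symm
          · rintro rfl
            exact (h1 _).symm
        · intro j hadj
          obtain ⟨heq, hcase⟩ := h4 i j _ _ (Or.inr rfl) (Or.inr rfl) hadj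
          subst heq
          rcases hcase with ⟨e1, -⟩ | ⟨-, e2⟩
          · exact h2 i e1.symm
          · exact h2 i e2.symm
      · rw [hvne i hii]
        exact hv i
    have hw2 : ∀ i, (∀ j, G.Adj (w' i) (b j) ↔ j = i) ∧ (∀ j, ¬ G.Adj (w' i) (a j)) := by
      intro i
      by_cases hii : i = i0
      · subst hii
        rw [hwi0]
        constructor
        · intro j
          constructor
          · intro hadj
            exact ((h4 i j _ _ (Or.inl rfl) (Or.inr rfl) hadj).1).symm
          · rintro rfl
            exact h1 _
        · intro j hadj
          obtain ⟨heq, hcase⟩ := h4 i j _ _ (Or.inl rfl) (Or.inl rfl) hadj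
          subst heq
          rcases hcase with ⟨-, e2⟩ | ⟨e1, -⟩
          · exact h2 i e2
          · exact h2 i e1
      · rw [hwne i hii]
        exact hw i
    have hind2 : ∀ i j, i ≠ j →
        ¬ G.Adj (v' i) (v' j) ∧ ¬ G.Adj (w' i) (w' j) ∧ ¬ G.Adj (v' i) (w' j) := by
      intro i j hij
      by_cases hii : i = i0 <;> by_cases hjj : j = i0
      · exact absurd (hii.trans hjj.symm) hij
      · subst hii
        rw [hvi0, hwi0, hvne j hjj, hwne j hjj]
        refine ⟨fun hadj => (hv j).2 i hadj.symm, fun hadj => (hw j).2 i hadj.symm,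
          fun hadj => hjj (((hw j).1 i).mp hadj.symm).symm⟩
      · subst hjj
        rw [hvi0, hwi0, hvne i hii, hwne i hii]
        refine ⟨fun hadj => (hv i).2 j hadj, fun hadj => (hw i).2 j hadj,
          fun hadj => hii (((hv i).1 j).mp hadj).symm⟩
      · rw [hvne i hii, hwne i hii, hvne j hjj, hwne j hjj]
        exact hind i j hij
    have hcard2 : (Finset.univ.filter (fun i => ¬(v' i = b i ∧ w' i = a i))).card ≤ k := by
      have hsub : Finset.univ.filter (fun i => ¬(v' i = b i ∧ w' i = a i)) ⊆
          (Finset.univ.filter (fun i => ¬(v i = b i ∧ w i = a i))).erase i0 := by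
        intro i hi
        simp only [Finset.mem_filter, Finset.mem_univ, true_and] at hi
        have hii : i ≠ i0 := by
          rintro rfl
          exact hi ⟨hvi0, hwi0⟩
        rw [Finset.mem_erase]
        refine ⟨hii, ?_⟩
        simp only [Finset.mem_filter, Finset.mem_univ, true_and]
        rwa [hvne i hii, hwne i hii] at hi
      have hc1 := Finset.card_le_card hsub
      rw [Finset.card_erase_of_mem hi0] at hc1
      have hpos := Finset.card_pos.mpr ⟨i0, hi0⟩
      omega
    obtain ⟨nl2, np2, hT2⟩ := ih v' w' hv2 hw2 hind2 hcard2
    have hadjBA : (auxGraph Prod.fst v' w').Adj (b i0).1 (a i0).1 := by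
      rw [aux_adj]
      exact ⟨Ne.symm (h6 i0), Or.inl ⟨i0, by rw [hvi0], by rw [hwi0]⟩⟩
    rcases treePar_or hT2 (ρ := (w i0).1) hadjBA with hPB | hPA
    swap
    · exfalso
      apply build_IT hnoIT v' w' hT2 hind2 (w i0)
      intro j
      by_cases hji : j = i0
      · subst hji
        constructor
        · intro hg
          rw [hvi0, hwi0] at hg
          exact absurd ⟨hg, hPA⟩ (treePar_not_both hT2 hadjBA)
        · intro _
          rw [hwi0]
          exact (hw j).2 j
      · constructor
        · intro _ hadj
          rw [hvne j hji] at hadj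
          exact (hind j i0 hji).2.2 hadj.symm
        · intro _ hadj
          rw [hwne j hji] at hadj
          exact (hind i0 j (Ne.symm hji)).2.1 hadj
    rcases treePar_or hT2 (ρ := (v i0).1) hadjBA with hQB | hQA
    · exfalso
      apply build_IT hnoIT v' w' hT2 hind2 (v i0)
      intro j
      by_cases hji : j = i0
      · subst hji
        constructor
        · intro _
          rw [hvi0]
          exact (hv j).2 j
        · intro hg
          rw [hvi0, hwi0] at hg
          exact absurd ⟨hQB, hg⟩ (treePar_not_both hT2 hadjBA)
      · constructor
        · intro _ hadj
          rw [hvne j hji] at hadj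
          exact (hind i0 j (Ne.symm hji)).1 hadj
        · intro _ hadj
          rw [hwne j hji] at hadj
          exact (hind i0 j (Ne.symm hji)).2.2 hadj
    · -- exchange case
      have hγδ : (v i0).1 ≠ (w i0).1 := by
        intro he
        rw [← he] at hPB
        exact treePar_not_both hT2 hadjBA ⟨hPB, hQA⟩
      have hβδ : (b i0).1 ≠ (w i0).1 := by
        intro he
        rw [he, treePar_root] at hPB
        exact h6 i0 ((he.trans hPB).symm)
      have hαγ : (a i0).1 ≠ (v i0).1 := by
        intro he
        rw [he, treePar_root] at hQA
        exact h6 i0 (he.trans hQA)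
      have hs1 := (treePar_spec hT2 (ρ := (w i0).1) hβδ).2
      rw [hPB] at hs1
      have RA := reach_del hT2 hadjBA.symm hPB (a i0).1 (by omega)
      have hs2 := (treePar_spec hT2 (ρ := (v i0).1) hαγ).2
      rw [hQA] at hs2
      have RB := reach_del hT2 hadjBA hQA (b i0).1 (by omega)
      have RB' : ((auxGraph Prod.fst v' w').deleteEdges
          {s((a i0).1, (b i0).1)}).Reachable (b i0).1 (v i0).1 := by
        rwa [Sym2.eq_swap] at RB
      have hbr : ¬((auxGraph Prod.fst v' w').deleteEdges
          {s((a i0).1, (b i0).1)}).Reachable (a i0).1 (b i0).1 := by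
        have hb := (SimpleGraph.isAcyclic_iff_forall_adj_isBridge.mp hT2.2) hadjBA.symm
        rw [SimpleGraph.isBridge_iff] at hb
        exact hb
      have hsep : ¬((auxGraph Prod.fst v' w').deleteEdges
          {s((a i0).1, (b i0).1)}).Reachable (v i0).1 (w i0).1 := by
        intro h
        exact hbr ((RA.trans h.symm).trans RB'.symm)
      have hcov := cover_disj hT2 hadjBA.symm hQA RA
      have hEx := tree_exchange hT2 hadjBA.symm hsep hcov
      have hpar0 : ∀ j, j ≠ i0 → ¬(((v i0).1 = (v j).1 ∧ (w i0).1 = (w j).1) ∨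
          ((v i0).1 = (w j).1 ∧ (w i0).1 = (v j).1)) := by
        intro j hj hcon
        apply hsep
        rcases hcon with ⟨e1, e2⟩ | ⟨e1, e2⟩
        · have hH2 : (auxGraph Prod.fst v' w').Adj (v i0).1 (w i0).1 := by
            rw [aux_adj]
            exact ⟨hγδ, Or.inl ⟨j, by rw [hvne j hj]; exact e1.symm,
              by rw [hwne j hj]; exact e2.symm⟩⟩
          have hneS : s((v i0).1, (w i0).1) ≠ s((a i0).1, (b i0).1) := by
            intro hS
            rw [Sym2.eq_iff] at hS
            rcases hS with ⟨g1, g2⟩ | ⟨g1, g2⟩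
            · exact hαγ g1.symm
            · exact np2 i0 j (fun hh => hj hh.symm) (Or.inl
                ⟨by rw [hvi0, hvne j hj, ← g1]; exact e1,
                 by rw [hwi0, hwne j hj, ← g2]; exact e2⟩)
          exact (SimpleGraph.deleteEdges_adj.mpr ⟨hH2, by simpa using hneS⟩).reachable
        · have hH2 : (auxGraph Prod.fst v' w').Adj (w i0).1 (v i0).1 := by
            rw [aux_adj]
            exact ⟨Ne.symm hγδ, Or.inl ⟨j, by rw [hvne j hj]; exact e2.symm,
              by rw [hwne j hj]; exact e1.symm⟩⟩
          have hneS : s((w i0).1, (v i0).1) ≠ s((a i0).1, (b i0).1) := by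
            intro hS
            rw [Sym2.eq_iff] at hS
            rcases hS with ⟨g1, g2⟩ | ⟨g1, g2⟩
            · exact np2 i0 j (fun hh => hj hh.symm) (Or.inr
                ⟨by rw [hvi0, hwne j hj, ← g2]; exact e1,
                 by rw [hwi0, hvne j hj, ← g1]; exact e2⟩)
            · exact hαγ g2.symm
          exact ((SimpleGraph.deleteEdges_adj.mpr ⟨hH2, by simpa using hneS⟩).reachable).symm
      have hEq : auxGraph Prod.fst v w =
          ((auxGraph Prod.fst v' w').deleteEdges {s((a i0).1, (b i0).1)}) ⊔
            SimpleGraph.edge (v i0).1 (w i0).1 := by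
        ext x0 y0
        constructor
        · intro hM
          rw [aux_adj] at hM
          obtain ⟨hne, hrel⟩ := hM
          have key : ∀ x1 y1 : Fin r, x1 ≠ y1 → (∃ j, (v j).1 = x1 ∧ (w j).1 = y1) →
              (((auxGraph Prod.fst v' w').deleteEdges {s((a i0).1, (b i0).1)}) ⊔
                SimpleGraph.edge (v i0).1 (w i0).1).Adj x1 y1 := by
            rintro x1 y1 hne1 ⟨j, hj1, hj2⟩
            by_cases hji : j = i0
            · subst hji
              apply (SimpleGraph.sup_adj _ _ _ _).mpr
              right
              rw [SimpleGraph.edge_adj]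
              exact ⟨Or.inl ⟨hj1.symm, hj2.symm⟩, hne1⟩
            · apply (SimpleGraph.sup_adj _ _ _ _).mpr
              left
              rw [SimpleGraph.deleteEdges_adj]
              refine ⟨?_, ?_⟩
              · rw [aux_adj]
                exact ⟨hne1, Or.inl ⟨j, by rw [hvne j hji]; exact hj1,
                  by rw [hwne j hji]; exact hj2⟩⟩
              · simp only [Set.mem_singleton_iff]
                intro hS
                rw [Sym2.eq_iff] at hS
                rcases hS with ⟨g1, g2⟩ | ⟨g1, g2⟩
                · exact np2 i0 j (fun hh => hji hh.symm) (Or.inr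
                    ⟨by rw [hvi0, hwne j hji, ← g2]; exact hj2.symm,
                     by rw [hwi0, hvne j hji, ← g1]; exact hj1.symm⟩)
                · exact np2 i0 j (fun hh => hji hh.symm) (Or.inl
                    ⟨by rw [hvi0, hvne j hji, ← g1]; exact hj1.symm,
                     by rw [hwi0, hwne j hji, ← g2]; exact hj2.symm⟩)
          rcases hrel with h | h
          · exact key x0 y0 hne h
          · exact (key y0 x0 (Ne.symm hne) h).symm
        · intro hRHS
          rcases (SimpleGraph.sup_adj _ _ _ _).mp hRHS with hK | hE
          · rw [SimpleGraph.deleteEdges_adj] at hK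
            obtain ⟨hH2, hneS⟩ := hK
            rw [aux_adj] at hH2
            obtain ⟨hne, hrel⟩ := hH2
            rw [aux_adj]
            refine ⟨hne, ?_⟩
            rcases hrel with ⟨j, hj1, hj2⟩ | ⟨j, hj1, hj2⟩
            · by_cases hji : j = i0
              · subst hji
                rw [hvi0] at hj1
                rw [hwi0] at hj2
                exfalso
                apply hneS
                simp only [Set.mem_singleton_iff]
                rw [Sym2.eq_iff]
                exact Or.inr ⟨hj1.symm, hj2.symm⟩
              · rw [hvne j hji] at hj1
                rw [hwne j hji] at hj2
                exact Or.inl ⟨j, hj1, hj2⟩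
            · by_cases hji : j = i0
              · subst hji
                rw [hvi0] at hj1
                rw [hwi0] at hj2
                exfalso
                apply hneS
                simp only [Set.mem_singleton_iff]
                rw [Sym2.eq_iff]
                exact Or.inl ⟨hj2.symm, hj1.symm⟩
              · rw [hvne j hji] at hj1
                rw [hwne j hji] at hj2
                exact Or.inr ⟨j, hj1, hj2⟩
          · rw [SimpleGraph.edge_adj] at hE
            obtain ⟨hcase, hne⟩ := hE
            rw [aux_adj]
            rcases hcase with ⟨g1, g2⟩ | ⟨g1, g2⟩
            · exact ⟨hne, Or.inl ⟨i0, g1.symm, g2.symm⟩⟩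
            · exact ⟨hne, Or.inr ⟨i0, g2.symm, g1.symm⟩⟩
      refine ⟨?_, ?_, ?_⟩
      · intro i
        by_cases hii : i = i0
        · subst hii; exact hγδ
        · have := nl2 i
          rwa [hvne i hii, hwne i hii] at this
      · intro i j hij
        by_cases hii : i = i0
        · subst hii
          exact hpar0 j (Ne.symm hij)
        · by_cases hjj : j = i0
          · subst hjj
            intro hcon
            apply hpar0 i hii
            rcases hcon with ⟨e1, e2⟩ | ⟨e1, e2⟩
            · exact Or.inl ⟨e1.symm, e2.symm⟩
            · exact Or.inr ⟨e2.symm, e1.symm⟩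
          · have := np2 i j hij
            rwa [hvne i hii, hwne i hii, hvne j hjj, hwne j hjj] at this
      · rw [hEq]
        exact hEx

end IMCAux

theorem stmt15 (r n : ℕ) (hr : 2 ≤ r) (G : SimpleGraph (Fin r × Fin n))
    (hpart : IsPartite G) (hnoIT : ¬ HasIT G)
    (a b : Fin (r - 1) → Fin r × Fin n) (himc : IsIMC G Prod.fst a b)
    (v w : Fin (r - 1) → Fin r × Fin n)
    -- v i ∈ A_{a i} : the only neighbor of v i inside I = {a j, b j} is a i
    (hv : ∀ i, (∀ j, G.Adj (v i) (a j) ↔ j = i) ∧ (∀ j, ¬ G.Adj (v i) (b j)))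
    -- w i ∈ A_{b i} : the only neighbor of w i inside I is b i
    (hw : ∀ i, (∀ j, G.Adj (w i) (b j) ↔ j = i) ∧ (∀ j, ¬ G.Adj (w i) (a j)))
    -- {v i, w i} is independent in G - E where E = {v i w i : i}
    (hind : ∀ i j, i ≠ j →
      ¬ G.Adj (v i) (v j) ∧ ¬ G.Adj (w i) (w j) ∧ ¬ G.Adj (v i) (w j)) :
    IsIMC G Prod.fst v w := by
  obtain ⟨hm1, hm2, hm3, hm4, hm5, hm6, hm7, hm8⟩ := himc
  obtain ⟨nl, np, hT⟩ := IMCAux.master hnoIT a b hm1 hm2 hm4 hm6 hm7 hm8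
    (Finset.univ.filter (fun i => ¬(v i = b i ∧ w i = a i))).card v w hv hw hind le_rfl
  have c1 : ∀ i, G.Adj (v i) (w i) := by
    intro i
    by_contra hvw
    apply IMCAux.build_IT hnoIT v w hT hind (w i)
    intro j
    by_cases hji : j = i
    · subst hji
      refine ⟨fun _ hadj => hvw hadj.symm, fun hg => ?_⟩
      rw [IMCAux.treePar_root] at hg
      exact absurd hg.symm (nl j)
    · exact ⟨fun _ hadj => (hind j i hji).2.2 hadj.symm,
        fun _ hadj => (hind i j (Ne.symm hji)).2.1 hadj⟩
  have c3 : ∀ i j, i ≠ j → v i ≠ v j ∧ w i ≠ w j ∧ v i ≠ w j := by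
    intro i j hij
    refine ⟨?_, ?_, ?_⟩
    · intro he
      have hA : G.Adj (v i) (a i) := ((hv i).1 i).mpr rfl
      rw [he] at hA
      exact hij (((hv j).1 i).mp hA)
    · intro he
      have hA : G.Adj (w i) (b i) := ((hw i).1 i).mpr rfl
      rw [he] at hA
      exact hij (((hw j).1 i).mp hA)
    · intro he
      have hA : G.Adj (v i) (a i) := ((hv i).1 i).mpr rfl
      rw [he] at hA
      exact (hw j).2 i hA
  have c4 : ∀ i j, ∀ x y, (x = v i ∨ x = w i) → (y = v j ∨ y = w j) → G.Adj x y →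
      i = j ∧ ((x = v i ∧ y = w i) ∨ (x = w i ∧ y = v i)) := by
    intro i j x y hx hy hadj
    have hij : i = j := by
      by_contra hij
      rcases hx with rfl | rfl <;> rcases hy with rfl | rfl
      · exact (hind i j hij).1 hadj
      · exact (hind i j hij).2.2 hadj
      · exact (hind j i (Ne.symm hij)).2.2 hadj.symm
      · exact (hind i j hij).2.1 hadj
    subst hij
    refine ⟨rfl, ?_⟩
    rcases hx with rfl | rfl <;> rcases hy with rfl | rfl
    · exact absurd rfl hadj.ne
    · exact Or.inl ⟨rfl, rfl⟩
    · exact Or.inr ⟨rfl, rfl⟩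
    · exact absurd rfl hadj.ne
  have c5 : ∀ q : Fin r, ∃ i, (v i).1 = q ∨ (w i).1 = q := by
    intro q
    by_contra hnone
    push_neg at hnone
    have hcard : 1 < Fintype.card (Fin r) := by simp; omega
    obtain ⟨q', hq'⟩ := Fintype.exists_ne_of_one_lt_card hcard q
    obtain ⟨u, hu, -⟩ := IMCAux.exists_closer (hT.isConnected q q') (Ne.symm hq')
    rw [IMCAux.aux_adj] at hu
    obtain ⟨-, hrel⟩ := hu
    rcases hrel with ⟨i, hi1, -⟩ | ⟨i, -, hi2⟩
    · exact (hnone i).1 hi1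
    · exact (hnone i).2 hi2
  exact ⟨c1, fun i => (c1 i).ne, c3, c4, c5, nl, np, hT⟩
end

section
/- For all integers r ≥ 2 and s ≥ 2 there exists n₀ such that every r-uniform hypergraph on n ≥ n₀ vertices with at least n^{r − s^{1−r}} edges contains a copy of K_r^r(s); that is, there exist pairwise disjoint s-element vertex sets S_1, …, S_r such that every r-element set {x_1, …, x_r} with x_i ∈ S_i for each i is an edge of the hypergraph. -/
open Finset

-- Step A: fiber count
lemma stepA {n k : ℕ} (T : Finset (Fin (k+1+1) → Fin n)) :
    T.card = ∑ y : Fin (k+1) → Fin n,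
      (univ.filter (fun v : Fin n => Fin.snoc y v ∈ T)).card := by
  classical
  rw [Finset.card_eq_sum_card_fiberwise
    (f := fun x => Fin.init x) (t := univ) (fun x _ => mem_univ _)]
  refine Finset.sum_congr rfl fun y _ => ?_
  refine Finset.card_bij' (fun x _ => x (Fin.last (k+1))) (fun v _ => Fin.snoc y v)
    ?_ ?_ ?_ ?_
  · intro x hx
    simp only [mem_filter, mem_univ, true_and] at hx ⊢
    rw [← hx.2, Fin.snoc_init_self]
    exact hx.1
  · intro v hv
    simp only [mem_filter, mem_univ, true_and] at hv ⊢
    exact ⟨hv, Fin.init_snoc _ _⟩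
  · intro x hx
    simp only [mem_filter, mem_univ, true_and] at hx
    show Fin.snoc y (x (Fin.last (k+1))) = x
    rw [← hx.2]
    exact Fin.snoc_init_self x
  · intro v hv
    simp [Fin.snoc_last]

-- Step B: double counting
lemma stepB {n k s : ℕ} (T : Finset (Fin (k+1+1) → Fin n)) :
    ∑ y : Fin (k+1) → Fin n,
      ((univ.filter (fun v : Fin n => Fin.snoc y v ∈ T)).card).choose s
    = ∑ Q ∈ (univ : Finset (Fin n)).powersetCard s,
      (univ.filter (fun y : Fin (k+1) → Fin n =>
        ∀ v ∈ Q, Fin.snoc y v ∈ T)).card := by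
  classical
  have h1 : ∀ y : Fin (k+1) → Fin n,
      ((univ.filter (fun v : Fin n => Fin.snoc y v ∈ T)).card).choose s
      = ∑ Q ∈ (univ : Finset (Fin n)).powersetCard s,
          (if Q ⊆ univ.filter (fun v : Fin n => Fin.snoc y v ∈ T) then 1 else 0) := by
    intro y
    rw [← Finset.card_powersetCard, ← Finset.card_filter]
    congr 1
    ext Q
    simp only [Finset.mem_powersetCard, Finset.mem_filter, Finset.subset_univ, true_and]
    tauto
  simp only [h1]
  rw [Finset.sum_comm]
  refine Finset.sum_congr rfl fun Q _ => ?_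
  rw [Finset.card_filter]
  refine Finset.sum_congr rfl fun y _ => ?_
  congr 1
  simp only [eq_iff_iff, Finset.subset_iff, mem_filter, mem_univ, true_and]

-- The combinatorial core: existence of a good Q
lemma core {n k s : ℕ} (hs : 1 ≤ s) (hsn : s ≤ n)
    (T : Finset (Fin (k+1+1) → Fin n))
    (hT : (s:ℝ) * (n:ℝ)^(k+1) ≤ (T.card : ℝ)) :
    ∃ Q : Finset (Fin n), Q.card = s ∧
      ((T.card:ℝ) - s * (n:ℝ)^(k+1))^s ≤ ((n:ℝ)^(k+1))^(s-1) * (n:ℝ)^s *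
        ((univ.filter (fun y : Fin (k+1) → Fin n =>
          ∀ v ∈ Q, Fin.snoc y v ∈ T)).card : ℝ) := by
  classical
  set d : (Fin (k+1) → Fin n) → ℕ :=
    fun y => (univ.filter (fun v : Fin n => Fin.snoc y v ∈ T)).card with hd
  set N : ℕ := n^(k+1) with hN
  have hNcard : (univ : Finset (Fin (k+1) → Fin n)).card = N := by
    simp [hN, Finset.card_univ]
  -- choose Q maximizing
  have hpne : ((univ : Finset (Fin n)).powersetCard s).Nonempty := by
    rw [Finset.powersetCard_nonempty]
    simpa using hsn
  have hmax := Finset.exists_max_image ((univ : Finset (Fin n)).powersetCard s)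
    (fun Q : Finset (Fin n) => (univ.filter (fun y : Fin (k+1) → Fin n =>
      ∀ v ∈ Q, Fin.snoc y v ∈ T)).card) hpne
  obtain ⟨Q, hQmem, hQmax⟩ := hmax
  have hQcard : Q.card = s := (Finset.mem_powersetCard.1 hQmem).2
  refine ⟨Q, hQcard, ?_⟩
  set GQ : ℕ := (univ.filter (fun y : Fin (k+1) → Fin n =>
    ∀ v ∈ Q, Fin.snoc y v ∈ T)).card with hGQ
  -- W bound
  have hW : ∑ y : Fin (k+1) → Fin n, (d y).choose s ≤ n.choose s * GQ := by
    rw [stepB]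
    calc ∑ Q' ∈ (univ : Finset (Fin n)).powersetCard s,
        (univ.filter (fun y : Fin (k+1) → Fin n =>
          ∀ v ∈ Q', Fin.snoc y v ∈ T)).card
        ≤ ((univ : Finset (Fin n)).powersetCard s).card • GQ :=
          Finset.sum_le_card_nsmul _ _ _ (fun Q' hQ' => hQmax Q' hQ')
      _ = n.choose s * GQ := by
          rw [Finset.card_powersetCard, Finset.card_univ, Fintype.card_fin, smul_eq_mul]
  -- pointwise bound
  have hgw : ∀ y, (d y - s)^s ≤ s.factorial * (d y).choose s := by
    intro y
    calc (d y - s)^s ≤ (d y + 1 - s)^s :=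
          Nat.pow_le_pow_left (by omega) s
      _ ≤ (d y).descFactorial s := Nat.pow_sub_le_descFactorial _ _
      _ = s.factorial * (d y).choose s := Nat.descFactorial_eq_factorial_mul_choose _ _
  -- real chain
  have hsumd : ∑ y : Fin (k+1) → Fin n, (d y : ℝ) = (T.card : ℝ) := by
    rw [stepA]
    push_cast
    rfl
  have hsumg : (T.card : ℝ) - s * (N:ℝ) ≤ ∑ y : Fin (k+1) → Fin n, ((d y - s : ℕ) : ℝ) := by
    have : ∀ y : Fin (k+1) → Fin n, (d y : ℝ) - s ≤ ((d y - s : ℕ) : ℝ) := by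
      intro y
      rcases le_total s (d y) with h | h
      · rw [Nat.cast_sub h]
      · have : d y - s = 0 := by omega
        rw [this]
        push_cast
        have : (d y : ℝ) ≤ s := by exact_mod_cast h
        linarith
    calc (T.card : ℝ) - s * N = ∑ y : Fin (k+1) → Fin n, ((d y : ℝ) - s) := by
          rw [Finset.sum_sub_distrib, hsumd, Finset.sum_const, hNcard, hN]
          push_cast
          ring
      _ ≤ _ := Finset.sum_le_sum (fun y _ => this y)
  have hNpos : (0:ℝ) < (N:ℝ) := by
    have : 0 < n := by omega
    have : 0 < N := Nat.pow_pos this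
    exact_mod_cast this
  -- Jensen
  obtain ⟨s', rfl⟩ : ∃ s', s = s' + 1 := ⟨s - 1, by omega⟩
  have hJ : (∑ y : Fin (k+1) → Fin n, ((d y - (s'+1) : ℕ) : ℝ))^(s'+1) / (N:ℝ)^s'
      ≤ ∑ y : Fin (k+1) → Fin n, ((d y - (s'+1) : ℕ) : ℝ)^(s'+1) := by
    have := pow_sum_div_card_le_sum_pow
      (f := fun y : Fin (k+1) → Fin n => ((d y - (s'+1) : ℕ) : ℝ))
      (s := univ) (fun i _ => by positivity) s'
    rwa [hNcard] at this
  have hTc : (0:ℝ) ≤ (T.card : ℝ) - ((s':ℝ)+1) * (N:ℝ) := by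
    have h1 : ((s'+1:ℕ):ℝ) * ((n:ℝ)^(k+1)) ≤ (T.card:ℝ) := hT
    rw [hN]
    push_cast at h1 ⊢
    linarith
  push_cast at hsumg hT ⊢
  calc ((T.card:ℝ) - ((s':ℝ)+1) * (n:ℝ)^(k+1))^(s'+1)
      ≤ (∑ y : Fin (k+1) → Fin n, ((d y - (s'+1) : ℕ) : ℝ))^(s'+1) := by
        apply pow_le_pow_left₀
        · rw [hN] at hTc; push_cast at hTc; exact hTc
        · rw [hN] at hsumg; push_cast at hsumg; linarith
    _ ≤ (N:ℝ)^s' * ∑ y : Fin (k+1) → Fin n, ((d y - (s'+1) : ℕ) : ℝ)^(s'+1) := by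
        exact (div_le_iff₀' (by positivity)).1 hJ
    _ ≤ (N:ℝ)^s' * ((s'+1).factorial * ∑ y : Fin (k+1) → Fin n, ((d y).choose (s'+1) : ℝ)) := by
        apply mul_le_mul_of_nonneg_left _ (le_of_lt (by positivity))
        rw [Finset.mul_sum]
        apply Finset.sum_le_sum
        intro y _
        have := hgw y
        calc ((d y - (s'+1) : ℕ) : ℝ)^(s'+1) = (((d y - (s'+1))^(s'+1) : ℕ) : ℝ) := by push_cast; ring
          _ ≤ (((s'+1).factorial * (d y).choose (s'+1) : ℕ) : ℝ) := by exact_mod_cast this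
          _ = _ := by push_cast; ring
    _ ≤ (N:ℝ)^s' * ((s'+1).factorial * (n.choose (s'+1) * GQ)) := by
        apply mul_le_mul_of_nonneg_left _ (le_of_lt (by positivity))
        apply mul_le_mul_of_nonneg_left _ (by positivity)
        calc ∑ y : Fin (k+1) → Fin n, ((d y).choose (s'+1) : ℝ)
            = ((∑ y : Fin (k+1) → Fin n, (d y).choose (s'+1) : ℕ) : ℝ) := by push_cast; rfl
          _ ≤ ((n.choose (s'+1) * GQ : ℕ) : ℝ) := by exact_mod_cast hW
          _ = _ := by push_cast; ring
    _ ≤ ((n:ℝ)^(k+1))^(s'+1-1) * (n:ℝ)^(s'+1) * (GQ : ℝ) := by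
        have hdf : ((s'+1).factorial * n.choose (s'+1) : ℕ) ≤ n^(s'+1) := by
          rw [← Nat.descFactorial_eq_factorial_mul_choose]
          exact Nat.descFactorial_le_pow _ _
        have hdf' : ((s'+1).factorial : ℝ) * (n.choose (s'+1) : ℝ) ≤ (n:ℝ)^(s'+1) := by
          exact_mod_cast hdf
        have hGQ0 : (0:ℝ) ≤ (GQ:ℝ) := by positivity
        have hNr : ((N:ℝ))^s' = ((n:ℝ)^(k+1))^(s'+1-1) := by
          rw [hN]; push_cast; ring_nf
        rw [← hNr]
        calc (N:ℝ)^s' * ((s'+1).factorial * (n.choose (s'+1) * GQ))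
            = (N:ℝ)^s' * (((s'+1).factorial * (n.choose (s'+1):ℝ)) * GQ) := by ring
          _ ≤ (N:ℝ)^s' * ((n:ℝ)^(s'+1) * GQ) := by
              apply mul_le_mul_of_nonneg_left _ (le_of_lt (by positivity))
              exact mul_le_mul_of_nonneg_right hdf' hGQ0
          _ = (N:ℝ)^s' * (n:ℝ)^(s'+1) * (GQ : ℝ) := by ring

lemma pow32_ge_self {s : ℕ} (hs : 2 ≤ s) : (s : ℝ) ≤ (3/2)^s := by
  induction s, hs using Nat.le_induction with
  | base => norm_num
  | succ m hm ih =>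
    have h1 : (2:ℝ) ≤ m := by exact_mod_cast hm
    push_cast
    calc (m:ℝ) + 1 ≤ (3/2) * m := by linarith
      _ ≤ (3/2) * (3/2)^m := by nlinarith
      _ = (3/2)^(m+1) := by ring

lemma pow32_ge_two {s : ℕ} (hs : 2 ≤ s) : (2 : ℝ) ≤ (3/2)^s := by
  calc (2:ℝ) ≤ (3/2)^2 := by norm_num
    _ ≤ (3/2)^s := by
      apply pow_le_pow_right₀ (by norm_num) hs

-- Main induction lemma
lemma boxL (s : ℕ) (hs : 2 ≤ s) :
    ∀ (k : ℕ) (c : ℝ), 0 < c → (k = 0 → (s:ℝ) ≤ c) → (k ≠ 0 → (2:ℝ) ≤ c) →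
    ∃ n₀ : ℕ, s ≤ n₀ ∧ ∀ n, n₀ ≤ n → ∀ T : Finset (Fin (k+1) → Fin n),
      c * (n:ℝ) ^ ((k+1 : ℝ) - (s:ℝ) ^ (-(k:ℝ))) ≤ (T.card : ℝ) →
      ∃ S : Fin (k+1) → Finset (Fin n),
        (∀ i, (S i).card = s) ∧ (∀ x, (∀ i, x i ∈ S i) → x ∈ T) := by
  intro k
  induction k with
  | zero =>
    intro c hc h0 _
    refine ⟨s, le_refl s, fun n hn T hT => ?_⟩
    have hsc := h0 rfl
    have hexp : ((0:ℕ)+1 : ℝ) - (s:ℝ) ^ (-((0:ℕ):ℝ)) = 0 := by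
      norm_num
    rw [hexp, Real.rpow_zero, mul_one] at hT
    have hsT : s ≤ T.card := by exact_mod_cast hsc.trans hT
    -- T as a Finset of functions Fin 1 → Fin n
    have hinj : Function.Injective (fun x : Fin 1 → Fin n => x 0) := by
      intro a b hab
      funext i
      have : i = 0 := Fin.fin_one_eq_zero i
      rw [this]; exact hab
    have himg : s ≤ (T.image (fun x => x 0)).card := by
      rwa [Finset.card_image_of_injective _ hinj]
    obtain ⟨S₀, hS₀sub, hS₀card⟩ := Finset.exists_subset_card_eq himg
    refine ⟨fun _ => S₀, fun _ => hS₀card, fun x hx => ?_⟩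
    have := hS₀sub (hx 0)
    obtain ⟨x', hx'T, hx'e⟩ := Finset.mem_image.1 this
    have : x' = x := by
      funext i
      have : i = 0 := Fin.fin_one_eq_zero i
      rw [this]; exact hx'e
    rwa [← this]
  | succ k ih =>
    intro c hc _ hk
    have h2c : (2:ℝ) ≤ c := hk (Nat.succ_ne_zero k)
    set c' : ℝ := (3*c/4)^s with hc'def
    have h32 : (3:ℝ)/2 ≤ 3*c/4 := by linarith
    have hc'pos : 0 < c' := by
      rw [hc'def]; positivity
    have hcond0 : k = 0 → (s:ℝ) ≤ c' := by
      intro _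
      calc (s:ℝ) ≤ (3/2)^s := pow32_ge_self hs
        _ ≤ (3*c/4)^s := pow_le_pow_left₀ (by norm_num) h32 s
    have hcondk : k ≠ 0 → (2:ℝ) ≤ c' := by
      intro _
      calc (2:ℝ) ≤ (3/2)^s := pow32_ge_two hs
        _ ≤ (3*c/4)^s := pow_le_pow_left₀ (by norm_num) h32 s
    obtain ⟨n₁, hn₁s, H⟩ := ih c' hc'pos hcond0 hcondk
    -- threshold for s*N ≤ (c/4) * n^{(k+2)-δ}
    set n₂ : ℕ := ⌈(4*(s:ℝ)/c)^2⌉₊ + 1 with hn₂def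
    refine ⟨max n₁ n₂, le_trans hn₁s (le_max_left _ _), fun n hn T hT => ?_⟩
    have hnn₁ : n₁ ≤ n := le_trans (le_max_left _ _) hn
    have hnn₂ : n₂ ≤ n := le_trans (le_max_right _ _) hn
    have hn1 : 1 ≤ n := by omega
    have hsn : s ≤ n := le_trans hn₁s hnn₁
    have hnR : (1:ℝ) ≤ (n:ℝ) := by exact_mod_cast hn1
    have hnpos : (0:ℝ) < (n:ℝ) := by linarith
    have hspos : (0:ℝ) < (s:ℝ) := by positivity
    have hsR : (2:ℝ) ≤ (s:ℝ) := by exact_mod_cast hs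
    set δ : ℝ := (s:ℝ) ^ (-((k+1:ℕ):ℝ)) with hδdef
    have hδpos : 0 < δ := Real.rpow_pos_of_pos hspos _
    have hδhalf : δ ≤ 1/2 := by
      have h1 : (s:ℝ) ^ (-((k+1:ℕ):ℝ)) ≤ (s:ℝ) ^ (-(1:ℝ)) := by
        apply Real.rpow_le_rpow_of_exponent_le (by linarith)
        push_cast
        linarith [Nat.cast_nonneg (α := ℝ) k]
      have h2 : (s:ℝ) ^ (-(1:ℝ)) = 1 / s := by
        rw [Real.rpow_neg_one]; ring
      have h3 : (1:ℝ)/s ≤ 1/2 := by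
        apply div_le_div_of_nonneg_left (by norm_num) (by norm_num) hsR
      rw [hδdef]
      exact (h1.trans_eq h2).trans h3
    -- the exponent at this level
    set e : ℝ := ((k+1:ℕ)+1 : ℝ) - δ with hedef
    -- n^{1-δ} ≥ 4s/c
    have hsqrt : 4*(s:ℝ)/c ≤ (n:ℝ)^((1:ℝ)-δ) := by
      have hn₂' : (4*(s:ℝ)/c)^2 ≤ (n:ℝ) := by
        have : (⌈(4*(s:ℝ)/c)^2⌉₊ : ℝ) ≤ (n:ℝ) := by
          have : n₂ ≤ n := hnn₂
          rw [hn₂def] at this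
          exact_mod_cast le_trans (by omega : ⌈(4*(s:ℝ)/c)^2⌉₊ ≤ ⌈(4*(s:ℝ)/c)^2⌉₊ + 1) this
        exact le_trans (Nat.le_ceil _) this
      have h4sc : (0:ℝ) ≤ 4*s/c := by positivity
      calc 4*(s:ℝ)/c = ((4*(s:ℝ)/c)^2)^((1:ℝ)/2) := by
            rw [← Real.rpow_natCast (4*(s:ℝ)/c) 2, ← Real.rpow_mul h4sc]
            norm_num
        _ ≤ (n:ℝ)^((1:ℝ)/2) := by
            apply Real.rpow_le_rpow (by positivity) hn₂' (by norm_num)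
        _ ≤ (n:ℝ)^((1:ℝ)-δ) := by
            apply Real.rpow_le_rpow_of_exponent_le hnR
            linarith
    -- s * N ≤ (c/4) * n^e
    have hNe : (s:ℝ) * (n:ℝ)^(k+1) ≤ (c/4) * (n:ℝ)^e := by
      have hsplit : (n:ℝ)^e = (n:ℝ)^((1:ℝ)-δ) * (n:ℝ)^(k+1) := by
        rw [← Real.rpow_natCast (n:ℝ) (k+1), ← Real.rpow_add hnpos, hedef]
        congr 1
        push_cast
        ring
      rw [hsplit]
      have h1 : (s:ℝ) * (n:ℝ)^(k+1) ≤ (c/4) * ((4*s/c) * (n:ℝ)^(k+1)) := by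
        have : (c/4) * ((4*(s:ℝ)/c) * (n:ℝ)^(k+1)) = s * (n:ℝ)^(k+1) := by
          field_simp
        rw [this]
      calc (s:ℝ) * (n:ℝ)^(k+1) ≤ (c/4) * ((4*s/c) * (n:ℝ)^(k+1)) := h1
        _ ≤ (c/4) * ((n:ℝ)^((1:ℝ)-δ) * (n:ℝ)^(k+1)) := by
            apply mul_le_mul_of_nonneg_left _ (by linarith)
            apply mul_le_mul_of_nonneg_right hsqrt (by positivity)
    have hThyp : c * (n:ℝ)^e ≤ (T.card : ℝ) := hT
    have hepos : (0:ℝ) < (n:ℝ)^e := Real.rpow_pos_of_pos hnpos _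
    have hTbig : (s:ℝ) * (n:ℝ)^(k+1) ≤ (T.card : ℝ) := by
      calc (s:ℝ) * (n:ℝ)^(k+1) ≤ (c/4) * (n:ℝ)^e := hNe
        _ ≤ c * (n:ℝ)^e := by nlinarith
        _ ≤ (T.card : ℝ) := hThyp
    obtain ⟨Q, hQcard, hQ⟩ := core (by omega : 1 ≤ s) hsn T hTbig
    set GQ : Finset (Fin (k+1) → Fin n) :=
      univ.filter (fun y : Fin (k+1) → Fin n => ∀ v ∈ Q, Fin.snoc y v ∈ T) with hGQdef
    -- lower bound on the power
    have hTsub : (3*c/4) * (n:ℝ)^e ≤ (T.card:ℝ) - s * (n:ℝ)^(k+1) := by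
      linarith
    have hpow : ((3*c/4) * (n:ℝ)^e)^s ≤ ((n:ℝ)^(k+1))^(s-1) * (n:ℝ)^s * (GQ.card : ℝ) := by
      calc ((3*c/4) * (n:ℝ)^e)^s ≤ ((T.card:ℝ) - s * (n:ℝ)^(k+1))^s := by
            apply pow_le_pow_left₀ (by positivity) hTsub
        _ ≤ _ := hQ
    -- exponent bookkeeping
    have hδs : δ * (s:ℝ) = (s:ℝ)^(-(k:ℝ)) := by
      rw [hδdef]
      nth_rewrite 2 [show (s:ℝ) = (s:ℝ)^(1:ℝ) by rw [Real.rpow_one]]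
      rw [← Real.rpow_add hspos]
      congr 1
      push_cast
      ring
    have hkey : c' * (n:ℝ)^((k:ℝ)+1 - (s:ℝ)^(-(k:ℝ))) * (((n:ℝ)^(k+1))^(s-1) * (n:ℝ)^s)
        = ((3*c/4) * (n:ℝ)^e)^s := by
      rw [mul_pow, hc'def]
      rw [← Real.rpow_natCast ((n:ℝ)^e) s, ← Real.rpow_natCast (n:ℝ) (k+1),
        ← Real.rpow_natCast ((n:ℝ)^(((k+1:ℕ)):ℝ)) (s-1), ← Real.rpow_natCast (n:ℝ) s,
        ← Real.rpow_mul (le_of_lt hnpos), ← Real.rpow_mul (le_of_lt hnpos),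
        ← Real.rpow_add hnpos, mul_assoc ((3*c/4)^s), ← Real.rpow_add hnpos]
      congr 1
      congr 1
      rw [hedef]
      have hs1 : ((s-1:ℕ):ℝ) = (s:ℝ) - 1 := by
        have : 1 ≤ s := by omega
        push_cast [this]
        ring
      rw [hs1]
      push_cast
      linear_combination hδs
    have hGQbig : c' * (n:ℝ)^((k:ℝ)+1 - (s:ℝ)^(-(k:ℝ))) ≤ (GQ.card : ℝ) := by
      have hBpos : (0:ℝ) < ((n:ℝ)^(k+1))^(s-1) * (n:ℝ)^s := by positivity
      rw [← mul_le_mul_iff_of_pos_right hBpos, hkey]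
      calc ((3*c/4) * (n:ℝ)^e)^s ≤ ((n:ℝ)^(k+1))^(s-1) * (n:ℝ)^s * (GQ.card : ℝ) := hpow
        _ = (GQ.card:ℝ) * (((n:ℝ)^(k+1))^(s-1) * (n:ℝ)^s) := by ring
    -- apply induction hypothesis
    have hGQbig' : c' * (n:ℝ)^(((k:ℕ)+1:ℝ) - (s:ℝ)^(-((k:ℕ):ℝ))) ≤ (GQ.card : ℝ) := by
      convert hGQbig using 4 <;> push_cast <;> ring
    obtain ⟨S', hS'card, hS'box⟩ := H n hnn₁ GQ hGQbig'
    refine ⟨Fin.snoc S' Q, ?_, ?_⟩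
    · intro i
      refine Fin.lastCases ?_ ?_ i
      · rw [Fin.snoc_last]; exact hQcard
      · intro j
        rw [Fin.snoc_castSucc]
        exact hS'card j
    · intro x hx
      have hy : Fin.init x ∈ GQ := by
        apply hS'box
        intro i
        have := hx (Fin.castSucc i)
        rwa [Fin.snoc_castSucc] at this
      have hv : x (Fin.last (k+1)) ∈ Q := by
        have := hx (Fin.last (k+1))
        rwa [Fin.snoc_last] at this
      rw [hGQdef, Finset.mem_filter] at hy
      have := hy.2 _ hv
      rwa [Fin.snoc_init_self] at this

theorem stmt17 (r s : ℕ) (hr : 2 ≤ r) (hs : 2 ≤ s) :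
    ∃ n₀ : ℕ, ∀ n : ℕ, n₀ ≤ n →
      -- E is an r-uniform hypergraph on n vertices
      ∀ E : Set (Finset (Fin n)), (∀ e ∈ E, e.card = r) →
        -- with at least n^(r - s^(1-r)) edges
        (n : ℝ) ^ ((r : ℝ) - (s : ℝ) ^ ((1 : ℝ) - (r : ℝ))) ≤ (E.ncard : ℝ) →
        -- it contains a copy of K_r^r(s)
        ∃ S : Fin r → Finset (Fin n),
          (∀ i, (S i).card = s) ∧
          (∀ i j, i ≠ j → Disjoint (S i) (S j)) ∧
          ∀ x : Fin r → Fin n, (∀ i, x i ∈ S i) → Finset.image x Finset.univ ∈ E := by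
  classical
  obtain ⟨k, rfl⟩ : ∃ k, r = k + 2 := ⟨r - 2, by omega⟩
  have hfac2 : (2:ℝ) ≤ ((k+2).factorial : ℕ) := by
    have h1 : k + 2 ≤ (k+2).factorial := Nat.self_le_factorial _
    have : 2 ≤ (k+2).factorial := by omega
    exact_mod_cast this
  have hfacpos : (0:ℝ) < ((k+2).factorial : ℕ) := by linarith
  obtain ⟨n₀, hn₀s, H⟩ := boxL s hs (k+1) ((k+2).factorial : ℝ) hfacpos
    (fun h => absurd h (Nat.succ_ne_zero k)) (fun _ => hfac2)
  refine ⟨n₀, fun n hn E hE hcard => ?_⟩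
  have hn1 : 1 ≤ n := by omega
  -- the set of injective ordered tuples whose image is an edge
  set T : Finset (Fin (k+1+1) → Fin n) := univ.filter
    (fun x => Function.Injective x ∧ Finset.image x Finset.univ ∈ E) with hTdef
  -- lower bound on |T|
  have hEfin : E.Finite := Set.toFinite E
  set F : Finset (Finset (Fin n)) := hEfin.toFinset with hFdef
  have hFE : ∀ e ∈ F, e ∈ E := fun e he => (Set.Finite.mem_toFinset hEfin).1 he
  have hcount : (k+2).factorial * F.card ≤ T.card := by
    set g : Finset (Fin n) → (Fin (k+2)) → Fin n := fun e i =>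
      if h : e.card = k+2 then (e.orderIsoOfFin h i : Fin n) else ⟨0, by omega⟩ with hgdef
    have himg : ∀ e ∈ F, ∀ σ : Equiv.Perm (Fin (k+2)),
        Finset.image (fun i => g e (σ i)) univ = e := by
      intro e he σ
      have hec : e.card = k+2 := hE e (hFE e he)
      have hginj : Function.Injective (fun i => g e (σ i)) := by
        intro a b hab
        simp only [hgdef, dif_pos hec] at hab
        have := (e.orderIsoOfFin hec).injective (Subtype.coe_injective hab)
        exact σ.injective this
      apply Finset.eq_of_subset_of_card_le
      · intro v hv
        obtain ⟨i, _, rfl⟩ := Finset.mem_image.1 hv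
        simp only [hgdef, dif_pos hec]
        exact Finset.coe_mem _
      · rw [Finset.card_image_of_injective _ hginj, Finset.card_univ, Fintype.card_fin, hec]
    have hmapsto : ∀ p ∈ (univ : Finset (Equiv.Perm (Fin (k+2)))) ×ˢ F,
        (fun i => g p.2 (p.1 i)) ∈ T := by
      rintro ⟨σ, e⟩ hp
      have he : e ∈ F := (Finset.mem_product.1 hp).2
      have hec : e.card = k+2 := hE e (hFE e he)
      rw [hTdef, Finset.mem_filter]
      refine ⟨mem_univ _, ?_, ?_⟩
      · intro a b hab
        simp only [hgdef, dif_pos hec] at hab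
        exact σ.injective ((e.orderIsoOfFin hec).injective (Subtype.coe_injective hab))
      · rw [himg e he σ]
        exact hFE e he
    have hinjOn : Set.InjOn (fun p : Equiv.Perm (Fin (k+2)) × Finset (Fin n) =>
        (fun i => g p.2 (p.1 i)))
        (((univ : Finset (Equiv.Perm (Fin (k+2)))) ×ˢ F : Finset _) : Set _) := by
      rintro ⟨σ, e⟩ hp ⟨τ, f⟩ hq hfe
      simp only [Finset.coe_product, Set.mem_prod, Finset.mem_coe] at hp hq
      have he : e ∈ F := hp.2
      have hf : f ∈ F := hq.2
      have hec : e.card = k+2 := hE e (hFE e he)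
      have hfc : f.card = k+2 := hE f (hFE f hf)
      have hef : e = f := by
        rw [← himg e he σ, ← himg f hf τ]
        exact congrArg (fun h : Fin (k+2) → Fin n => Finset.image h univ) hfe
      subst hef
      have hστ : σ = τ := by
        apply Equiv.ext
        intro i
        have := congrFun hfe i
        simp only [hgdef, dif_pos hec] at this
        exact (e.orderIsoOfFin hec).injective (Subtype.coe_injective this)
      rw [hστ]
    have := Finset.card_le_card_of_injOn _ hmapsto hinjOn
    rwa [Finset.card_product, Finset.card_univ, Fintype.card_perm, Fintype.card_fin] at this
  have hncard : E.ncard = F.card := Set.ncard_eq_toFinset_card E hEfin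
  -- feed to boxL
  have hexp : (n:ℝ) ^ (((k+2:ℕ) : ℝ) - (s : ℝ) ^ ((1 : ℝ) - ((k+2:ℕ) : ℝ)))
      = (n:ℝ) ^ ((((k+1:ℕ)):ℝ)+1 - (s:ℝ) ^ (-(((k+1:ℕ)):ℝ))) := by
    congr 1
    push_cast
    ring_nf
  have hTbig : ((k+2).factorial : ℝ) * (n:ℝ) ^ ((((k+1:ℕ)):ℝ)+1 - (s:ℝ) ^ (-(((k+1:ℕ)):ℝ)))
      ≤ (T.card : ℝ) := by
    calc ((k+2).factorial : ℝ) * (n:ℝ) ^ ((((k+1:ℕ)):ℝ)+1 - (s:ℝ) ^ (-(((k+1:ℕ)):ℝ)))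
        ≤ ((k+2).factorial : ℝ) * (E.ncard : ℝ) := by
          apply mul_le_mul_of_nonneg_left _ (le_of_lt hfacpos)
          rw [← hexp]
          exact hcard
      _ = ((k+2).factorial * F.card : ℕ) := by rw [hncard]; push_cast; ring
      _ ≤ (T.card : ℝ) := by exact_mod_cast hcount
  obtain ⟨S, hScard, hSbox⟩ := H n hn T hTbig
  have hSne : ∀ i, (S i).Nonempty := by
    intro i
    rw [← Finset.card_pos, hScard i]
    omega
  have hbox' : ∀ x : Fin (k+1+1) → Fin n, (∀ i, x i ∈ S i) →
      Function.Injective x ∧ Finset.image x Finset.univ ∈ E := by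
    intro x hx
    have := hSbox x hx
    rw [hTdef, Finset.mem_filter] at this
    exact this.2
  refine ⟨S, hScard, ?_, fun x hx => (hbox' x hx).2⟩
  intro i j hij
  rw [Finset.disjoint_left]
  intro a hai haj
  by_contra
  set x : Fin (k+1+1) → Fin n :=
    Function.update (Function.update (fun t => (hSne t).choose) i a) j a with hxdef
  have hxj : x j = a := by rw [hxdef, Function.update_self]
  have hxi : x i = a := by
    rw [hxdef, Function.update_of_ne hij, Function.update_self]
  have hxmem : ∀ t, x t ∈ S t := by
    intro t
    by_cases h2 : t = j
    · rw [h2, hxj]; exact haj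
    · by_cases h1 : t = i
      · rw [h1, hxi]; exact hai
      · rw [hxdef, Function.update_of_ne h2, Function.update_of_ne h1]
        exact (hSne t).choose_spec
  have hinj := (hbox' x hxmem).1
  exact hij (hinj (by rw [hxi, hxj]))
end

section
/- Let n, k, q be natural numbers and let α be a real number with 2q/k ≤ α ≤ 1. If A_1, …, A_k are subsets of [n] = {1, …, n} such that (1/k)·Σ_{i=1}^{k} |A_i| ≥ αn, then there exist q distinct indices i_1, …, i_q ∈ [k] such that |A_{i_1} ∩ ⋯ ∩ A_{i_q}| ≥ (α/2)^q · n. -/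
open Finset

private def injEquiv {β : Type*} (q : ℕ) (s : Finset β) :
    {σ : Fin q → β // Function.Injective σ ∧ ∀ j, σ j ∈ s} ≃ (Fin q ↪ s) where
  toFun σ := ⟨fun j => ⟨σ.1 j, σ.2.2 j⟩, fun a b h => σ.2.1 (congrArg Subtype.val h)⟩
  invFun e := ⟨fun j => (e j).1, ⟨fun a b h => e.injective (Subtype.ext h), fun j => (e j).2⟩⟩
  left_inv σ := rfl
  right_inv e := rfl

private lemma card_inj_into {β : Type*} [Fintype β] [DecidableEq β] (q : ℕ) (s : Finset β) :
    (Finset.univ.filter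
      (fun σ : Fin q → β => Function.Injective σ ∧ ∀ j, σ j ∈ s)).card
      = s.card.descFactorial q := by
  rw [← Fintype.card_subtype]
  rw [Fintype.card_congr (injEquiv q s)]
  rw [Fintype.card_embedding_eq, Fintype.card_coe, Fintype.card_fin]

theorem stmt18 (n k q : ℕ) (hk : 0 < k) (α : ℝ)
    (hα₁ : 2 * (q : ℝ) / (k : ℝ) ≤ α) (hα₂ : α ≤ 1)
    (A : Fin k → Finset (Fin n))
    (havg : α * (n : ℝ) ≤ (1 / (k : ℝ)) * ∑ i, ((A i).card : ℝ)) :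
    ∃ idx : Fin q → Fin k, Function.Injective idx ∧
      (α / 2) ^ q * (n : ℝ) ≤ (((⋂ j, ((A (idx j) : Set (Fin n))))).ncard : ℝ) := by
  have hk' : (0 : ℝ) < k := by exact_mod_cast hk
  have h2q : 2 * (q : ℝ) ≤ k := by
    have := hα₁.trans hα₂
    rwa [div_le_one hk'] at this
  have hqk : q ≤ k := by exact_mod_cast (by linarith : (q : ℝ) ≤ k)
  have hα0 : 0 ≤ α := le_trans (by positivity) hα₁
  -- degrees
  set d : Fin n → ℕ := fun x => (Finset.univ.filter (fun i => x ∈ A i)).card with hd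
  -- total degree
  have hsumd_nat : ∑ x, d x = ∑ i, (A i).card := by
    simp only [hd, Finset.card_filter]
    rw [Finset.sum_comm]
    refine Finset.sum_congr rfl fun i _ => ?_
    rw [← Finset.card_filter, Finset.filter_univ_mem]
  have hsumd : ∑ x, ((d x : ℝ)) = ∑ i, ((A i).card : ℝ) := by
    rw [← Nat.cast_sum, ← Nat.cast_sum, hsumd_nat]
  -- the set of injective tuples
  set T : Finset (Fin q → Fin k) := Finset.univ.filter Function.Injective with hT
  have hTne : T.Nonempty := ⟨Fin.castLE hqk, by simp [hT, Fin.castLE_injective hqk]⟩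
  have hTcard : (T.card : ℝ) ≤ (k : ℝ) ^ q := by
    have : T.card ≤ k ^ q := by
      calc T.card ≤ (Finset.univ : Finset (Fin q → Fin k)).card := Finset.card_filter_le _ _
        _ = k ^ q := by simp [Finset.card_univ]
    exact_mod_cast this
  -- intersection cardinality
  set c : (Fin q → Fin k) → ℕ := fun σ => (Finset.univ.inf fun j => A (σ j)).card with hc
  -- double counting
  have hdouble : ∑ σ ∈ T, c σ = ∑ x, (d x).descFactorial q := by
    have hcard : ∀ σ : Fin q → Fin k, c σ = (Finset.univ.filter (fun x => ∀ j, x ∈ A (σ j))).card := by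
      intro σ
      have : (Finset.univ.inf fun j => A (σ j))
          = Finset.univ.filter (fun x => ∀ j, x ∈ A (σ j)) := by
        ext x
        simp [Finset.mem_inf]
      simp only [hc, this]
    calc ∑ σ ∈ T, c σ = ∑ σ ∈ T, ∑ x, if (∀ j, x ∈ A (σ j)) then 1 else 0 := by
          refine Finset.sum_congr rfl fun σ _ => ?_
          rw [hcard, Finset.card_filter]
      _ = ∑ x, ∑ σ ∈ T, if (∀ j, x ∈ A (σ j)) then 1 else 0 := Finset.sum_comm
      _ = ∑ x, (T.filter (fun σ => ∀ j, x ∈ A (σ j))).card := by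
          refine Finset.sum_congr rfl fun x _ => ?_
          rw [Finset.card_filter]
      _ = ∑ x, (d x).descFactorial q := by
          refine Finset.sum_congr rfl fun x _ => ?_
          rw [hT, Finset.filter_filter]
          have := card_inj_into q (Finset.univ.filter (fun i => x ∈ A i))
          rw [← this]
          congr 1
          ext σ
          simp
  -- lower bound on the sum of descending factorials
  have hdesc : (n : ℝ) * (α * k / 2) ^ q ≤ ∑ x, ((d x).descFactorial q : ℝ) := by
    rcases Nat.eq_zero_or_pos q with hq0 | hqpos
    · subst hq0; simp
    rcases Nat.eq_zero_or_pos n with hn0 | hnpos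
    · subst hn0; simp
    obtain ⟨m, rfl⟩ : ∃ m, q = m + 1 := ⟨q - 1, (Nat.succ_pred_eq_of_pos hqpos).symm⟩
    set g : Fin n → ℝ := fun x => ((d x + 1 - (m + 1) : ℕ) : ℝ) with hg
    have hg0 : ∀ x ∈ Finset.univ, (0 : ℝ) ≤ g x := fun x _ => Nat.cast_nonneg _
    have hgsum : (n : ℝ) * (α * k / 2) ≤ ∑ x, g x := by
      have h1 : ∀ x, (d x : ℝ) - (m : ℝ) ≤ g x := by
        intro x
        rcases le_or_gt (m + 1) (d x + 1) with h | h
        · have heq : ((d x + 1 - (m + 1) : ℕ) : ℝ) = (d x : ℝ) + 1 - ((m : ℝ) + 1) := by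
            rw [Nat.cast_sub h]; push_cast; ring
          simp only [hg]; rw [heq]; linarith
        · have hdm : (d x : ℝ) ≤ m := by exact_mod_cast (by omega : d x ≤ m)
          have h0 := Nat.cast_nonneg (α := ℝ) (d x + 1 - (m + 1))
          simp only [hg]; linarith
      calc (n : ℝ) * (α * k / 2)
          ≤ α * k * n - (m : ℝ) * n := by
            have hαk : 2 * ((m : ℝ) + 1) ≤ α * k := by
              rw [div_le_iff₀ hk'] at hα₁
              push_cast at hα₁
              linarith
            have hn0 : (0 : ℝ) ≤ (n : ℝ) := Nat.cast_nonneg n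
            nlinarith
        _ ≤ ∑ x, ((d x : ℝ)) - (m : ℝ) * n := by
            have : α * k * n ≤ ∑ x, ((d x : ℝ)) := by
              rw [hsumd]
              have hkne : (k : ℝ) ≠ 0 := ne_of_gt hk'
              rw [one_div, inv_mul_eq_div, le_div_iff₀ hk'] at havg
              linarith
            linarith
        _ = ∑ x, ((d x : ℝ) - (m : ℝ)) := by
            rw [Finset.sum_sub_distrib]
            simp [Finset.card_univ, mul_comm]
        _ ≤ ∑ x, g x := Finset.sum_le_sum fun x _ => h1 x
    have hpm := pow_sum_le_card_mul_sum_pow hg0 m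
    have hgq : ∀ x, g x ^ (m + 1) ≤ ((d x).descFactorial (m + 1) : ℝ) := by
      intro x
      rw [hg, ← Nat.cast_pow]
      exact_mod_cast Nat.pow_sub_le_descFactorial (d x) (m + 1)
    have hstep : (∑ x, g x) ^ (m + 1) ≤ (n : ℝ) ^ m * ∑ x, ((d x).descFactorial (m + 1) : ℝ) := by
      calc (∑ x, g x) ^ (m + 1)
          ≤ ((Finset.univ : Finset (Fin n)).card : ℝ) ^ m * ∑ x, g x ^ (m + 1) := hpm
        _ ≤ (n : ℝ) ^ m * ∑ x, ((d x).descFactorial (m + 1) : ℝ) := by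
            rw [Finset.card_univ, Fintype.card_fin]
            exact mul_le_mul_of_nonneg_left
              (Finset.sum_le_sum fun x _ => hgq x) (by positivity)
    have hlhs : ((n : ℝ) * (α * k / 2)) ^ (m + 1) ≤ (∑ x, g x) ^ (m + 1) := by
      apply pow_le_pow_left₀ (by positivity) hgsum
    have hn' : (0 : ℝ) < n := by exact_mod_cast hnpos
    have hfinal : (n : ℝ) ^ (m + 1) * (α * k / 2) ^ (m + 1)
        ≤ (n : ℝ) ^ m * ∑ x, ((d x).descFactorial (m + 1) : ℝ) := by
      calc (n : ℝ) ^ (m + 1) * (α * k / 2) ^ (m + 1) = ((n : ℝ) * (α * k / 2)) ^ (m + 1) := by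
            rw [mul_pow]
        _ ≤ _ := hlhs.trans hstep
    have hfinal' : (n:ℝ)^m * ((n:ℝ) * (α * k / 2) ^ (m + 1))
        ≤ (n:ℝ)^m * ∑ x, ((d x).descFactorial (m + 1) : ℝ) := by
      calc (n:ℝ)^m * ((n:ℝ) * (α * k / 2) ^ (m + 1))
          = (n : ℝ) ^ (m + 1) * (α * k / 2) ^ (m + 1) := by ring
        _ ≤ _ := hfinal
    exact le_of_mul_le_mul_left hfinal' (by positivity)
  -- pigeonhole over T
  have hmain : ∑ σ ∈ T, ((α / 2) ^ q * (n : ℝ)) ≤ ∑ σ ∈ T, ((c σ : ℝ)) := by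
    rw [Finset.sum_const, nsmul_eq_mul]
    have h1 : (T.card : ℝ) * ((α / 2) ^ q * n) ≤ (k : ℝ) ^ q * ((α / 2) ^ q * n) := by
      apply mul_le_mul_of_nonneg_right hTcard (by positivity)
    have h2 : (k : ℝ) ^ q * ((α / 2) ^ q * n) = (n : ℝ) * (α * k / 2) ^ q := by
      rw [show α * k / 2 = (α / 2) * k by ring, mul_pow]; ring
    have h3 : ∑ σ ∈ T, ((c σ : ℝ)) = ∑ x, ((d x).descFactorial q : ℝ) := by
      rw [← Nat.cast_sum, ← Nat.cast_sum, hdouble]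
    rw [h3]
    calc (T.card : ℝ) * ((α / 2) ^ q * n) ≤ (n : ℝ) * (α * k / 2) ^ q := by rw [← h2]; exact h1
      _ ≤ _ := hdesc
  obtain ⟨σ, hσT, hσ⟩ := Finset.exists_le_of_sum_le hTne hmain
  refine ⟨σ, (Finset.mem_filter.mp hσT).2, ?_⟩
  have hset : (⋂ j, ((A (σ j) : Set (Fin n)))) = ((Finset.univ.inf fun j => A (σ j) : Finset (Fin n)) : Set (Fin n)) := by
    ext x
    simp [Finset.mem_inf]
  rw [hset, Set.ncard_coe_finset]
  exact hσ
end

section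
/- For all positive integers n and s ≥ 2, the Zarankiewicz number satisfies z(n; s) ≤ (s−1)^{1/s}·n^{2−1/s} + s·n; that is, every bipartite graph with parts of size n and more than (s−1)^{1/s}·n^{2−1/s} + s·n edges contains a K_{s,s}. -/
open Finset

lemma kst_main (n s : ℕ) (hn : 0 < n) (hs : 2 ≤ s) (R : Fin n → Fin n → Prop)
    (hR : KssFree s R) :
    (({p : Fin n × Fin n | R p.1 p.2}).ncard : ℝ) ≤
      ((s : ℝ) - 1) ^ ((1 : ℝ) / (s : ℝ)) * (n : ℝ) ^ ((2 : ℝ) - 1 / (s : ℝ)) + s * n := by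
  classical
  set N : Fin n → Finset (Fin n) := fun a => univ.filter (fun b => R a b) with hN
  set d : Fin n → ℕ := fun a => (N a).card with hd
  -- edge count
  have hcard : ({p : Fin n × Fin n | R p.1 p.2}).ncard = ∑ a, d a := by
    rw [Set.ncard_eq_toFinset_card', Set.toFinset_setOf, card_filter,
      Fintype.sum_prod_type]
    refine Finset.sum_congr rfl fun a _ => ?_
    exact (card_filter _ _).symm
  -- each T of size s has at most s-1 common neighbors
  have hbound : ∀ T ∈ univ.powersetCard s, (univ.filter fun a => T ⊆ N a).card ≤ s - 1 := by
    intro T hT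
    by_contra hc
    have hsle : s ≤ (univ.filter fun a => T ⊆ N a).card := by omega
    obtain ⟨S, hSsub, hScard⟩ := exists_subset_card_eq hsle
    refine hR ⟨S, T, hScard, (mem_powersetCard.mp hT).2, ?_⟩
    intro a ha b hb
    have := (mem_filter.mp (hSsub ha)).2 hb
    simpa [hN] using this
  -- double counting
  have hcount : ∑ a, (d a).choose s ≤ (s - 1) * n.choose s := by
    have h1 : ∀ a : Fin n, (d a).choose s
        = ((univ.powersetCard s).filter (fun T => T ⊆ N a)).card := by
      intro a
      rw [hd, ← card_powersetCard]
      congr 1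
      ext T
      simp only [mem_filter, mem_powersetCard, subset_univ, true_and]
      tauto
    calc ∑ a, (d a).choose s
        = ∑ a, ∑ T ∈ univ.powersetCard s, if T ⊆ N a then 1 else 0 := by
          simp only [h1, card_filter]
      _ = ∑ T ∈ univ.powersetCard s, ∑ a : Fin n, if T ⊆ N a then 1 else 0 :=
          Finset.sum_comm
      _ = ∑ T ∈ univ.powersetCard s, (univ.filter fun a => T ⊆ N a).card := by
          simp only [card_filter]
      _ ≤ ∑ _T ∈ univ.powersetCard s, (s - 1) := sum_le_sum hbound
      _ = n.choose s * (s - 1) := by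
          simp [card_powersetCard]
      _ = (s - 1) * n.choose s := mul_comm _ _
  -- pointwise power bound
  have hpow : ∀ a, (d a + 1 - s) ^ s ≤ s.factorial * (d a).choose s := by
    intro a
    rw [← Nat.descFactorial_eq_factorial_mul_choose, Nat.descFactorial_eq_prod_range]
    calc (d a + 1 - s) ^ s = ∏ _i ∈ range s, (d a + 1 - s) := by
          rw [prod_const, card_range]
      _ ≤ ∏ i ∈ range s, (d a - i) := by
          refine Finset.prod_le_prod' fun i hi => ?_
          have : i < s := mem_range.mp hi
          omega
  have hsum : ∑ a, (d a + 1 - s) ^ s ≤ (s - 1) * n ^ s := by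
    calc ∑ a, (d a + 1 - s) ^ s ≤ ∑ a, s.factorial * (d a).choose s :=
          sum_le_sum fun a _ => hpow a
      _ = s.factorial * ∑ a, (d a).choose s := by rw [mul_sum]
      _ ≤ s.factorial * ((s - 1) * n.choose s) := Nat.mul_le_mul_left _ hcount
      _ = (s - 1) * (s.factorial * n.choose s) := by ring
      _ = (s - 1) * n.descFactorial s := by rw [Nat.descFactorial_eq_factorial_mul_choose]
      _ ≤ (s - 1) * n ^ s := Nat.mul_le_mul_left _ (Nat.descFactorial_le_pow _ _)
  -- move to the reals
  set c : ℝ := (s : ℝ) - 1 with hcdef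
  have hc0 : 0 ≤ c := by
    have : (2 : ℝ) ≤ (s : ℝ) := by exact_mod_cast hs
    simp [hcdef]; linarith
  have hccast : ((s - 1 : ℕ) : ℝ) = c := by
    rw [Nat.cast_sub (by omega : 1 ≤ s)]; simp [hcdef]
  have hn0 : (0 : ℝ) < (n : ℝ) := by exact_mod_cast hn
  have hs0 : (s : ℝ) ≠ 0 := by positivity
  set G : Fin n → ℝ := fun a => ((d a + 1 - s : ℕ) : ℝ) with hGdef
  have hG0 : ∀ a ∈ (univ : Finset (Fin n)), 0 ≤ G a := fun a _ => Nat.cast_nonneg _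
  have hGs : ∑ a, (G a) ^ s ≤ c * (n : ℝ) ^ s := by
    rw [← hccast]
    simp only [hGdef]
    exact_mod_cast hsum
  -- Jensen / power mean
  have hjensen : (∑ a, G a) ^ s ≤ (n : ℝ) ^ (s - 1) * ∑ a, (G a) ^ s := by
    have key := pow_sum_div_card_le_sum_pow (s := (univ : Finset (Fin n))) hG0 (s - 1)
    have hs1 : s - 1 + 1 = s := by omega
    rw [hs1, card_univ, Fintype.card_fin] at key
    have hpos : (0 : ℝ) < (n : ℝ) ^ (s - 1) := by positivity
    calc (∑ a, G a) ^ s = ((∑ a, G a) ^ s / (n : ℝ) ^ (s - 1)) * (n : ℝ) ^ (s - 1) := by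
          field_simp
      _ ≤ (∑ a, (G a) ^ s) * (n : ℝ) ^ (s - 1) := by
          exact mul_le_mul_of_nonneg_right key hpos.le
      _ = (n : ℝ) ^ (s - 1) * ∑ a, (G a) ^ s := mul_comm _ _
  have hEG : (∑ a, (d a : ℝ)) - c * n ≤ ∑ a, G a := by
    have h1 : ∀ a : Fin n, (d a : ℝ) - c ≤ G a := by
      intro a
      rw [← hccast, hGdef]
      have : (d a : ℝ) ≤ ((d a + 1 - s : ℕ) : ℝ) + ((s - 1 : ℕ) : ℝ) := by
        exact_mod_cast (by omega : d a ≤ (d a + 1 - s) + (s - 1))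
      linarith
    calc (∑ a, (d a : ℝ)) - c * n = ∑ a : Fin n, ((d a : ℝ) - c) := by
          rw [sum_sub_distrib, sum_const, card_univ, Fintype.card_fin, nsmul_eq_mul,
            mul_comm]
      _ ≤ ∑ a, G a := sum_le_sum fun a _ => h1 a
  -- combine
  set E : ℝ := ∑ a, (d a : ℝ) with hEdef
  have hEcast : (({p : Fin n × Fin n | R p.1 p.2}).ncard : ℝ) = E := by
    rw [hcard]; push_cast; rfl
  rw [hEcast]
  set B1 : ℝ := ((s : ℝ) - 1) ^ ((1 : ℝ) / (s : ℝ)) * (n : ℝ) ^ ((2 : ℝ) - 1 / (s : ℝ))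
    with hB1def
  have hB10 : 0 ≤ B1 :=
    mul_nonneg (Real.rpow_nonneg hc0 _) (Real.rpow_nonneg hn0.le _)
  have hcs : c * n ≤ (s : ℝ) * n := by
    have : c ≤ (s : ℝ) := by rw [hcdef]; linarith
    exact mul_le_mul_of_nonneg_right this hn0.le
  by_cases hx : E - c * n ≤ 0
  · have : E ≤ c * n := by linarith
    linarith
  · push_neg at hx
    set x : ℝ := E - c * n with hxdef
    have hx0 : 0 < x := hx
    have h2 : x ^ s ≤ c * (n : ℝ) ^ (2 * s - 1) := by
      have ha : x ^ s ≤ (∑ a, G a) ^ s := pow_le_pow_left₀ hx0.le hEG s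
      have hb : (n : ℝ) ^ (s - 1) * ∑ a, (G a) ^ s ≤ (n : ℝ) ^ (s - 1) * (c * (n : ℝ) ^ s) :=
        mul_le_mul_of_nonneg_left hGs (by positivity)
      have hc : (n : ℝ) ^ (s - 1) * (c * (n : ℝ) ^ s) = c * (n : ℝ) ^ (2 * s - 1) := by
        rw [← mul_assoc, mul_comm ((n:ℝ) ^ (s-1)) c, mul_assoc, ← pow_add]
        congr 2
        omega
      calc x ^ s ≤ (∑ a, G a) ^ s := ha
        _ ≤ (n : ℝ) ^ (s - 1) * ∑ a, (G a) ^ s := hjensen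
        _ ≤ c * (n : ℝ) ^ (2 * s - 1) := by rw [← hc]; exact hb
    have hx_le : x ≤ (c * (n : ℝ) ^ (2 * s - 1)) ^ ((1 : ℝ) / (s : ℝ)) := by
      have hxeq : x = (x ^ s : ℝ) ^ ((1 : ℝ) / (s : ℝ)) := by
        rw [← Real.rpow_natCast x s, ← Real.rpow_mul hx0.le]
        rw [mul_one_div, div_self hs0, Real.rpow_one]
      rw [hxeq]
      exact Real.rpow_le_rpow (by positivity) h2 (by positivity)
    have hrhs : (c * (n : ℝ) ^ (2 * s - 1)) ^ ((1 : ℝ) / (s : ℝ)) = B1 := by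
      have hexp : ((2 * s - 1 : ℕ) : ℝ) * ((1 : ℝ) / (s : ℝ)) = (2 : ℝ) - 1 / (s : ℝ) := by
        rw [Nat.cast_sub (by omega : 1 ≤ 2 * s)]
        push_cast
        field_simp
      rw [Real.mul_rpow hc0 (by positivity), hB1def, hcdef,
        ← Real.rpow_natCast (n : ℝ) (2 * s - 1), ← Real.rpow_mul hn0.le, hexp]
    have : x ≤ B1 := hrhs ▸ hx_le
    have hEx : E = x + c * n := by rw [hxdef]; ring
    rw [hEx]
    linarith

theorem stmt19 (n s : ℕ) (hn : 0 < n) (hs : 2 ≤ s) :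
    -- the Kővári–Sós–Turán bound z(n; s) ≤ (s-1)^{1/s} n^{2-1/s} + s n,
    (zar n s : ℝ) ≤
      ((s : ℝ) - 1) ^ ((1 : ℝ) / (s : ℝ)) * (n : ℝ) ^ ((2 : ℝ) - 1 / (s : ℝ)) + s * n ∧
    -- that is, every bipartite graph with parts of size n and more edges contains K_{s,s}
    ∀ R : Fin n → Fin n → Prop,
      ((s : ℝ) - 1) ^ ((1 : ℝ) / (s : ℝ)) * (n : ℝ) ^ ((2 : ℝ) - 1 / (s : ℝ)) + s * n
          < (({p : Fin n × Fin n | R p.1 p.2}).ncard : ℝ) →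
        ∃ S T : Finset (Fin n), S.card = s ∧ T.card = s ∧ ∀ a ∈ S, ∀ b ∈ T, R a b := by
  constructor
  · set Z := {e | ∃ R : Fin n → Fin n → Prop, KssFree s R ∧
      e = ({p : Fin n × Fin n | R p.1 p.2}).ncard} with hZ
    have hne : Z.Nonempty := by
      refine ⟨({p : Fin n × Fin n | (fun _ _ => False) p.1 p.2}).ncard,
        fun _ _ => False, ?_, rfl⟩
      rintro ⟨S, T, hS, hT, hST⟩
      obtain ⟨a, ha⟩ := Finset.card_pos.mp (by omega : 0 < S.card)
      obtain ⟨b, hb⟩ := Finset.card_pos.mp (by omega : 0 < T.card)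
      exact hST a ha b hb
    have hbdd : BddAbove Z := by
      refine ⟨Fintype.card (Fin n × Fin n), ?_⟩
      rintro e ⟨R, _, rfl⟩
      have h1 : ({p : Fin n × Fin n | R p.1 p.2}).ncard
          ≤ (Set.univ : Set (Fin n × Fin n)).ncard :=
        Set.ncard_le_ncard (Set.subset_univ _) Set.finite_univ
      simpa [Set.ncard_univ] using h1
    obtain ⟨R, hR, he⟩ := Nat.sSup_mem hne hbdd
    rw [zar, ← hZ, he]
    exact kst_main n s hn hs R hR
  · intro R hlt
    by_contra hcon
    exact absurd (kst_main n s hn hs R hcon) (not_le.mpr hlt)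
end
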